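/- arXiv:2012.06011 — 9 statements merged into one kernel-verified Lean document; each statement's English description precedes it below -/
import Mathlib

section
/- Let S_1, ..., S_m be subsets of ℝ^n with m > n, and for each i let K_i denote the convex hull of S_i. For every point x in the Minkowski sum K_1 + K_2 + ... + K_m, there exists a subset T ⊆ {1, ..., m} with |T| = n, a point z in the Minkowski sum of the K_t for t ∈ T, and points y_s ∈ S_s for each s ∉ T, such that x = z + Σ_{s ∉ T} y_s. -/
open Pointwise Finset

section Aux

variable {M : Type*} [AddCommGroup M] [Module ℝ M] [FiniteDimensional ℝ M]

/-- Conic Carathéodory reduction. -/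
lemma conic_reduction (k : ℕ) (t : Finset M) (hk : t.card ≤ k) (w : M → ℝ)
    (hw : ∀ q ∈ t, 0 ≤ w q) :
    ∃ t' ⊆ t, t'.card ≤ Module.finrank ℝ M ∧ ∃ w' : M → ℝ,
      (∀ q ∈ t', 0 ≤ w' q) ∧ ∑ q ∈ t', w' q • q = ∑ q ∈ t, w q • q := by
  induction k generalizing t w with
  | zero => exact ⟨t, le_rfl, by omega, w, hw, rfl⟩
  | succ k ih =>
    rcases le_or_gt t.card (Module.finrank ℝ M) with h | h
    · exact ⟨t, le_rfl, h, w, hw, rfl⟩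
    obtain ⟨f, hf0, q₁, hq₁t, hq₁⟩ := Module.exists_nontrivial_relation_of_finrank_lt_card h
    have key : ∀ f : M → ℝ, ∑ q ∈ t, f q • q = 0 → (∃ q ∈ t, 0 < f q) →
        ∃ t' ⊆ t, t'.card ≤ Module.finrank ℝ M ∧ ∃ w' : M → ℝ,
          (∀ q ∈ t', 0 ≤ w' q) ∧ ∑ q ∈ t', w' q • q = ∑ q ∈ t, w q • q := by
      rintro f hfsum ⟨q₂, hq₂t, hq₂⟩
      classical
      set P : Finset M := t.filter (fun q => 0 < f q) with hP
      have hPne : P.Nonempty := ⟨q₂, mem_filter.2 ⟨hq₂t, hq₂⟩⟩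
      obtain ⟨q₀, hq₀P, hq₀min⟩ := P.exists_min_image (fun q => w q / f q) hPne
      have hq₀t : q₀ ∈ t := (mem_filter.1 hq₀P).1
      have hfq₀ : 0 < f q₀ := (mem_filter.1 hq₀P).2
      set r : ℝ := w q₀ / f q₀ with hr
      have hr0 : 0 ≤ r := div_nonneg (hw _ hq₀t) hfq₀.le
      set w' : M → ℝ := fun q => w q - r * f q with hw'
      have hw'nonneg : ∀ q ∈ t, 0 ≤ w' q := by
        intro q hqt
        rcases le_or_gt (f q) 0 with hfq | hfq
        · have h1 : r * f q ≤ 0 := mul_nonpos_of_nonneg_of_nonpos hr0 hfq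
          have h2 := hw q hqt
          simp only [hw']; linarith
        · have hqP : q ∈ P := mem_filter.2 ⟨hqt, hfq⟩
          have h1 : r * f q ≤ w q := (le_div_iff₀ hfq).1 (hq₀min q hqP)
          simp only [hw']; linarith
      have hw'q₀ : w' q₀ = 0 := by
        simp only [hw', hr, div_mul_cancel₀ _ hfq₀.ne', sub_self]
      have h1 : ∑ q ∈ t, w' q • q = ∑ q ∈ t, w q • q := by
        have hcongr : ∀ q ∈ t, w' q • q = w q • q - r • f q • q := fun q _ => by
          simp [hw', sub_smul, smul_smul]
        rw [Finset.sum_congr rfl hcongr, Finset.sum_sub_distrib, ← Finset.smul_sum, hfsum,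
          smul_zero, sub_zero]
      have hsum : ∑ q ∈ t.erase q₀, w' q • q = ∑ q ∈ t, w q • q := by
        rw [← h1]
        exact Finset.sum_erase _ (by rw [hw'q₀, zero_smul])
      obtain ⟨t', ht'sub, ht'card, w'', hw''0, hw''sum⟩ :=
        ih (t.erase q₀) (by have := Finset.card_erase_of_mem hq₀t; omega) w'
          (fun q hq => hw'nonneg q (mem_of_mem_erase hq))
      exact ⟨t', ht'sub.trans (erase_subset _ _), ht'card, w'', hw''0, by rw [hw''sum, hsum]⟩
    rcases lt_trichotomy (f q₁) 0 with hneg | hzero | hpos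
    · refine key (fun q => -f q) ?_ ⟨q₁, hq₁t, by simpa using neg_pos.2 hneg⟩
      simp [neg_smul, Finset.sum_neg_distrib, hf0]
    · exact absurd hzero hq₁
    · exact key f hf0 ⟨q₁, hq₁t, hpos⟩

end Aux

/-- **The Shapley–Folkman lemma.**  Let `S 0, …, S (m-1)` be subsets of `ℝ^n` with `m > n`.
For every point `x` in the Minkowski sum of the convex hulls `convexHull ℝ (S i)`, there is a
subset `T` of the index set with `|T| = n`, a point `z` in the Minkowski sum of the
`convexHull ℝ (S t)` for `t ∈ T`, and points `y s ∈ S s` for `s ∉ T`, with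
`x = z + ∑_{s ∉ T} y s`. -/
theorem shapley_folkman_lemma (n m : ℕ) (hmn : n < m) (S : Fin m → Set (Fin n → ℝ))
    (x : Fin n → ℝ) (hx : x ∈ ∑ i : Fin m, convexHull ℝ (S i)) :
    ∃ T : Finset (Fin m), T.card = n ∧
      ∃ z ∈ ∑ t ∈ T, convexHull ℝ (S t),
        ∃ y : Fin m → Fin n → ℝ,
          (∀ s, s ∉ T → y s ∈ S s) ∧ x = z + ∑ s ∈ Tᶜ, y s := by
  classical
  have hm0 : 0 < m := lt_of_le_of_lt (Nat.zero_le n) hmn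
  -- Step 1: decompose `x` into points of the convex hulls
  obtain ⟨g, hg, hgsum⟩ := (Set.mem_fintype_sum _ _).1 hx
  -- Step 2: finite convex representations of each `g i`
  have hrep : ∀ i : Fin m, ∃ (u : Finset (Fin n → ℝ)) (v : (Fin n → ℝ) → ℝ),
      ↑u ⊆ S i ∧ (∀ y ∈ u, 0 ≤ v y) ∧ ∑ y ∈ u, v y = 1 ∧ ∑ y ∈ u, v y • y = g i := by
    intro i
    have h := hg i
    rw [convexHull_eq_union_convexHull_finite_subsets] at h
    simp only [Set.mem_iUnion] at h
    obtain ⟨u, hu, hmem⟩ := h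
    obtain ⟨v, hv0, hv1, hvc⟩ := (Finset.mem_convexHull).1 hmem
    refine ⟨u, v, hu, hv0, hv1, ?_⟩
    rw [← hvc, Finset.centerMass_eq_of_sum_1 _ _ hv1]
    rfl
  choose u v hu hv0 hv1 hvs using hrep
  -- Step 3: set up the big configuration in `ℝ^n × ℝ^m`
  set e : Fin m → (Fin m → ℝ) := fun i => Pi.single i 1 with he
  have he_inj : Function.Injective e := by
    intro i j hij
    by_contra hne
    have h1 := congrFun hij j
    rw [he] at h1
    simp only at h1
    rw [Pi.single_eq_same, Pi.single_eq_of_ne (Ne.symm hne)] at h1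
    exact zero_ne_one h1
  set t : Finset ((Fin n → ℝ) × (Fin m → ℝ)) :=
    Finset.univ.biUnion (fun i => (u i).image (fun y => (y, e i))) with ht
  set w : (Fin n → ℝ) × (Fin m → ℝ) → ℝ :=
    (fun q => ∑ i, if q.2 = e i then v i q.1 else 0) with hwdef
  have hwval : ∀ (i : Fin m) (y : Fin n → ℝ), w (y, e i) = v i y := by
    intro i y
    have h0 : w (y, e i) = ∑ j, if e i = e j then v j y else 0 := rfl
    rw [h0, Finset.sum_eq_single i (fun j _ hj => if_neg (fun h => hj (he_inj h).symm))
      (fun h => absurd (Finset.mem_univ i) h)]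
    simp
  have hmemt : ∀ q ∈ t, ∃ i : Fin m, q.2 = e i ∧ q.1 ∈ u i := by
    intro q hq
    rw [ht] at hq
    simp only [Finset.mem_biUnion, Finset.mem_image, Finset.mem_univ, true_and] at hq
    obtain ⟨i, y, hy, rfl⟩ := hq
    exact ⟨i, rfl, hy⟩
  have hdisj : ((Finset.univ : Finset (Fin m)) : Set (Fin m)).PairwiseDisjoint
      (fun i => (u i).image (fun y => (y, e i))) := by
    intro i _ j _ hij
    simp only [Function.onFun]
    rw [Finset.disjoint_left]
    rintro q hqi hqj
    simp only [Finset.mem_image] at hqi hqj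
    obtain ⟨y, _, rfl⟩ := hqi
    obtain ⟨y', _, hq⟩ := hqj
    exact hij (he_inj congr(Prod.snd $hq)).symm
  have htsum : ∑ q ∈ t, w q • q = (x, fun _ => (1:ℝ)) := by
    rw [ht, Finset.sum_biUnion hdisj]
    have hpiece : ∀ i : Fin m, ∑ q ∈ (u i).image (fun y => (y, e i)), w q • q = (g i, e i) := by
      intro i
      rw [Finset.sum_image (fun y _ y' _ h => (Prod.ext_iff.1 h).1)]
      refine Prod.ext ?_ ?_
      · rw [Prod.fst_sum]
        simp only [Prod.smul_mk, hwval]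
        exact hvs i
      · rw [Prod.snd_sum]
        simp only [Prod.smul_mk, hwval]
        rw [← Finset.sum_smul, hv1, one_smul]
    rw [Finset.sum_congr rfl (fun i _ => hpiece i)]
    refine Prod.ext ?_ ?_
    · rw [Prod.fst_sum]
      simpa using hgsum
    · rw [Prod.snd_sum]
      simpa [he] using Finset.univ_sum_single (fun _ => (1:ℝ))
  have hwnonneg : ∀ q ∈ t, 0 ≤ w q := by
    intro q hq
    obtain ⟨i, h2, h1⟩ := hmemt q hq
    have : q = (q.1, e i) := by rw [← h2]
    rw [this, hwval]
    exact hv0 i _ h1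
  -- Step 4: reduce the support
  obtain ⟨t', ht'sub, ht'card, w', hw'0, hw'sum⟩ := conic_reduction t.card t le_rfl w hwnonneg
  rw [htsum] at hw'sum
  have hfr : Module.finrank ℝ ((Fin n → ℝ) × (Fin m → ℝ)) = n + m := by
    rw [Module.finrank_prod, Module.finrank_fin_fun, Module.finrank_fin_fun]
  rw [hfr] at ht'card
  -- Step 5: fibers of `t'`
  set idx : (Fin n → ℝ) × (Fin m → ℝ) → Fin m :=
    fun q => if h : ∃ i, q.2 = e i then h.choose else ⟨0, hm0⟩ with hidxdef
  have hidx : ∀ q, ∀ i : Fin m, q.2 = e i → idx q = i := by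
    intro q i hq
    have h : ∃ j, q.2 = e j := ⟨i, hq⟩
    rw [hidxdef]
    simp only [dif_pos h]
    exact he_inj (h.choose_spec.symm.trans hq)
  set c : Fin m → Finset ((Fin n → ℝ) × (Fin m → ℝ)) :=
    fun i => t'.filter (fun q => idx q = i) with hc
  have hfiber : ∀ (F : (Fin n → ℝ) × (Fin m → ℝ) → (Fin n → ℝ)),
      ∑ i : Fin m, ∑ q ∈ c i, F q = ∑ q ∈ t', F q := by
    intro F
    exact Finset.sum_fiberwise_of_maps_to (fun q _ => Finset.mem_univ (idx q)) F
  have hfiberR : ∀ (F : (Fin n → ℝ) × (Fin m → ℝ) → ℝ),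
      ∑ i : Fin m, ∑ q ∈ c i, F q = ∑ q ∈ t', F q := by
    intro F
    exact Finset.sum_fiberwise_of_maps_to (fun q _ => Finset.mem_univ (idx q)) F
  have hqdata : ∀ i : Fin m, ∀ q ∈ c i, q.2 = e i ∧ q.1 ∈ u i := by
    intro i q hq
    rw [hc] at hq
    obtain ⟨hqt', hqi⟩ := Finset.mem_filter.1 hq
    obtain ⟨j, h2, h1⟩ := hmemt q (ht'sub hqt')
    have : j = i := by rw [← hqi, hidx q j h2]
    subst this
    exact ⟨h2, h1⟩
  -- weights in each fiber sum to 1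
  have hone : ∀ i : Fin m, ∑ q ∈ c i, w' q = 1 := by
    intro i
    have h2' := congr(Prod.snd $hw'sum)
    rw [Prod.snd_sum] at h2'
    have h2 := congrFun h2' i
    rw [Finset.sum_apply] at h2
    have hterm : ∀ q ∈ t', ((w' q • q).2) i = if idx q = i then w' q else 0 := by
      intro q hq
      obtain ⟨j, hj2, _⟩ := hmemt q (ht'sub hq)
      rw [hidx q j hj2]
      have hval : (w' q • q).2 i = w' q * q.2 i := rfl
      rw [hval, hj2]
      simp only [he]
      by_cases hji : j = i
      · subst hji
        simp [Pi.single_eq_same]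
      · rw [Pi.single_eq_of_ne (Ne.symm hji), if_neg hji, mul_zero]
    rw [Finset.sum_congr rfl hterm, ← Finset.sum_filter] at h2
    simp only [hc]
    exact h2
  set x' : Fin m → (Fin n → ℝ) := fun i => ∑ q ∈ c i, w' q • q.1 with hx'
  have hx'mem : ∀ i : Fin m, x' i ∈ convexHull ℝ (S i) := by
    intro i
    have := Finset.centerMass_mem_convexHull (c i)
      (fun q hq => hw'0 q (Finset.mem_filter.1 hq).1)
      (by rw [hone i]; exact zero_lt_one)
      (fun q hq => hu i (hqdata i q hq).2)
    rwa [Finset.centerMass_eq_of_sum_1 _ _ (hone i)] at this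
  have hx'sum : ∑ i : Fin m, x' i = x := by
    rw [hx']
    simp only
    rw [hfiber (fun q => w' q • q.1)]
    have h1 := congr(Prod.fst $hw'sum)
    rw [Prod.fst_sum] at h1
    simpa using h1
  -- cardinality bookkeeping
  have hcne : ∀ i : Fin m, (c i).Nonempty := by
    intro i
    rw [Finset.nonempty_iff_ne_empty]
    intro hemp
    have := hone i
    rw [hemp, Finset.sum_empty] at this
    exact zero_ne_one this
  have hcard : ∑ i : Fin m, (c i).card = t'.card := by
    simp only [Finset.card_eq_sum_ones]
    exact Finset.sum_fiberwise_of_maps_to (fun q _ => Finset.mem_univ (idx q)) _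
  set B : Finset (Fin m) := Finset.univ.filter (fun i => 2 ≤ (c i).card) with hB
  have hBcard : B.card ≤ n := by
    have hle : ∀ i ∈ Finset.univ, 1 + (if i ∈ B then 1 else 0) ≤ (c i).card := by
      intro i _
      by_cases hi : i ∈ B
      · rw [hB] at hi
        have := (Finset.mem_filter.1 hi).2
        simp [hi]
        split_ifs <;> omega
      · simp only [hi, if_false]
        have := Finset.card_pos.2 (hcne i)
        omega
    have := Finset.sum_le_sum hle
    rw [hcard, Finset.sum_add_distrib] at this
    simp only [Finset.sum_const, Finset.card_univ, Fintype.card_fin, smul_eq_mul, mul_one,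
      Finset.sum_ite_mem, Finset.univ_inter, Finset.sum_const] at this
    omega
  have hsingle : ∀ i : Fin m, i ∉ B → x' i ∈ S i := by
    intro i hi
    have hcard1 : (c i).card = 1 := by
      rw [hB] at hi
      simp only [Finset.mem_filter, Finset.mem_univ, true_and, not_le] at hi
      have := Finset.card_pos.2 (hcne i)
      omega
    obtain ⟨q, hq⟩ := Finset.card_eq_one.1 hcard1
    have hw'q : w' q = 1 := by
      have := hone i
      rwa [hq, Finset.sum_singleton] at this
    have : x' i = q.1 := by
      rw [hx']
      simp only
      rw [hq, Finset.sum_singleton, hw'q, one_smul]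
    rw [this]
    exact hu i (hqdata i q (hq ▸ Finset.mem_singleton_self q)).2
  -- Step 6: choose `T` and conclude
  obtain ⟨T, hBT, -, hTcard⟩ := Finset.exists_subsuperset_card_eq (Finset.subset_univ B)
    (le_trans hBcard (le_refl n)) (by simpa using hmn.le)
  refine ⟨T, hTcard, ∑ i ∈ T, x' i, ?_, x', fun s hs => hsingle s (fun hsB => hs (hBT hsB)), ?_⟩
  · exact Set.finset_sum_mem_finset_sum T _ x' (fun i _ => hx'mem i)
  · rw [Finset.sum_add_sum_compl T x', hx'sum]
end

section
/- Let S be a finite subset of ℤ^n, let K be the convex hull of S in ℝ^n, and let m ≥ n be an integer. Then mK ∩ ℤ^n = (nK ∩ ℤ^n) + (m−n)·(K ∩ ℤ^n), where the right-hand side is a Minkowski sum of sets. Equivalently, every lattice point x ∈ mK can be written x = z + y_1 + ... + y_{m−n} with z a lattice point of nK and each y_s ∈ S. -/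
open Pointwise

/-- The set of lattice points (points with integer coordinates) of `ℝ^n`. -/
def latticePoints (n : ℕ) : Set (Fin n → ℝ) := {x | ∀ i, ∃ z : ℤ, x i = (z : ℝ)}

/-- The `k`-fold Minkowski sum `A + A + ⋯ + A` (`k` times) of a subset `A` of `ℝ^n`
(by convention the `0`-fold sum is `{0}`). -/
def nsmulSet {n : ℕ} : ℕ → Set (Fin n → ℝ) → Set (Fin n → ℝ)
  | 0, _ => {0}
  | k + 1, A => A + nsmulSet k A

lemma lattice_zero (n : ℕ) : (0 : Fin n → ℝ) ∈ latticePoints n :=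
  fun i => ⟨0, by simp⟩

lemma lattice_add {n : ℕ} {x y : Fin n → ℝ} (hx : x ∈ latticePoints n)
    (hy : y ∈ latticePoints n) : x + y ∈ latticePoints n := by
  intro i
  obtain ⟨a, ha⟩ := hx i
  obtain ⟨b, hb⟩ := hy i
  exact ⟨a + b, by simp [ha, hb]⟩

lemma lattice_sub {n : ℕ} {x y : Fin n → ℝ} (hx : x ∈ latticePoints n)
    (hy : y ∈ latticePoints n) : x - y ∈ latticePoints n := by
  intro i
  obtain ⟨a, ha⟩ := hx i
  obtain ⟨b, hb⟩ := hy i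
  exact ⟨a - b, by simp [ha, hb]⟩

lemma nsmulSet_nonempty {n : ℕ} {A : Set (Fin n → ℝ)} (hA : A.Nonempty) :
    ∀ k, (nsmulSet k A).Nonempty := by
  intro k
  induction k with
  | zero => exact ⟨0, rfl⟩
  | succ k ih =>
    obtain ⟨a, ha⟩ := hA
    obtain ⟨b, hb⟩ := ih
    exact ⟨a + b, Set.add_mem_add ha hb⟩

/-- The key step: if `x ∈ mK` with `m ≥ 2` then `x - v ∈ (m-1)K` for some vertex `v ∈ S`. -/
lemma key_step {n : ℕ} (S : Set (Fin n → ℝ)) {m : ℕ} (hm2 : 2 ≤ m) (hmn : n + 1 ≤ m)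
    {x : Fin n → ℝ} (hx : x ∈ (m : ℝ) • convexHull ℝ S) :
    ∃ v ∈ S, x - v ∈ ((m : ℝ) - 1) • convexHull ℝ S := by
  have hm0 : (m : ℝ) ≠ 0 := by positivity
  have hy : (m : ℝ)⁻¹ • x ∈ convexHull ℝ S :=
    (Set.mem_smul_set_iff_inv_smul_mem₀ hm0 _ _).1 hx
  rw [convexHull_eq_union] at hy
  simp only [Set.mem_iUnion] at hy
  obtain ⟨t, htS, hai, hyt⟩ := hy
  -- Carathéodory bound on the cardinality
  have hcard : t.card ≤ n + 1 := by
    have h1 := hai.card_le_finrank_succ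
    rw [Fintype.card_coe] at h1
    refine h1.trans (Nat.add_le_add_right ?_ 1)
    calc Module.finrank ℝ (vectorSpan ℝ (Set.range ((↑) : t → (Fin n → ℝ))))
        ≤ Module.finrank ℝ (Fin n → ℝ) := Submodule.finrank_le _
      _ = n := Module.finrank_fin_fun ℝ
  rw [Finset.convexHull_eq] at hyt
  obtain ⟨w, hw0, hw1, hcm⟩ := hyt
  rw [t.centerMass_eq_of_sum_1 _ hw1] at hcm
  simp only [id_eq] at hcm
  -- express x as a combination with weights summing to m
  have hxsum : x = ∑ y ∈ t, ((m : ℝ) * w y) • y := by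
    have : x = (m : ℝ) • ((m : ℝ)⁻¹ • x) := by
      rw [smul_smul, mul_inv_cancel₀ hm0, one_smul]
    rw [this, ← hcm, Finset.smul_sum]
    refine Finset.sum_congr rfl fun y _ => ?_
    rw [smul_smul]
  have hsum_m : ∑ y ∈ t, (m : ℝ) * w y = (m : ℝ) := by
    rw [← Finset.mul_sum, hw1, mul_one]
  -- find a vertex with weight ≥ 1
  have hv : ∃ v ∈ t, 1 ≤ (m : ℝ) * w v := by
    by_contra hcon
    push_neg at hcon
    rcases t.eq_empty_or_nonempty with rfl | htne
    · simp only [Finset.sum_empty] at hsum_m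
      have : (2 : ℝ) ≤ (m : ℝ) := by exact_mod_cast hm2
      linarith
    · have hlt : ∑ y ∈ t, (m : ℝ) * w y < ∑ y ∈ t, (1 : ℝ) :=
        Finset.sum_lt_sum_of_nonempty htne fun i hi => hcon i hi
      rw [hsum_m, Finset.sum_const, nsmul_eq_mul, mul_one] at hlt
      have hc : (t.card : ℝ) ≤ (n : ℝ) + 1 := by exact_mod_cast hcard
      have hmn' : (n : ℝ) + 1 ≤ (m : ℝ) := by exact_mod_cast hmn
      linarith
  obtain ⟨v, hvt, hv1⟩ := hv
  refine ⟨v, htS hvt, ?_⟩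
  -- new weights
  set w' : (Fin n → ℝ) → ℝ := fun y => (m : ℝ) * w y - (if y = v then 1 else 0) with hw'
  have hw'0 : ∀ y ∈ t, 0 ≤ w' y := by
    intro y hy
    by_cases h : y = v
    · subst h; simp [hw']; linarith
    · simp only [hw', if_neg h, sub_zero]
      exact mul_nonneg (by positivity) (hw0 y hy)
  have hw'sum : ∑ y ∈ t, w' y = (m : ℝ) - 1 := by
    simp only [hw', Finset.sum_sub_distrib, hsum_m, Finset.sum_ite_eq' t v (fun _ => (1 : ℝ)),
      if_pos hvt]
  have hm1pos : (0 : ℝ) < (m : ℝ) - 1 := by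
    have : (2 : ℝ) ≤ (m : ℝ) := by exact_mod_cast hm2
    linarith
  have hxv : ∑ y ∈ t, w' y • y = x - v := by
    simp only [hw', sub_smul, ite_smul, one_smul, zero_smul, Finset.sum_sub_distrib,
      Finset.sum_ite_eq' t v, if_pos hvt, ← hxsum]
  have hmem : t.centerMass w' id ∈ convexHull ℝ S :=
    t.centerMass_mem_convexHull hw'0 (by rw [hw'sum]; exact hm1pos) fun i hi => htS hi
  have hcm' : t.centerMass w' id = ((m : ℝ) - 1)⁻¹ • (x - v) := by
    rw [Finset.centerMass, hw'sum]
    simp only [id_eq, hxv]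
  rw [Set.mem_smul_set_iff_inv_smul_mem₀ (ne_of_gt hm1pos), ← hcm']
  exact hmem

/-- Forward inclusion, for `n ≥ 1`, by induction on `k = m - n`. -/
lemma forward_lemma {n : ℕ} (hn : 1 ≤ n) (S : Set (Fin n → ℝ)) (hSL : S ⊆ latticePoints n) :
    ∀ k : ℕ, ∀ x ∈ latticePoints n, x ∈ (((n + k : ℕ) : ℝ)) • convexHull ℝ S →
      x ∈ (((n : ℝ) • convexHull ℝ S) ∩ latticePoints n) +
        nsmulSet k (convexHull ℝ S ∩ latticePoints n) := by
  intro k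
  induction k with
  | zero =>
    intro x hxL hxK
    have hxK' : x ∈ (n : ℝ) • convexHull ℝ S := by
      simpa using hxK
    refine ⟨x, ⟨hxK', hxL⟩, 0, rfl, by simp⟩
  | succ k ih =>
    intro x hxL hxK
    have hm2 : 2 ≤ n + (k + 1) := by omega
    have hmn : n + 1 ≤ n + (k + 1) := by omega
    obtain ⟨v, hvS, hv⟩ := key_step S hm2 hmn hxK
    have hcast : ((n + (k + 1) : ℕ) : ℝ) - 1 = ((n + k : ℕ) : ℝ) := by push_cast; ring
    rw [hcast] at hv
    have hvL : v ∈ latticePoints n := hSL hvS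
    have hxvL : x - v ∈ latticePoints n := lattice_sub hxL hvL
    obtain ⟨z, hz, y, hy, hzy⟩ := ih (x - v) hxvL hv
    have hzy' : z + y = x - v := hzy
    have hvK : v ∈ convexHull ℝ S ∩ latticePoints n :=
      ⟨subset_convexHull ℝ S hvS, hvL⟩
    have : z + (v + y) = x := by
      have h1 : z + (v + y) = (z + y) + v := by abel
      rw [h1, hzy']; abel
    exact this ▸ Set.add_mem_add hz (Set.add_mem_add hvK hy)

/-- Reverse inclusion helper: `k`-fold sums of `K ∩ L` lie in `kK ∩ L`. -/
lemma nsmul_subset {n : ℕ} (S : Set (Fin n → ℝ)) (hSne : S.Nonempty) :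
    ∀ k, nsmulSet k (convexHull ℝ S ∩ latticePoints n) ⊆
      (((k : ℕ) : ℝ) • convexHull ℝ S) ∩ latticePoints n := by
  intro k
  induction k with
  | zero =>
    intro x hx
    have hx0 : x = 0 := hx
    subst hx0
    have hKne : (convexHull ℝ S).Nonempty := hSne.mono (subset_convexHull ℝ S)
    constructor
    · rw [Nat.cast_zero, Set.zero_smul_set hKne]
      rfl
    · exact lattice_zero n
  | succ k ih =>
    rintro _ ⟨a, ha, y, hy, rfl⟩
    obtain ⟨haK, haL⟩ := ha
    obtain ⟨hyK, hyL⟩ := ih hy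
    constructor
    · have hconv : Convex ℝ (convexHull ℝ S) := convex_convexHull ℝ S
      have heq : (((k + 1 : ℕ) : ℝ)) • convexHull ℝ S =
          (1 : ℝ) • convexHull ℝ S + ((k : ℕ) : ℝ) • convexHull ℝ S := by
        rw [← hconv.add_smul zero_le_one (by positivity)]
        congr 1
        push_cast
        ring
      rw [heq]
      exact Set.add_mem_add ⟨a, haK, one_smul _ _⟩ hyK
    · exact lattice_add haL hyL

lemma subsingleton_set_eq {α : Type*} [Subsingleton α] {A B : Set α}
    (hA : A.Nonempty) (hB : B.Nonempty) : A = B := by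
  ext x
  obtain ⟨a, ha⟩ := hA
  obtain ⟨b, hb⟩ := hB
  rw [Subsingleton.elim x a, Subsingleton.elim a b] at *
  simp [ha, hb]

/-- Let `S` be a finite subset of `ℤ^n`, `K` its convex hull in `ℝ^n`, and `m ≥ n`.
Then `mK ∩ ℤ^n = (nK ∩ ℤ^n) + (m - n)(K ∩ ℤ^n)`, where the right-hand side is a
Minkowski sum and `mK`, `nK` denote dilations. -/
theorem dilate_inter_lattice_eq (n m : ℕ) (hm : n ≤ m) (S : Set (Fin n → ℝ))
    (hSfin : S.Finite) (hSL : S ⊆ latticePoints n)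
    (K : Set (Fin n → ℝ)) (hK : K = convexHull ℝ S) :
    ((m : ℝ) • K) ∩ latticePoints n =
      (((n : ℝ) • K) ∩ latticePoints n) + nsmulSet (m - n) (K ∩ latticePoints n) := by
  subst hK
  rcases S.eq_empty_or_nonempty with rfl | hSne
  · simp [Set.empty_add]
  · have hKne : (convexHull ℝ S).Nonempty := hSne.mono (subset_convexHull ℝ S)
    rcases Nat.eq_zero_or_pos n with rfl | hn
    · -- trivial case: the space is a single point
      have : Subsingleton (Fin 0 → ℝ) := by
        constructor; intro a b; funext i; exact absurd i.2 (by omega)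
      obtain ⟨c, hc⟩ := hKne
      have hcL : c ∈ latticePoints 0 := fun i => absurd i.2 (by omega)
      apply subsingleton_set_eq
      · exact ⟨(m : ℝ) • c, Set.smul_mem_smul_set hc,
          fun i => absurd i.2 (by omega)⟩
      · obtain ⟨b, hb⟩ := nsmulSet_nonempty (A := convexHull ℝ S ∩ latticePoints 0)
          ⟨c, hc, hcL⟩ (m - 0)
        exact ⟨((0 : ℕ) : ℝ) • c + b, Set.add_mem_add
          ⟨Set.smul_mem_smul_set hc, fun i => i.elim0⟩ hb⟩
    · ext x
      constructor
      · rintro ⟨hxK, hxL⟩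
        have hcast : ((m : ℕ) : ℝ) = ((n + (m - n) : ℕ) : ℝ) := by
          congr 1; omega
        rw [hcast] at hxK
        exact forward_lemma hn S hSL (m - n) x hxL hxK
      · rintro ⟨z, hz, y, hy, rfl⟩
        obtain ⟨hzK, hzL⟩ := hz
        obtain ⟨hyK, hyL⟩ := nsmul_subset S hSne (m - n) hy
        constructor
        · have hconv : Convex ℝ (convexHull ℝ S) := convex_convexHull ℝ S
          have heq : ((m : ℕ) : ℝ) • convexHull ℝ S =
              (n : ℝ) • convexHull ℝ S + ((m - n : ℕ) : ℝ) • convexHull ℝ S := by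
            rw [← hconv.add_smul (by positivity) (by positivity)]
            congr 1
            have : ((m - n : ℕ) : ℝ) = (m : ℝ) - (n : ℝ) := by
              have := Nat.cast_sub hm (R := ℝ); exact this
            rw [this]; ring
          rw [heq]
          exact Set.add_mem_add hzK hyK
        · exact lattice_add hzL hyL
end

section
/- Let K be a lattice polytope in ℝ^n and let m ≥ n−1 be an integer. Then for every lattice point x ∈ mK there exist lattice points x_1, ..., x_{m−n+1} ∈ K ∩ ℤ^n and a lattice point x_0 ∈ (n−1)K ∩ ℤ^n such that x = x_0 + x_1 + ... + x_{m−n+1}. Equivalently, mK ∩ ℤ^n = ((n−1)K ∩ ℤ^n) + (m−n+1)·(K ∩ ℤ^n). -/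
open Pointwise

/-- A lattice polytope in `ℝ^n`: the convex hull of a finite nonempty set of lattice points. -/
def IsLatticePolytope {n : ℕ} (K : Set (Fin n → ℝ)) : Prop :=
  ∃ S : Set (Fin n → ℝ), S.Finite ∧ S.Nonempty ∧ S ⊆ latticePoints n ∧ K = convexHull ℝ S

namespace LatticeAux

variable {n : ℕ}

lemma lat_zero : (0 : Fin n → ℝ) ∈ latticePoints n := fun _ => ⟨0, by simp⟩

lemma lat_add {x y : Fin n → ℝ} (hx : x ∈ latticePoints n) (hy : y ∈ latticePoints n) :
    x + y ∈ latticePoints n := fun i => by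
  obtain ⟨a, ha⟩ := hx i; obtain ⟨b, hb⟩ := hy i
  exact ⟨a + b, by simp [ha, hb]⟩

lemma lat_sub {x y : Fin n → ℝ} (hx : x ∈ latticePoints n) (hy : y ∈ latticePoints n) :
    x - y ∈ latticePoints n := fun i => by
  obtain ⟨a, ha⟩ := hx i; obtain ⟨b, hb⟩ := hy i
  exact ⟨a - b, by simp [ha, hb]⟩

lemma lat_sum {ι : Type*} (s : Finset ι) (f : ι → Fin n → ℝ)
    (h : ∀ i ∈ s, f i ∈ latticePoints n) : (∑ i ∈ s, f i) ∈ latticePoints n := by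
  classical
  induction s using Finset.induction with
  | empty => simpa using lat_zero
  | insert _ _ hi ih =>
    rw [Finset.sum_insert hi]
    exact lat_add (h _ (Finset.mem_insert_self _ _))
      (ih fun i his => h i (Finset.mem_insert_of_mem his))

/-- A nonnegative combination with coefficient sum `r` lies in `r • K`. -/
lemma combo_mem {K : Set (Fin n → ℝ)} (hconv : Convex ℝ K) (hne : K.Nonempty)
    {ι : Type*} [Fintype ι] {t : ι → Fin n → ℝ} (ht : ∀ i, t i ∈ K)
    {c : ι → ℝ} (hc : ∀ i, 0 ≤ c i) {r : ℝ} (hr : ∑ i, c i = r) :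
    (∑ i, c i • t i) ∈ r • K := by
  have hr0 : 0 ≤ r := hr ▸ Finset.sum_nonneg fun i _ => hc i
  rcases hr0.eq_or_lt with h0 | hpos
  · have hz : ∀ i ∈ Finset.univ, c i = 0 :=
      (Finset.sum_eq_zero_iff_of_nonneg (fun i _ => hc i)).1 (hr.trans h0.symm)
    have : (∑ i, c i • t i) = 0 := by
      apply Finset.sum_eq_zero; intro i hi; rw [hz i hi, zero_smul]
    rw [this, ← h0, Set.zero_smul_set hne]; rfl
  · have hK : (∑ i, (c i / r) • t i) ∈ K :=
      hconv.sum_mem (fun i _ => div_nonneg (hc i) hpos.le)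
        (by rw [← Finset.sum_div, hr, div_self hpos.ne']) (fun i _ => ht i)
    have := Set.smul_mem_smul_set (a := r) hK
    convert this using 1
    rw [Finset.smul_sum]
    apply Finset.sum_congr rfl
    intro i _
    rw [smul_smul, mul_div_cancel₀ _ hpos.ne']

/-- Peeling off one vertex with coefficient `≥ 1`. -/
lemma peel {m : ℕ} (hm1 : 1 ≤ m) {K : Set (Fin n → ℝ)} (hconv : Convex ℝ K)
    {ι : Type*} [Fintype ι] {t : ι → Fin n → ℝ} (ht : ∀ i, t i ∈ K)
    {lam : ι → ℝ} (hlam : ∀ i, 0 ≤ lam i) (hsum : ∑ i, lam i = (m : ℝ))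
    {i0 : ι} (h1 : 1 ≤ lam i0) :
    (∑ i, lam i • t i) - t i0 ∈ (((m - 1 : ℕ)) : ℝ) • K := by
  classical
  have key : (∑ i, lam i • t i) - t i0
      = ∑ i, (lam i - if i = i0 then 1 else 0) • t i := by
    rw [Finset.sum_congr rfl (fun i _ => sub_smul (lam i) _ (t i)), Finset.sum_sub_distrib]
    congr 1
    rw [Finset.sum_congr rfl (g := fun i => if i = i0 then t i else 0)
      (fun i _ => by split <;> simp_all), Finset.sum_ite_eq' Finset.univ i0 t]
    simp
  rw [key]
  apply combo_mem hconv ⟨t i0, ht i0⟩ ht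
  · intro i
    rcases eq_or_ne i i0 with rfl | hne
    · simpa using sub_nonneg.2 h1
    · simpa [hne] using hlam i
  · rw [Finset.sum_sub_distrib, hsum, Finset.sum_ite_eq' Finset.univ i0 (fun _ => (1:ℝ))]
    have : ((m - 1 : ℕ) : ℝ) = (m : ℝ) - 1 := by
      push_cast [Nat.cast_sub hm1]; ring
    simp [this]

/-- The `(n+1) × (n+1)` matrix whose rows are `(1, tᵢ)`. -/
def rowM (t : Fin (n + 1) → Fin n → ℝ) : Matrix (Fin (n + 1)) (Fin (n + 1)) ℝ :=
  Matrix.of fun i => Fin.cons 1 (t i)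

lemma exists_int_det {t : Fin (n + 1) → Fin n → ℝ} (h : ∀ i, t i ∈ latticePoints n) :
    ∃ d : ℤ, (rowM t).det = (d : ℝ) := by
  have hent : ∀ i j, ∃ z : ℤ, rowM t i j = (z : ℝ) := by
    intro i j
    refine Fin.cases ?_ ?_ j
    · exact ⟨1, by simp [rowM]⟩
    · intro j'
      obtain ⟨z, hz⟩ := h i j'
      exact ⟨z, by simpa [rowM] using hz⟩
  choose Z hZ using hent
  refine ⟨(Matrix.of Z).det, ?_⟩
  have hmap : rowM t = (Int.castRingHom ℝ).mapMatrix (Matrix.of Z) := by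
    ext i j; simpa using hZ i j
  rw [hmap, ← RingHom.map_det]
  rfl

lemma det_ne_of_affineIndependent {t : Fin (n + 1) → Fin n → ℝ}
    (h : AffineIndependent ℝ t) : (rowM t).det ≠ 0 := by
  intro hdet
  obtain ⟨v, hv, hva⟩ := Matrix.exists_vecMul_eq_zero_iff.2 hdet
  have h0 : ∑ i, v i = 0 := by
    have := congrFun hva 0
    simpa [Matrix.vecMul, dotProduct, rowM] using this
  have h1 : ∑ i, v i • t i = 0 := by
    funext j
    have := congrFun hva j.succ
    simpa [Matrix.vecMul, dotProduct, rowM, Finset.sum_apply] using this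
  exact hv (funext fun i =>
    affineIndependent_iff.1 h Finset.univ v (by simpa using h0) (by simpa using h1) i
      (Finset.mem_univ i))

lemma cons_sum {t : Fin (n + 1) → Fin n → ℝ} {c : Fin (n + 1) → ℝ} (hc : ∑ i, c i = 1) :
    (Fin.cons 1 (∑ i, c i • t i) : Fin (n + 1) → ℝ)
      = ∑ i, c i • (Fin.cons 1 (t i) : Fin (n + 1) → ℝ) := by
  funext k
  refine Fin.cases ?_ ?_ k
  · simp [Finset.sum_apply, hc]
  · intro k'
    simp [Finset.sum_apply]

lemma det_update {t : Fin (n + 1) → Fin n → ℝ} {c : Fin (n + 1) → ℝ}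
    (hc : ∑ i, c i = 1) (j : Fin (n + 1)) :
    (rowM (Function.update t j (∑ i, c i • t i))).det = c j * (rowM t).det := by
  classical
  have hrow : rowM (Function.update t j (∑ i, c i • t i))
      = (rowM t).updateRow j (∑ i, c i • rowM t i) := by
    funext i
    by_cases hij : i = j
    · subst hij
      show (Fin.cons 1 (Function.update t i (∑ i, c i • t i) i) : Fin (n+1) → ℝ)
        = ((rowM t).updateRow i (∑ i', c i' • rowM t i')) i
      rw [Function.update_self, Matrix.updateRow_self, cons_sum hc]
      rfl
    · show (Fin.cons 1 (Function.update t j (∑ i, c i • t i) i) : Fin (n+1) → ℝ)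
        = ((rowM t).updateRow j (∑ i', c i' • rowM t i')) i
      rw [Function.update_of_ne hij, Matrix.updateRow_ne hij]
      rfl
  rw [hrow, Matrix.det_updateRow_sum]
  simp

end LatticeAux

namespace LatticeAux

/-- Core recursion: decomposition over a simplex, by induction on the determinant. -/
lemma inner_step {n m : ℕ} (hn : 0 < n) (hm : n ≤ m) {K : Set (Fin n → ℝ)}
    (hconv : Convex ℝ K) :
    ∀ N : ℕ, ∀ t : Fin (n + 1) → Fin n → ℝ, (∀ i, t i ∈ K) → (∀ i, t i ∈ latticePoints n) →
    ∀ d : ℤ, (rowM t).det = (d : ℝ) → d ≠ 0 → d.natAbs ≤ N →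
    ∀ lam : Fin (n + 1) → ℝ, (∀ i, 0 ≤ lam i) → (∑ i, lam i) = (m : ℝ) →
    ∀ z : Fin n → ℝ, z ∈ latticePoints n → z = ∑ i, lam i • t i →
    ∃ w ∈ K ∩ latticePoints n, z - w ∈ (((m - 1 : ℕ)) : ℝ) • K := by
  intro N
  induction N with
  | zero =>
    intro t _ _ d _ hd hN
    exact absurd (Int.natAbs_eq_zero.1 (Nat.le_zero.1 hN)) hd
  | succ N ih =>
    intro t htK htL d hdet hd hN lam hlam hsum z hzL hz
    by_cases hone : ∃ i, 1 ≤ lam i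
    · obtain ⟨i0, hi0⟩ := hone
      refine ⟨t i0, ⟨htK i0, htL i0⟩, ?_⟩
      rw [hz]
      exact peel (le_trans hn hm) hconv htK hlam hsum hi0
    · push_neg at hone
      -- all coefficients < 1, hence m = n and all coefficients are positive
      have hlt : (m : ℝ) < n + 1 := by
        rw [← hsum]
        calc ∑ i, lam i < ∑ _i : Fin (n+1), (1:ℝ) :=
              Finset.sum_lt_sum_of_nonempty Finset.univ_nonempty (fun i _ => hone i)
        _ = n + 1 := by simp
      have hmn : m = n := by
        have h1 : m < n + 1 := by exact_mod_cast hlt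
        omega
      have hcast : (m : ℝ) = (n : ℝ) := by exact_mod_cast congrArg Nat.cast hmn
      have hpos1 : ∀ i, 0 < 1 - lam i := fun i => by linarith [hone i]
      have hlampos : ∀ i, 0 < lam i := by
        intro i
        have hcard : (Finset.univ.erase i).card = n := by
          rw [Finset.card_erase_of_mem (Finset.mem_univ i)]
          simp
        have hne : (Finset.univ.erase i).Nonempty := by
          rw [← Finset.card_pos, hcard]; exact hn
        have hlt2 : ∑ i' ∈ Finset.univ.erase i, lam i'
            < ∑ _i' ∈ Finset.univ.erase i, (1:ℝ) :=
          Finset.sum_lt_sum_of_nonempty hne (fun i' _ => hone i')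
        have hsum2 : ∑ i' ∈ Finset.univ.erase i, lam i' + lam i = (m : ℝ) := by
          rw [Finset.sum_erase_add _ _ (Finset.mem_univ i), hsum]
        have hones : ∑ _i' ∈ Finset.univ.erase i, (1:ℝ) = (n : ℝ) := by
          rw [Finset.sum_const, hcard]; simp
        rw [hones] at hlt2
        have := hcast
        linarith
      have hcsum : ∑ i, (1 - lam i) = 1 := by
        rw [Finset.sum_sub_distrib, hsum, hcast]; simp
      set z' := ∑ i, (1 - lam i) • t i with hz'def
      have hz'K : z' ∈ K :=
        hconv.sum_mem (fun i _ => (hpos1 i).le) hcsum (fun i _ => htK i)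
      have hz'L : z' ∈ latticePoints n := by
        have heq : z' = (∑ i, t i) - z := by
          rw [hz'def, hz, ← Finset.sum_sub_distrib]
          exact Finset.sum_congr rfl fun i _ => by rw [sub_smul, one_smul]
        rw [heq]
        exact lat_sub (lat_sum _ _ fun i _ => htL i) hzL
      -- choose j minimizing lam i / (1 - lam i)
      obtain ⟨j, -, hj⟩ := Finset.exists_min_image Finset.univ
        (fun i => lam i / (1 - lam i)) Finset.univ_nonempty
      set c : ℝ := lam j / (1 - lam j) with hcdef
      have hc0 : 0 ≤ c := div_nonneg (hlam j) (hpos1 j).le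
      have hckey : ∀ i, c * (1 - lam i) ≤ lam i := fun i =>
        (le_div_iff₀ (hpos1 i)).1 (hj i (Finset.mem_univ i))
      have hcj : c * (1 - lam j) = lam j := by
        rw [hcdef, div_mul_cancel₀ _ (hpos1 j).ne']
      set t' := Function.update t j z' with ht'def
      set lam' : Fin (n+1) → ℝ :=
        fun i => (lam i - c * (1 - lam i)) + (if i = j then c else 0) with hlam'def
      have hlamj0 : lam j - c * (1 - lam j) = 0 := by rw [hcj]; ring
      have hlam'0 : ∀ i, 0 ≤ lam' i := by
        intro i
        have h1 := sub_nonneg.2 (hckey i)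
        rcases eq_or_ne i j with rfl | hne
        · simp only [hlam'def, eq_self_iff_true, if_true]
          linarith
        · simp only [hlam'def, hne, if_false, add_zero]
          exact h1
      have hlam'sum : ∑ i, lam' i = (m : ℝ) := by
        rw [hlam'def]
        rw [Finset.sum_add_distrib, Finset.sum_sub_distrib, hsum]
        have e1 : ∑ i, c * (1 - lam i) = c := by
          rw [← Finset.mul_sum, hcsum, mul_one]
        have e2 : ∑ i, (if i = j then c else (0:ℝ)) = c := by
          simp [Finset.sum_ite_eq']
        rw [e1, e2]; ring
      have hterm : ∀ i, lam' i • t' i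
          = (lam i • t i - c • ((1 - lam i) • t i)) + (if i = j then c else 0) • z' := by
        intro i
        rcases eq_or_ne i j with rfl | hne
        · simp only [hlam'def, eq_self_iff_true, if_true, ht'def, Function.update_self]
          rw [hlamj0, zero_add, smul_smul, ← sub_smul, hlamj0, zero_smul, zero_add]
        · simp only [hlam'def, hne, if_false, add_zero, ht'def, Function.update_of_ne hne,
            zero_smul]
          rw [sub_smul, smul_smul]
      have hzrep : z = ∑ i, lam' i • t' i := by
        rw [Finset.sum_congr rfl fun i _ => hterm i, Finset.sum_add_distrib,
          Finset.sum_sub_distrib, ← Finset.smul_sum, ← hz'def, ← hz]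
        have e2 : ∑ i, (if i = j then c else (0:ℝ)) • z' = c • z' := by
          rw [Finset.sum_congr rfl
            (g := fun i => if i = j then c • z' else 0)
            (fun i _ => by split <;> simp_all),
            Finset.sum_ite_eq' Finset.univ j (fun _ => c • z')]
          simp
        rw [e2]
        abel
      -- the new determinant
      have ht'L : ∀ i, t' i ∈ latticePoints n := by
        intro i
        rcases eq_or_ne i j with rfl | hne
        · rw [ht'def, Function.update_self]; exact hz'L
        · rw [ht'def, Function.update_of_ne hne]; exact htL i
      have ht'K : ∀ i, t' i ∈ K := by
        intro i
        rcases eq_or_ne i j with rfl | hne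
        · rw [ht'def, Function.update_self]; exact hz'K
        · rw [ht'def, Function.update_of_ne hne]; exact htK i
      obtain ⟨d', hd'⟩ := exists_int_det ht'L
      have hdet' : (rowM t').det = (1 - lam j) * (rowM t).det := by
        rw [ht'def, hz'def]
        exact det_update hcsum j
      have hd'eq : (d' : ℝ) = (1 - lam j) * (d : ℝ) := by
        rw [← hd', hdet', hdet]
      have hd'0 : d' ≠ 0 := by
        intro h0
        rw [h0] at hd'eq
        have : (d : ℝ) ≠ 0 := Int.cast_ne_zero.2 hd
        have h1 := (hpos1 j).ne'
        simp only [Int.cast_zero] at hd'eq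
        exact this (by
          rcases mul_eq_zero.1 hd'eq.symm with h | h
          · exact absurd h h1
          · exact h)
      have habslt : d'.natAbs < d.natAbs := by
        have h1 : |(d' : ℝ)| < |(d : ℝ)| := by
          rw [hd'eq, abs_mul, abs_of_pos (hpos1 j)]
          have hdpos : 0 < |(d : ℝ)| := abs_pos.2 (Int.cast_ne_zero.2 hd)
          nlinarith [hlampos j]
        have h2 : ((d'.natAbs : ℕ) : ℝ) < ((d.natAbs : ℕ) : ℝ) := by
          push_cast [Nat.cast_natAbs]
          exact h1
        exact_mod_cast h2
      exact ih t' ht'K ht'L d' hd' hd'0 (by omega) lam' hlam'0 hlam'sum z hzL hzrep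

/-- Step: a lattice point of `mK` (m ≥ n) splits off a lattice point of `K`. -/
lemma step_lemma {n m : ℕ} (hn : 0 < n) (hm : n ≤ m) {S : Set (Fin n → ℝ)}
    (hlat : S ⊆ latticePoints n)
    {z : Fin n → ℝ} (hzK : z ∈ (m : ℝ) • convexHull ℝ S) (hzL : z ∈ latticePoints n) :
    ∃ w ∈ convexHull ℝ S ∩ latticePoints n,
      z - w ∈ ((((m - 1 : ℕ)) : ℝ) • convexHull ℝ S) ∩ latticePoints n := by
  classical
  obtain ⟨y, hy, rfl⟩ := hzK
  obtain ⟨ι, hι, v, w, hrange, haff, hwpos, hwsum, hwy⟩ :=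
    eq_pos_convex_span_of_mem_convexHull hy
  have hvS : ∀ i, v i ∈ S := fun i => hrange ⟨i, rfl⟩
  have hvK : ∀ i, v i ∈ convexHull ℝ S := fun i => subset_convexHull ℝ S (hvS i)
  have hvL : ∀ i, v i ∈ latticePoints n := fun i => hlat (hvS i)
  set lam : ι → ℝ := fun i => (m : ℝ) * w i with hlamdef
  have hlam0 : ∀ i, 0 ≤ lam i := fun i => mul_nonneg (Nat.cast_nonneg m) (hwpos i).le
  have hlamsum : ∑ i, lam i = (m : ℝ) := by
    rw [hlamdef, ← Finset.mul_sum, hwsum, mul_one]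
  have hrep : (m : ℝ) • y = ∑ i, lam i • v i := by
    rw [← hwy, Finset.smul_sum]
    exact Finset.sum_congr rfl fun i _ => by rw [hlamdef, smul_smul]
  have hcard : Fintype.card ι ≤ n + 1 := by
    refine le_trans haff.card_le_finrank_succ ?_
    have h1 : Module.finrank ℝ ↥(vectorSpan ℝ (Set.range v)) ≤ Module.finrank ℝ (Fin n → ℝ) :=
      Submodule.finrank_le _
    rw [Module.finrank_pi] at h1
    simpa using Nat.add_le_add_right h1 1
  by_cases hfull : Fintype.card ι = n + 1
  · -- simplex case
    set e : Fin (n + 1) ≃ ι := (Fintype.equivFinOfCardEq hfull).symm with hedef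
    set t : Fin (n + 1) → Fin n → ℝ := v ∘ e with htdef
    have haff' : AffineIndependent ℝ t := haff.comp_embedding e.toEmbedding
    have htK : ∀ i, t i ∈ convexHull ℝ S := fun i => hvK (e i)
    have htL : ∀ i, t i ∈ latticePoints n := fun i => hvL (e i)
    obtain ⟨d, hd⟩ := exists_int_det htL
    have hd0 : d ≠ 0 := by
      intro h0
      rw [h0] at hd
      exact det_ne_of_affineIndependent haff' (by simpa using hd)
    have hrep' : (m : ℝ) • y = ∑ i, (lam ∘ e) i • t i := by
      rw [hrep, ← Equiv.sum_comp e (fun i => lam i • v i)]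
      rfl
    obtain ⟨ww, hww, hwwm⟩ := inner_step hn hm (convex_convexHull ℝ S) d.natAbs t htK htL
      d hd hd0 le_rfl (lam ∘ e) (fun i => hlam0 (e i))
      (by rw [← Equiv.sum_comp e lam] at hlamsum; exact hlamsum)
      ((m : ℝ) • y) hzL hrep'
    exact ⟨ww, hww, hwwm, lat_sub hzL hww.2⟩
  · -- fewer than n+1 points: some coefficient is ≥ 1
    have hcard' : Fintype.card ι ≤ n := by omega
    have hone : ∃ i, 1 ≤ lam i := by
      by_contra hc
      push_neg at hc
      have hne : Nonempty ι := by
        rcases isEmpty_or_nonempty ι with h | h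
        · exfalso
          rw [Finset.univ_eq_empty, Finset.sum_empty] at hwsum
          exact one_ne_zero hwsum.symm
        · exact h
      have : (m : ℝ) < Fintype.card ι := by
        rw [← hlamsum]
        calc ∑ i, lam i < ∑ _i : ι, (1 : ℝ) :=
              Finset.sum_lt_sum_of_nonempty Finset.univ_nonempty (fun i _ => hc i)
        _ = Fintype.card ι := by simp
      have h2 : (m : ℕ) < Fintype.card ι := by exact_mod_cast this
      omega
    obtain ⟨i0, hi0⟩ := hone
    refine ⟨v i0, ⟨hvK i0, hvL i0⟩, ?_, lat_sub hzL (hvL i0)⟩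
    show (m : ℝ) • y - v i0 ∈ _
    rw [hrep]
    exact peel (le_trans hn hm) (convex_convexHull ℝ S) hvK hlam0 hlamsum hi0

/-- `nsmulSet k` of the lattice points of a convex nonempty set sits in `k • K`. -/
lemma nsmul_subset {n : ℕ} {K : Set (Fin n → ℝ)} (hconv : Convex ℝ K) (hne : K.Nonempty) :
    ∀ k : ℕ, nsmulSet k (K ∩ latticePoints n) ⊆ ((k : ℝ) • K) ∩ latticePoints n := by
  intro k
  induction k with
  | zero =>
    intro x hx
    rw [show x = 0 from hx]
    constructor
    · rw [Nat.cast_zero, Set.zero_smul_set hne]; rfl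
    · exact lat_zero
  | succ k ih =>
    rintro x ⟨a, ha, b, hb, rfl⟩
    obtain ⟨hbK, hbL⟩ := ih hb
    constructor
    · have hsplit : ((k + 1 : ℕ) : ℝ) • K = (1 : ℝ) • K + (k : ℝ) • K := by
        rw [show ((k + 1 : ℕ) : ℝ) = 1 + (k : ℝ) by push_cast; ring]
        exact hconv.add_smul zero_le_one (Nat.cast_nonneg k)
      rw [hsplit, one_smul]
      exact Set.add_mem_add ha.1 hbK
    · exact lat_add ha.2 hbL

lemma main_aux {n : ℕ} (hn : 0 < n) {S : Set (Fin n → ℝ)} (hne : S.Nonempty)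
    (hlat : S ⊆ latticePoints n) :
    ∀ k : ℕ, (((n - 1 + k : ℕ) : ℝ) • convexHull ℝ S) ∩ latticePoints n =
      ((((n - 1 : ℕ)) : ℝ) • convexHull ℝ S) ∩ latticePoints n +
        nsmulSet k (convexHull ℝ S ∩ latticePoints n) := by
  have hKconv : Convex ℝ (convexHull ℝ S) := convex_convexHull ℝ S
  have hKne : (convexHull ℝ S).Nonempty := hne.mono (subset_convexHull ℝ S)
  intro k
  induction k with
  | zero =>
    show _ = _ + ({0} : Set (Fin n → ℝ))
    rw [Set.add_singleton]
    simp
  | succ k ih =>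
    ext x
    constructor
    · rintro ⟨hxK, hxL⟩
      have hm' : n ≤ n - 1 + (k + 1) := by omega
      obtain ⟨w, hw, hzw⟩ := step_lemma hn hm' hlat hxK hxL
      have heq : (n - 1 + (k + 1) - 1 : ℕ) = n - 1 + k := by omega
      rw [heq] at hzw
      have hx' : x - w ∈ ((((n - 1 : ℕ)) : ℝ) • convexHull ℝ S) ∩ latticePoints n +
          nsmulSet k (convexHull ℝ S ∩ latticePoints n) := ih ▸ hzw
      rw [Set.mem_add] at hx'
      obtain ⟨x0, hx0, yy, hyy, hxy⟩ := hx'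
      rw [Set.mem_add]
      refine ⟨x0, hx0, w + yy, Set.add_mem_add hw hyy, ?_⟩
      have hsum2 : x0 + yy + w = x := by rw [hxy]; abel
      rw [← hsum2]; abel
    · rw [Set.mem_add]
      rintro ⟨x0, hx0, yy, hyy, rfl⟩
      have h2 := nsmul_subset hKconv hKne (k + 1) hyy
      constructor
      · have hsplit : (((n - 1 + (k + 1) : ℕ)) : ℝ) • convexHull ℝ S
            = (((n - 1 : ℕ)) : ℝ) • convexHull ℝ S + (((k + 1 : ℕ)) : ℝ) • convexHull ℝ S := by
          rw [show (((n - 1 + (k + 1) : ℕ)) : ℝ) = ((n - 1 : ℕ) : ℝ) + ((k + 1 : ℕ) : ℝ) by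
            push_cast; ring]
          exact hKconv.add_smul (Nat.cast_nonneg _) (Nat.cast_nonneg _)
        show x0 + yy ∈ _
        rw [hsplit]
        exact Set.add_mem_add hx0.1 h2.1
      · show x0 + yy ∈ _
        exact lat_add hx0.2 h2.2

end LatticeAux

open LatticeAux in
/-- Let `K` be a lattice polytope in `ℝ^n` and `m ≥ n - 1` an integer.  Then
`mK ∩ ℤ^n = ((n-1)K ∩ ℤ^n) + (m-n+1)(K ∩ ℤ^n)`: every lattice point of the dilate `mK`
is a sum of a lattice point of `(n-1)K` and `m - n + 1` lattice points of `K`. -/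
theorem lattice_polytope_decomposition (n m : ℕ) (hm : n - 1 ≤ m)
    (K : Set (Fin n → ℝ)) (hK : IsLatticePolytope K) :
    ((m : ℝ) • K) ∩ latticePoints n =
      (((n - 1 : ℕ) : ℝ) • K) ∩ latticePoints n +
        nsmulSet (m + 1 - n) (K ∩ latticePoints n) := by
  classical
  obtain ⟨S, hfin, hne, hlat, rfl⟩ := hK
  rcases Nat.eq_zero_or_pos n with hn0 | hn
  · subst hn0
    have hKne : (convexHull ℝ S).Nonempty := hne.mono (subset_convexHull ℝ S)
    obtain ⟨p, hp⟩ := hKne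
    have hlatall : ∀ x : Fin 0 → ℝ, x ∈ latticePoints 0 := fun x i => i.elim0
    have hnsne : ∀ k, (nsmulSet k ((convexHull ℝ S) ∩ latticePoints 0)).Nonempty := by
      intro k
      induction k with
      | zero => exact ⟨0, rfl⟩
      | succ k ih =>
        obtain ⟨b, hb⟩ := ih
        exact ⟨p + b, Set.add_mem_add ⟨hp, hlatall p⟩ hb⟩
    ext x
    constructor
    · intro _
      obtain ⟨b, hb⟩ := hnsne (m + 1 - 0)
      rw [Set.mem_add]
      refine ⟨0, ⟨?_, hlatall 0⟩, b, hb, Subsingleton.elim _ _⟩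
      have h0 : ((0 - 1 : ℕ) : ℝ) = (0 : ℝ) := by norm_num
      rw [h0, Set.zero_smul_set ⟨p, hp⟩]
      rfl
    · intro _
      refine ⟨?_, hlatall x⟩
      have : (m : ℝ) • p ∈ (m : ℝ) • convexHull ℝ S := Set.smul_mem_smul_set hp
      rwa [Subsingleton.elim x ((m : ℝ) • p)]
  · have h1 : n - 1 + (m - (n - 1)) = m := by omega
    have h2 : m + 1 - n = m - (n - 1) := by omega
    have := main_aux hn hne hlat (m - (n - 1))
    rw [h1] at this
    rw [h2]
    exact this
end

section
/- Let K be a lattice polytope in ℝ^n. Then for every lattice point x ∈ nK there exists a lattice point x_1 ∈ K ∩ ℤ^n such that x − x_1 is a lattice point of (n−1)K. That is, nK ∩ ℤ^n = ((n−1)K ∩ ℤ^n) + (K ∩ ℤ^n). -/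
open Pointwise

namespace LPeel

variable {n : ℕ}

lemma lat_sub {x y : Fin n → ℝ} (hx : x ∈ latticePoints n) (hy : y ∈ latticePoints n) :
    x - y ∈ latticePoints n := by
  intro i
  obtain ⟨a, ha⟩ := hx i
  obtain ⟨b, hb⟩ := hy i
  exact ⟨a - b, by simp [ha, hb]⟩

lemma lat_add {x y : Fin n → ℝ} (hx : x ∈ latticePoints n) (hy : y ∈ latticePoints n) :
    x + y ∈ latticePoints n := by
  intro i
  obtain ⟨a, ha⟩ := hx i
  obtain ⟨b, hb⟩ := hy i
  exact ⟨a + b, by simp [ha, hb]⟩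

lemma lat_zero : (0 : Fin n → ℝ) ∈ latticePoints n := fun i => ⟨0, by simp⟩

lemma lat_sum {ι : Type*} (s : Finset ι) (f : ι → Fin n → ℝ)
    (hf : ∀ i ∈ s, f i ∈ latticePoints n) : (∑ i ∈ s, f i) ∈ latticePoints n := by
  classical
  induction s using Finset.induction_on with
  | empty => simpa using lat_zero
  | insert _ _ hns ih =>
    rw [Finset.sum_insert hns]
    exact lat_add (hf _ (Finset.mem_insert_self _ _))
      (ih fun i hi => hf i (Finset.mem_insert_of_mem hi))

/-- the "finishing" move: if `x = x₁ + ∑ c i • v i` with `x₁ ∈ K` a lattice point,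
`v i ∈ K`, `c ≥ 0` summing to `n-1`, then `x` is in the RHS. -/
lemma step_finish (hn : 2 ≤ n) {K : Set (Fin n → ℝ)} (hK : Convex ℝ K)
    {ι : Type*} [Fintype ι] (v : ι → Fin n → ℝ) (hv : ∀ i, v i ∈ K)
    (c : ι → ℝ) (hc0 : ∀ i, 0 ≤ c i) (hcsum : ∑ i, c i = ((n - 1 : ℕ) : ℝ))
    {x x₁ : Fin n → ℝ} (hx : x ∈ latticePoints n) (hx₁ : x₁ ∈ K ∩ latticePoints n)
    (hdiff : x = x₁ + ∑ i, c i • v i) :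
    x ∈ ((((n - 1 : ℕ) : ℝ)) • K) ∩ latticePoints n + (K ∩ latticePoints n) := by
  set m : ℝ := ((n - 1 : ℕ) : ℝ) with hm
  have hmpos : (0 : ℝ) < m := by
    have : 1 ≤ n - 1 := le_tsub_of_add_le_left hn
    rw [hm]
    exact_mod_cast Nat.lt_of_lt_of_le Nat.zero_lt_one this
  set z : Fin n → ℝ := ∑ i, c i • v i with hz
  have hzK : z ∈ m • K := by
    have hp : (∑ i, (c i / m) • v i) ∈ K := by
      apply hK.sum_mem (fun i _ => div_nonneg (hc0 i) hmpos.le)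
      · rw [← Finset.sum_div, hcsum]
        exact div_self hmpos.ne'
      · exact fun i _ => hv i
    have : m • (∑ i, (c i / m) • v i) = z := by
      rw [Finset.smul_sum, hz]
      refine Finset.sum_congr rfl fun i _ => ?_
      rw [smul_smul, mul_div_cancel₀ _ hmpos.ne']
    exact this ▸ Set.smul_mem_smul_set hp
  have hzL : z ∈ latticePoints n := by
    have : z = x - x₁ := by rw [hdiff]; abel
    rw [this]; exact lat_sub hx hx₁.2
  exact Set.mem_add.2 ⟨z, ⟨hzK, hzL⟩, x₁, hx₁, by rw [hdiff]; abel⟩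


/-- augmented real matrix with rows `(1, w i)`. -/
def augR (w : Fin (n+1) → (Fin n → ℝ)) : Matrix (Fin (n+1)) (Fin (n+1)) ℝ :=
  Matrix.of fun i => Fin.cons 1 (w i)

def augZ (W : Fin (n+1) → (Fin n → ℤ)) : Matrix (Fin (n+1)) (Fin (n+1)) ℤ :=
  Matrix.of fun i => Fin.cons 1 (W i)

lemma augZ_map (W : Fin (n+1) → Fin n → ℤ) :
    (augZ W).map (Int.cast : ℤ → ℝ) = augR (fun i k => (W i k : ℝ)) := by
  ext i j
  refine Fin.cases ?_ (fun k => ?_) j <;> simp [augZ, augR]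

lemma augZ_det_cast (W : Fin (n+1) → Fin n → ℤ) :
    (((augZ W).det : ℤ) : ℝ) = (augR (fun i k => (W i k : ℝ))).det := by
  rw [← augZ_map W]
  exact (RingHom.map_det (Int.castRingHom ℝ) (augZ W))

lemma augR_det_update (w : Fin (n+1) → Fin n → ℝ) (j : Fin (n+1)) (μ : Fin (n+1) → ℝ)
    (hμ : ∑ i, μ i = 1) :
    (augR (Function.update w j (∑ i, μ i • w i))).det = μ j * (augR w).det := by
  have h1 : augR (Function.update w j (∑ i, μ i • w i)) =
      (augR w).updateRow j (Fin.cons 1 (∑ i, μ i • w i)) := by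
    ext i k
    by_cases h : i = j
    · subst h; simp [augR, Matrix.updateRow_self]
    · simp [augR, Matrix.updateRow_ne h, Function.update_of_ne h]
  have h2 : (Fin.cons 1 (∑ i, μ i • w i) : Fin (n+1) → ℝ) = ∑ i, μ i • (augR w) i := by
    funext k
    refine Fin.cases ?_ (fun k => ?_) k
    · simp only [Fin.cons_zero, Finset.sum_apply, Pi.smul_apply, augR, Matrix.of_apply,
        smul_eq_mul, mul_one]
      exact hμ.symm
    · simp [augR, Finset.sum_apply]
  rw [h1, h2, Matrix.det_updateRow_sum, smul_eq_mul]

lemma det_ne_zero_of_affineIndependent {w : Fin (n+1) → Fin n → ℝ}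
    (h : AffineIndependent ℝ w) : (augR w).det ≠ 0 := by
  intro hdet
  obtain ⟨v, hv0, hv⟩ := Matrix.exists_vecMul_eq_zero_iff.mpr hdet
  have h0 : ∑ i, v i = 0 := by
    have := congrFun hv 0
    simpa [Matrix.vecMul, dotProduct, augR] using this
  have h1 : ∑ i, v i • w i = 0 := by
    funext k
    have := congrFun hv k.succ
    simpa [Matrix.vecMul, dotProduct, augR, Finset.sum_apply] using this
  have := affineIndependent_iff.mp h Finset.univ v h0 h1
  exact hv0 (funext fun i => this i (Finset.mem_univ i))

lemma core (hn : 2 ≤ n) {K : Set (Fin n → ℝ)} (hK : Convex ℝ K)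
    (x : Fin n → ℝ) (hx : x ∈ latticePoints n) :
    ∀ d : ℕ, ∀ W : Fin (n+1) → Fin n → ℤ,
      (augZ W).det.natAbs = d → (augZ W).det ≠ 0 →
      (∀ i, (fun k => ((W i k : ℤ) : ℝ)) ∈ K) →
      ∀ lam : Fin (n+1) → ℝ, (∀ i, 0 ≤ lam i) → (∑ i, lam i) = (n : ℝ) →
      x = (∑ i, lam i • (fun k => ((W i k : ℤ) : ℝ))) →
      x ∈ ((((n - 1 : ℕ) : ℝ)) • K) ∩ latticePoints n + (K ∩ latticePoints n) := by
  intro d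
  induction d using Nat.strong_induction_on with
  | _ d IH =>
  intro W hd hdet hWK lam hlam0 hlamsum hxeq
  classical
  set w : Fin (n+1) → Fin n → ℝ := fun i k => ((W i k : ℤ) : ℝ) with hwdef
  have hwK : ∀ i, w i ∈ K := hWK
  have hwL : ∀ i, w i ∈ latticePoints n := fun i k => ⟨W i k, rfl⟩
  have hxw : x = ∑ i, lam i • w i := hxeq
  by_cases hA : ∃ i, 1 ≤ lam i
  · obtain ⟨i₀, hi₀⟩ := hA
    refine step_finish hn hK w hwK (fun i => lam i - if i = i₀ then 1 else 0)
      (fun i => ?_) ?_ hx ⟨hwK i₀, hwL i₀⟩ ?_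
    · rcases eq_or_ne i i₀ with h|h
      · subst h; simpa using hi₀
      · simpa [h] using hlam0 i
    · have h1 : ∑ i, (lam i - if i = i₀ then 1 else 0) = (∑ i, lam i) - 1 := by
        rw [Finset.sum_sub_distrib]
        simp
      rw [h1, hlamsum, Nat.cast_sub (by omega : 1 ≤ n)]
      simp
    · have h2 : ∑ i, (lam i - if i = i₀ then 1 else 0) • w i
          = (∑ i, lam i • w i) - w i₀ := by
        simp only [sub_smul, ite_smul, one_smul, zero_smul, Finset.sum_sub_distrib,
          Finset.sum_ite_eq', Finset.mem_univ, if_true]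
      rw [h2, ← hxw]
      abel
  · push_neg at hA
    have hlampos : ∀ i, 0 < lam i := by
      intro i
      have hne : (Finset.univ.erase i).Nonempty := by
        rw [← Finset.card_pos, Finset.card_erase_of_mem (Finset.mem_univ i), Finset.card_univ,
          Fintype.card_fin]
        omega
      have hlt : ∑ j ∈ Finset.univ.erase i, lam j < ∑ j ∈ Finset.univ.erase i, (1 : ℝ) :=
        Finset.sum_lt_sum_of_nonempty hne (fun j _ => hA j)
      have hcard : ∑ j ∈ Finset.univ.erase i, (1 : ℝ) = n := by
        rw [Finset.sum_const, Finset.card_erase_of_mem (Finset.mem_univ i), Finset.card_univ,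
          Fintype.card_fin]
        simp
      have hsplit : lam i + ∑ j ∈ Finset.univ.erase i, lam j = (n : ℝ) :=
        (Finset.add_sum_erase _ lam (Finset.mem_univ i)).trans hlamsum
      linarith
    set μ : Fin (n+1) → ℝ := fun i => 1 - lam i with hμdef
    have hμpos : ∀ i, 0 < μ i := fun i => by simpa [hμdef] using hA i
    have hμlt : ∀ i, μ i < 1 := fun i => by simpa [hμdef] using hlampos i
    have hμsum : (∑ i, μ i) = 1 := by
      simp only [hμdef, Finset.sum_sub_distrib, Finset.sum_const, Finset.card_univ,
        Fintype.card_fin, nsmul_eq_mul, mul_one, hlamsum]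
      push_cast
      ring
    set y : Fin n → ℝ := ∑ i, μ i • w i with hydef
    have hyK : y ∈ K := hK.sum_mem (fun i _ => (hμpos i).le) hμsum (fun i _ => hwK i)
    have hyL : y ∈ latticePoints n := by
      have h3 : y = (∑ i, w i) - ∑ i, lam i • w i := by
        rw [hydef]
        simp [hμdef, sub_smul, one_smul, Finset.sum_sub_distrib]
      rw [← hxw] at h3
      rw [h3]
      exact lat_sub (lat_sum _ _ fun i _ => hwL i) hx
    obtain ⟨j, -, hj⟩ := Finset.exists_min_image Finset.univ (fun i => lam i / μ i)
      ⟨0, Finset.mem_univ 0⟩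
    set t := lam j / μ j with htdef
    have htμ : t * μ j = lam j := div_mul_cancel₀ _ (hμpos j).ne'
    have ht0 : 0 ≤ t := div_nonneg (hlam0 j) (hμpos j).le
    have htle : ∀ i, t * μ i ≤ lam i := by
      intro i
      have h4 := hj i (Finset.mem_univ i)
      calc t * μ i ≤ (lam i / μ i) * μ i := by
            apply mul_le_mul_of_nonneg_right h4 (hμpos i).le
        _ = lam i := div_mul_cancel₀ _ (hμpos i).ne'
    by_cases htl : 1 ≤ t
    · refine step_finish hn hK w hwK (fun i => lam i - μ i) (fun i => ?_) ?_ hx ⟨hyK, hyL⟩ ?_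
      · have h5 := htle i
        have h6 : μ i ≤ t * μ i := le_mul_of_one_le_left (hμpos i).le htl
        show (0:ℝ) ≤ lam i - μ i
        linarith
      · rw [Finset.sum_sub_distrib, hlamsum, hμsum, Nat.cast_sub (by omega : 1 ≤ n)]
        simp
      · have h2 : ∑ i, (lam i - μ i) • w i = (∑ i, lam i • w i) - ∑ i, μ i • w i := by
          simp [sub_smul, Finset.sum_sub_distrib]
        rw [h2, ← hxw, ← hydef]
        abel
    · push_neg at htl
      choose Y hY using hyL
      set W' : Fin (n+1) → Fin n → ℤ := Function.update W j Y with hW'def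
      have hw' : (fun i k => ((W' i k : ℤ) : ℝ)) = Function.update w j y := by
        funext i k
        rcases eq_or_ne i j with h|h
        · subst h
          simp only [hW'def, Function.update_self]
          exact (hY k).symm
        · simp [hW'def, Function.update_of_ne h, hwdef]
      have hdetR : (augR (Function.update w j y)).det = μ j * (augR w).det := by
        rw [hydef]
        exact augR_det_update w j μ hμsum
      have hcastW : ((augZ W).det : ℝ) = (augR w).det := augZ_det_cast W
      have hcastW' : ((augZ W').det : ℝ) = (augR (Function.update w j y)).det := by
        rw [augZ_det_cast W', hw']
      have hdet' : ((augZ W').det : ℝ) = μ j * ((augZ W).det : ℝ) := by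
        rw [hcastW', hdetR, hcastW]
      have hne' : (augZ W').det ≠ 0 := by
        intro h
        rw [h] at hdet'
        simp only [Int.cast_zero] at hdet'
        rcases mul_eq_zero.mp hdet'.symm with h1|h1
        · exact (hμpos j).ne' h1
        · exact hdet (by exact_mod_cast h1)
      have hltd : (augZ W').det.natAbs < d := by
        have habs : |((augZ W').det : ℝ)| < |((augZ W).det : ℝ)| := by
          rw [hdet', abs_mul, abs_of_pos (hμpos j)]
          have hpos : 0 < |((augZ W).det : ℝ)| := abs_pos.2 (by exact_mod_cast hdet)
          exact mul_lt_of_lt_one_left hpos (hμlt j)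
        rw [← hd]
        have h6 : (((augZ W').det.natAbs : ℕ) : ℝ) < (((augZ W).det.natAbs : ℕ) : ℝ) := by
          rw [Nat.cast_natAbs, Nat.cast_natAbs, Int.cast_abs, Int.cast_abs]
          exact habs
        exact_mod_cast h6
      set lam' : Fin (n+1) → ℝ := fun i => if i = j then t else lam i - t * μ i with hlam'def
      have hlam'0 : ∀ i, 0 ≤ lam' i := by
        intro i
        rcases eq_or_ne i j with h|h
        · simp [hlam'def, h, ht0]
        · simp only [hlam'def, h, if_neg h]
          linarith [htle i]
      have hlam'sum : ∑ i, lam' i = (n : ℝ) := by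
        rw [← Finset.add_sum_erase _ lam' (Finset.mem_univ j)]
        have h1 : ∑ i ∈ Finset.univ.erase j, lam' i
            = ∑ i ∈ Finset.univ.erase j, (lam i - t * μ i) := by
          refine Finset.sum_congr rfl fun i hi => ?_
          have h7 : i ≠ j := (Finset.mem_erase.mp hi).1
          simp [hlam'def, h7]
        have h2 : ∑ i ∈ Finset.univ.erase j, lam i = (n : ℝ) - lam j := by
          rw [Finset.sum_erase_eq_sub (Finset.mem_univ j), hlamsum]
        have h3 : ∑ i ∈ Finset.univ.erase j, (t * μ i) = t * (1 - μ j) := by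
          rw [← Finset.mul_sum, Finset.sum_erase_eq_sub (Finset.mem_univ j), hμsum]
        have h4 : t * (1 - μ j) = t - lam j := by rw [mul_sub, mul_one, htμ]
        have h5 : lam' j = t := by simp [hlam'def]
        rw [h1, Finset.sum_sub_distrib, h2, h3, h4, h5]
        ring
      have hty : t • y = ∑ i, (t * μ i) • w i := by
        rw [hydef, Finset.smul_sum]
        simp [smul_smul]
      have hFeq : ∀ i, lam' i • Function.update w j y i
          = Function.update (fun i => (lam i - t * μ i) • w i) j (t • y) i := by
        intro i
        rcases eq_or_ne i j with h|h
        · subst h; simp [hlam'def]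
        · simp [hlam'def, h, Function.update_of_ne h]
      have hxU : x = ∑ i, lam' i • Function.update w j y i := by
        have e1 : ∑ i, lam' i • Function.update w j y i
            = t • y + ∑ i ∈ Finset.univ.erase j, (lam i - t * μ i) • w i := by
          rw [Finset.sum_congr rfl (fun i _ => hFeq i),
            Finset.sum_update_of_mem (Finset.mem_univ j), Finset.sdiff_singleton_eq_erase]
        have e2 : t • y = (t * μ j) • w j + ∑ i ∈ Finset.univ.erase j, (t * μ i) • w i := by
          rw [hty, ← Finset.add_sum_erase _ (fun i => (t * μ i) • w i) (Finset.mem_univ j)]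
        have e3 : ∑ i ∈ Finset.univ.erase j, (lam i - t * μ i) • w i
            + ∑ i ∈ Finset.univ.erase j, (t * μ i) • w i
            = ∑ i ∈ Finset.univ.erase j, lam i • w i := by
          rw [← Finset.sum_add_distrib]
          refine Finset.sum_congr rfl fun i _ => ?_
          rw [← add_smul]
          ring_nf
        rw [hxw, ← Finset.add_sum_erase _ (fun i => lam i • w i) (Finset.mem_univ j)]
        rw [e1, e2, htμ]
        rw [add_assoc, add_comm (∑ i ∈ Finset.univ.erase j, (t * μ i) • w i)
          (∑ i ∈ Finset.univ.erase j, (lam i - t * μ i) • w i), e3]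
      have hx'eq : x = ∑ i, lam' i • (fun k => ((W' i k : ℤ) : ℝ)) := by
        rw [hxU]
        refine Finset.sum_congr rfl fun i _ => ?_
        rw [congrFun hw' i]
      have hW'K : ∀ i, (fun k => ((W' i k : ℤ) : ℝ)) ∈ K := by
        intro i
        rw [congrFun hw' i]
        rcases eq_or_ne i j with h|h
        · subst h; rw [Function.update_self]; exact hyK
        · rw [Function.update_of_ne h]; exact hwK i
      exact IH _ hltd W' rfl hne' hW'K lam' hlam'0 hlam'sum hx'eq

end LPeel

open LPeel in
/-- Let `K` be a lattice polytope in `ℝ^n`.  Then every lattice point `x ∈ nK` is of the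
form `x₁ + z` with `x₁ ∈ K ∩ ℤ^n` and `z` a lattice point of `(n-1)K`; that is,
`nK ∩ ℤ^n = ((n-1)K ∩ ℤ^n) + (K ∩ ℤ^n)` as a Minkowski sum. -/
theorem lattice_polytope_peel_one (n : ℕ)
    (K : Set (Fin n → ℝ)) (hK : IsLatticePolytope K) :
    ((n : ℝ) • K) ∩ latticePoints n =
      (((n - 1 : ℕ) : ℝ) • K) ∩ latticePoints n + (K ∩ latticePoints n) := by
  classical
  obtain ⟨S, hSfin, hSne, hSlat, hKS⟩ := hK
  have hKconv : Convex ℝ K := hKS ▸ convex_convexHull ℝ S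
  have hSK : S ⊆ K := hKS ▸ subset_convexHull ℝ S
  have hKne : K.Nonempty := hSne.mono hSK
  obtain ⟨k0, hk0⟩ := hKne
  rcases Nat.lt_or_ge n 2 with hn | hn
  · interval_cases n
    · -- n = 0
      have h0 : ∀ (u v : Fin 0 → ℝ), u = v := fun u v => funext (fun i => i.elim0)
      have hbig : ∀ (c : ℝ) (z : Fin 0 → ℝ), z ∈ c • K :=
        fun c z => Set.mem_smul_set.mpr ⟨k0, hk0, h0 _ _⟩
      apply Set.Subset.antisymm
      · intro x _
        exact Set.mem_add.mpr ⟨x, ⟨hbig _ _, fun i => i.elim0⟩,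
          x, ⟨h0 x k0 ▸ hk0, fun i => i.elim0⟩, h0 _ _⟩
      · intro x _
        exact ⟨hbig _ _, fun i => i.elim0⟩
    · -- n = 1
      have h1 : ((1 : ℕ) : ℝ) • K = K := by
        rw [Nat.cast_one]
        exact one_smul ℝ K
      have h0 : (((1 - 1 : ℕ) : ℝ)) • K ∩ latticePoints 1 = 0 := by
        rw [show (((1 - 1 : ℕ) : ℝ)) = (0 : ℝ) by norm_num, Set.zero_smul_set ⟨k0, hk0⟩]
        refine Set.Subset.antisymm (fun z hz => hz.1) (fun z hz => ⟨hz, ?_⟩)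
        have hz0 : z = 0 := hz
        rw [hz0]
        exact lat_zero
      rw [h1, h0, zero_add]
  · -- n ≥ 2
    apply Set.Subset.antisymm
    · rintro x ⟨hxK, hxL⟩
      obtain ⟨y, hyK, hyx⟩ := Set.mem_smul_set.mp hxK
      rw [hKS, convexHull_eq_union] at hyK
      simp only [Set.mem_iUnion] at hyK
      obtain ⟨tf, htS, hai, hyt⟩ := hyK
      rw [Finset.convexHull_eq] at hyt
      obtain ⟨g, hg0, hg1, hgy⟩ := hyt
      rw [Finset.centerMass_eq_of_sum_1 _ _ hg1] at hgy
      simp only [id] at hgy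
      have hcardle : tf.card ≤ n + 1 := by
        have hc1 := hai.card_le_finrank_succ
        have h2 : Module.finrank ℝ (vectorSpan ℝ (Set.range ((↑) : tf → (Fin n → ℝ)))) ≤ n := by
          have h3 := Submodule.finrank_le (vectorSpan ℝ (Set.range ((↑) : tf → (Fin n → ℝ))))
          simpa [Module.finrank_fin_fun] using h3
        have h4 : Fintype.card ↥tf = tf.card := Fintype.card_coe tf
        omega
      have htne : tf.Nonempty := Finset.nonempty_of_sum_ne_zero (by rw [hg1]; norm_num)
      by_cases hcard : tf.card = n + 1
      · -- full-dimensional simplex case: use `core`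
        have hce : Fintype.card ↥tf = n + 1 := by rw [Fintype.card_coe]; exact hcard
        have e : ↥tf ≃ Fin (n+1) := Fintype.equivFinOfCardEq hce
        set wv : Fin (n+1) → Fin n → ℝ := fun i => ((e.symm i : ↥tf) : Fin n → ℝ) with hwv
        have haiw : AffineIndependent ℝ wv := (affineIndependent_equiv e.symm).mpr hai
        have hwvS : ∀ i, wv i ∈ S := fun i => htS (e.symm i).2
        have hwvlat : ∀ i, wv i ∈ latticePoints n := fun i => hSlat (hwvS i)
        have hwvlat' : ∀ i k, ∃ z : ℤ, wv i k = (z : ℝ) := fun i k => hwvlat i k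
        choose W hW using hwvlat'
        have hwW : (fun i k => ((W i k : ℤ) : ℝ)) = wv := funext fun i => funext fun k => (hW i k).symm
        have hdet : (augZ W).det ≠ 0 := by
          intro h
          have h1 : (augR (fun i k => ((W i k : ℤ) : ℝ))).det = 0 := by
            rw [← augZ_det_cast, h, Int.cast_zero]
          rw [hwW] at h1
          exact det_ne_zero_of_affineIndependent haiw h1
        have hWK : ∀ i, (fun k => ((W i k : ℤ) : ℝ)) ∈ K := by
          intro i
          rw [congrFun hwW i]
          exact hSK (hwvS i)
        have hsum1 : ∑ i, g (wv i) = 1 := by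
          calc ∑ i, g (wv i) = ∑ a : ↥tf, g ↑a := Equiv.sum_comp e.symm (fun a : ↥tf => g ↑a)
            _ = ∑ v ∈ tf, g v := Finset.sum_coe_sort tf g
            _ = 1 := hg1
        have hlamsum : ∑ i, ((n : ℝ) * g (wv i)) = (n : ℝ) := by
          rw [← Finset.mul_sum, hsum1, mul_one]
        have hxeq : x = ∑ i, ((n : ℝ) * g (wv i)) • (fun k => ((W i k : ℤ) : ℝ)) := by
          have h5 : ∑ i, ((n : ℝ) * g (wv i)) • (fun k => ((W i k : ℤ) : ℝ))
              = ∑ i, ((n : ℝ) * g (wv i)) • wv i := by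
            refine Finset.sum_congr rfl fun i _ => ?_
            rw [congrFun hwW i]
          have h6 : ∑ i, ((n : ℝ) * g (wv i)) • wv i
              = (n : ℝ) • ∑ a : ↥tf, g ↑a • (a : Fin n → ℝ) := by
            calc ∑ i, ((n : ℝ) * g (wv i)) • wv i
                = ∑ i, (n : ℝ) • (g (wv i) • wv i) := by
                  refine Finset.sum_congr rfl fun i _ => ?_
                  rw [smul_smul]
              _ = ∑ a : ↥tf, (n : ℝ) • (g ↑a • (a : Fin n → ℝ)) :=
                  Equiv.sum_comp e.symm (fun a : ↥tf => (n : ℝ) • (g ↑a • (a : Fin n → ℝ)))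
              _ = (n : ℝ) • ∑ a : ↥tf, g ↑a • (a : Fin n → ℝ) := (Finset.smul_sum).symm
          have h7 : ∑ a : ↥tf, g ↑a • (a : Fin n → ℝ) = y := by
            rw [Finset.sum_coe_sort tf (fun v => g v • v)]
            exact hgy
          rw [h5, h6, h7, hyx]
        exact core hn hKconv x hxL _ W rfl hdet hWK _
          (fun i => mul_nonneg (Nat.cast_nonneg n) (hg0 _ (e.symm i).2)) hlamsum hxeq
      · -- small case: tf.card ≤ n, peel a vertex directly
        have hcardn : tf.card ≤ n := by omega
        have hex : ∃ v ∈ tf, 1 ≤ (n : ℝ) * g v := by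
          by_contra hcon
          push_neg at hcon
          have hlt : ∑ v ∈ tf, (n : ℝ) * g v < ∑ v ∈ tf, (1 : ℝ) :=
            Finset.sum_lt_sum_of_nonempty htne hcon
          rw [← Finset.mul_sum, hg1, mul_one, Finset.sum_const, nsmul_eq_mul, mul_one] at hlt
          have : (n : ℝ) < (tf.card : ℝ) := hlt
          have : n < tf.card := by exact_mod_cast this
          omega
        obtain ⟨v₀, hv₀tf, hv₀⟩ := hex
        set i₀ : ↥tf := ⟨v₀, hv₀tf⟩ with hi₀
        have hxsum : x = ∑ i : ↥tf, ((n : ℝ) * g ↑i) • (i : Fin n → ℝ) := by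
          have c1 : ∑ i : ↥tf, ((n : ℝ) * g ↑i) • (i : Fin n → ℝ)
              = ∑ i : ↥tf, (n : ℝ) • (g ↑i • (i : Fin n → ℝ)) := by
            refine Finset.sum_congr rfl fun i _ => ?_
            rw [smul_smul]
          have c2 : ∑ i : ↥tf, (n : ℝ) • (g ↑i • (i : Fin n → ℝ))
              = ∑ v ∈ tf, (n : ℝ) • (g v • v) :=
            Finset.sum_coe_sort tf (fun v => (n:ℝ) • (g v • v))
          rw [c1, c2, ← Finset.smul_sum, hgy, hyx]
        refine step_finish hn hKconv (fun i : ↥tf => (i : Fin n → ℝ))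
          (fun i => hSK (htS i.2))
          (fun i : ↥tf => (n : ℝ) * g ↑i - if i = i₀ then 1 else 0)
          (fun i => ?_) ?_ hxL ⟨hSK (htS hv₀tf), hSlat (htS hv₀tf)⟩ ?_
        · rcases eq_or_ne i i₀ with h|h
          · subst h
            simpa using hv₀
          · simp only [if_neg h, sub_zero]
            exact mul_nonneg (Nat.cast_nonneg n) (hg0 _ i.2)
        · rw [Finset.sum_sub_distrib]
          have hs1 : ∑ i : ↥tf, ((n : ℝ) * g ↑i) = (n : ℝ) := by
            rw [Finset.sum_coe_sort tf (fun v => (n:ℝ) * g v), ← Finset.mul_sum, hg1, mul_one]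
          have hs2 : ∑ i : ↥tf, (if i = i₀ then (1:ℝ) else 0) = 1 := by
            simp
          rw [hs1, hs2, Nat.cast_sub (by omega : 1 ≤ n)]
          simp
        · have h2 : ∑ i : ↥tf, ((n : ℝ) * g ↑i - if i = i₀ then 1 else 0) • (i : Fin n → ℝ)
              = (∑ i : ↥tf, ((n : ℝ) * g ↑i) • (i : Fin n → ℝ)) - v₀ := by
            simp only [sub_smul, ite_smul, one_smul, zero_smul, Finset.sum_sub_distrib,
              Finset.sum_ite_eq', Finset.mem_univ, if_true]
            rfl
          rw [h2, ← hxsum]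
          abel
    · rintro x hx
      obtain ⟨a, ⟨haK, haL⟩, b, ⟨hbK, hbL⟩, rfl⟩ := Set.mem_add.mp hx
      constructor
      · have hsm : ((n : ℝ)) • K = (((n - 1 : ℕ) : ℝ)) • K + (1 : ℝ) • K := by
          rw [← Convex.add_smul hKconv (Nat.cast_nonneg _) zero_le_one]
          congr 1
          rw [Nat.cast_sub (by omega : 1 ≤ n)]
          ring
        rw [hsm]
        exact Set.add_mem_add haK (Set.mem_smul_set.mpr ⟨b, hbK, one_smul ℝ b⟩)
      · exact lat_add haL hbL
end

section
/- Let K be a lattice polytope in ℝ^n. If mK ∩ ℤ^n = m·(K ∩ ℤ^n) holds for every positive integer m ≤ n−1, then mK ∩ ℤ^n = m·(K ∩ ℤ^n) holds for every positive integer m; i.e., K is solid. -/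
open Pointwise

lemma lat_sub {n : ℕ} {a b : Fin n → ℝ} (ha : a ∈ latticePoints n) (hb : b ∈ latticePoints n) :
    a - b ∈ latticePoints n := by
  intro i
  obtain ⟨x, hx⟩ := ha i
  obtain ⟨y, hy⟩ := hb i
  exact ⟨x - y, by simp [Pi.sub_apply, hx, hy]⟩

lemma lat_add {n : ℕ} {a b : Fin n → ℝ} (ha : a ∈ latticePoints n) (hb : b ∈ latticePoints n) :
    a + b ∈ latticePoints n := by
  intro i
  obtain ⟨x, hx⟩ := ha i
  obtain ⟨y, hy⟩ := hb i
  exact ⟨x + y, by simp [Pi.add_apply, hx, hy]⟩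

lemma lat_sum {n : ℕ} {ι : Type*} (s : Finset ι) (f : ι → Fin n → ℝ)
    (hf : ∀ i ∈ s, f i ∈ latticePoints n) : (∑ i ∈ s, f i) ∈ latticePoints n := by
  classical
  induction s using Finset.induction_on with
  | empty => exact fun i => ⟨0, by simp⟩
  | insert a s hns ih =>
      rw [Finset.sum_insert hns]
      exact lat_add (hf a (Finset.mem_insert_self a s))
        (ih fun i hi => hf i (Finset.mem_insert_of_mem hi))

lemma mem_nsmulSet_succ {n : ℕ} {A : Set (Fin n → ℝ)} {a b : Fin n → ℝ} {k : ℕ}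
    (ha : a ∈ A) (hb : b ∈ nsmulSet k A) : a + b ∈ nsmulSet (k + 1) A :=
  Set.add_mem_add ha hb

lemma combo_mem_smul {n : ℕ} {K : Set (Fin n → ℝ)} (hK : Convex ℝ K) {ι : Type*} [Fintype ι]
    (v : ι → Fin n → ℝ) (hv : ∀ i, v i ∈ K) (μ : ι → ℝ) (hμ : ∀ i, 0 ≤ μ i)
    {m : ℝ} (hm : 0 < m) (hsum : ∑ i, μ i = m) :
    (∑ i, μ i • v i) ∈ m • K := by
  have hmem : (∑ i, (μ i / m) • v i) ∈ K := by
    apply hK.sum_mem (fun i _ => div_nonneg (hμ i) hm.le)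
    · rw [← Finset.sum_div, hsum, div_self hm.ne']
    · exact fun i _ => hv i
  refine ⟨_, hmem, ?_⟩
  show m • (∑ i, (μ i / m) • v i) = _
  rw [Finset.smul_sum]
  congr 1
  funext i
  rw [smul_smul, mul_div_cancel₀ _ hm.ne']

/-- Reverse inclusion: `m`-fold sums of lattice points of `K` lie in `mK ∩ ℤ^n`. -/
lemma nsmulSet_subset_smul {n : ℕ} {K : Set (Fin n → ℝ)} (hK : Convex ℝ K) :
    ∀ m : ℕ, 0 < m → nsmulSet m (K ∩ latticePoints n) ⊆ ((m : ℝ) • K) ∩ latticePoints n := by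
  intro m
  induction m with
  | zero => omega
  | succ k ih =>
      intro _
      rintro z ⟨a, ha, b, hb, rfl⟩
      rcases Nat.eq_zero_or_pos k with hk | hk
      · subst hk
        simp only [nsmulSet] at hb
        obtain rfl : b = 0 := hb
        refine ⟨⟨a, ha.1, ?_⟩, by simpa using ha.2⟩
        push_cast
        rw [one_smul]
        simp
      · obtain ⟨⟨x, hxK, hxb⟩, hbl⟩ := ih hk hb
        have haK := ha.1
        refine ⟨⟨(1 / (k + 1 : ℝ)) • a + ((k : ℝ) / (k + 1 : ℝ)) • x, ?_, ?_⟩, ?_⟩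
        · apply hK haK hxK (by positivity) (by positivity)
          field_simp
          ring
        · show ((k + 1 : ℕ) : ℝ) • _ = a + b
          rw [smul_add, smul_smul, smul_smul, ← hxb]
          have h1 : ((k + 1 : ℕ) : ℝ) * (1 / (k + 1 : ℝ)) = 1 := by
            push_cast; field_simp
          have h2 : ((k + 1 : ℕ) : ℝ) * ((k : ℝ) / (k + 1 : ℝ)) = (k : ℝ) := by
            push_cast; field_simp
          rw [h1, h2, one_smul]
        · exact lat_add ha.2 hbl

/-- The `(n+1) × (n+1)` matrix with rows `(v i, 1)`. -/
noncomputable def bmat {n : ℕ} (v : Fin (n + 1) → Fin n → ℝ) :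
    Matrix (Fin (n + 1)) (Fin (n + 1)) ℝ :=
  Matrix.of fun i => Fin.snoc (v i) 1

lemma bmat_int {n : ℕ} (v : Fin (n + 1) → Fin n → ℝ) (hv : ∀ i, v i ∈ latticePoints n) :
    ∃ d : ℤ, (bmat v).det = (d : ℝ) := by
  classical
  have hentry : ∀ i j, ∃ z : ℤ, bmat v i j = (z : ℝ) := by
    intro i j
    refine Fin.lastCases ?_ (fun j' => ?_) j
    · exact ⟨1, by simp [bmat]⟩
    · obtain ⟨z, hz⟩ := hv i j'
      exact ⟨z, by simp [bmat, hz]⟩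
  choose B hB using hentry
  refine ⟨(Matrix.of B).det, ?_⟩
  have : bmat v = (Matrix.of B).map (Int.cast : ℤ → ℝ) := by
    ext i j
    simp [Matrix.map_apply, hB i j]
  rw [this]
  exact (RingHom.map_det (Int.castRingHom ℝ) (Matrix.of B)).symm

lemma bmat_det_ne_zero {n : ℕ} {v : Fin (n + 1) → Fin n → ℝ}
    (hv : AffineIndependent ℝ v) : (bmat v).det ≠ 0 := by
  classical
  intro hdet
  obtain ⟨g, hg0, hg⟩ := Matrix.exists_vecMul_eq_zero_iff.mpr hdet
  have hgj : ∀ j, ∑ i, g i * bmat v i j = 0 := by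
    intro j
    have := congrFun hg j
    simpa [Matrix.vecMul, dotProduct] using this
  have hsum : ∑ i, g i = 0 := by
    have := hgj (Fin.last n)
    simpa [bmat] using this
  have hcomb : ∑ i, g i • v i = 0 := by
    funext j
    have := hgj (Fin.castSucc j)
    simpa [bmat, Fin.snoc_castSucc] using this
  have := affineIndependent_iff.mp hv Finset.univ g (by simpa using hsum) (by simpa using hcomb)
  exact hg0 (funext fun i => this i (Finset.mem_univ i))

lemma sum_update_smul' {n : ℕ} {ι : Type*} [Fintype ι] [DecidableEq ι] (μ : ι → ℝ)
    (v : ι → Fin n → ℝ) (j : ι) (b : ℝ) :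
    ∑ i, Function.update μ j b i • v i = (∑ i, μ i • v i) + (b - μ j) • v j := by
  have hterm : ∀ i, Function.update μ j b i • v i
      = μ i • v i + (if i = j then (b - μ j) • v j else 0) := by
    intro i
    by_cases h : i = j
    · subst h
      rw [Function.update_self, if_pos rfl, ← add_smul]
      ring_nf
    · rw [Function.update_of_ne h, if_neg h, add_zero]
  rw [Finset.sum_congr rfl fun i _ => hterm i, Finset.sum_add_distrib]
  congr 1
  rw [Finset.sum_ite_eq' Finset.univ j, if_pos (Finset.mem_univ j)]

lemma core (n : ℕ) (hn : 2 ≤ n) (K : Set (Fin n → ℝ)) (hconv : Convex ℝ K)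
    (hstep : (((n - 1 : ℕ) : ℝ) • K) ∩ latticePoints n
      = nsmulSet (n - 1) (K ∩ latticePoints n)) :
    ∀ N : ℕ, ∀ v : Fin (n + 1) → Fin n → ℝ, ∀ μ : Fin (n + 1) → ℝ,
      (∀ i, v i ∈ K) → (∀ i, v i ∈ latticePoints n) → (∀ i, 0 ≤ μ i) →
      (∑ i, μ i = n) → (∑ i, μ i • v i) ∈ latticePoints n →
      ∀ d : ℤ, (bmat v).det = (d : ℝ) → d ≠ 0 → d.natAbs ≤ N →
      (∑ i, μ i • v i) ∈ nsmulSet n (K ∩ latticePoints n) := by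
  classical
  intro N
  induction N using Nat.strong_induction_on with | _ N IH => ?_
  intro v μ hvK hvL hμ0 hμsum hzL d hdet hd0 hdN
  set z := ∑ i, μ i • v i with hzdef
  -- a helper: if z - u ∈ (n-1)K for a lattice point u of K, we are done
  have key : ∀ u : Fin n → ℝ, u ∈ K → u ∈ latticePoints n →
      z - u ∈ (((n - 1 : ℕ) : ℝ)) • K → z ∈ nsmulSet n (K ∩ latticePoints n) := by
    intro u huK huL hmem
    have hzu : z - u ∈ nsmulSet (n - 1) (K ∩ latticePoints n) := by
      rw [← hstep]
      exact ⟨hmem, lat_sub hzL huL⟩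
    have hmem2 := mem_nsmulSet_succ (A := K ∩ latticePoints n) ⟨huK, huL⟩ hzu
    have hn1 : n - 1 + 1 = n := by omega
    rw [hn1] at hmem2
    simpa using hmem2
  have hn1R : (0 : ℝ) < ((n - 1 : ℕ) : ℝ) := by
    have : 1 ≤ n - 1 := by omega
    exact_mod_cast Nat.lt_of_lt_of_le Nat.zero_lt_one this
  have hcastn1 : ((n - 1 : ℕ) : ℝ) = (n : ℝ) - 1 := by
    have : 1 ≤ n := by omega
    push_cast [Nat.cast_sub this]
    ring
  by_cases hex : ∃ j, 1 ≤ μ j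
  · obtain ⟨j, hj⟩ := hex
    apply key (v j) (hvK j) (hvL j)
    have hrepr : z - v j = ∑ i, Function.update μ j (μ j - 1) i • v i := by
      rw [sum_update_smul' μ v j (μ j - 1)]
      rw [← hzdef]
      have : (μ j - 1 - μ j) = -1 := by ring
      rw [this, neg_one_smul]
      abel
    rw [hrepr]
    refine combo_mem_smul hconv v hvK _ ?_ hn1R ?_
    · intro i
      by_cases h : i = j
      · subst h; rw [Function.update_self]; linarith
      · rw [Function.update_of_ne h]; exact hμ0 i
    · rw [Finset.sum_update_of_mem (Finset.mem_univ j), Finset.sdiff_singleton_eq_erase]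
      rw [← Finset.add_sum_erase _ μ (Finset.mem_univ j)] at hμsum
      rw [hcastn1]
      linarith
  · push_neg at hex
    -- all μ i < 1, hence all positive
    have hpos : ∀ j, 0 < μ j := by
      intro j
      have herase : ∑ i ∈ Finset.univ.erase j, μ i < n := by
        have hcard : (Finset.univ.erase j).card = n := by
          rw [Finset.card_erase_of_mem (Finset.mem_univ j), Finset.card_univ, Fintype.card_fin]
          omega
        have hne : (Finset.univ.erase j).Nonempty := by
          rw [← Finset.card_pos, hcard]; omega
        calc ∑ i ∈ Finset.univ.erase j, μ i
            < ∑ _i ∈ Finset.univ.erase j, (1 : ℝ) :=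
              Finset.sum_lt_sum_of_nonempty hne (fun i _ => hex i)
          _ = n := by rw [Finset.sum_const, hcard]; simp
      have := Finset.add_sum_erase _ μ (Finset.mem_univ j)
      rw [hμsum] at this
      linarith
    set c : Fin (n + 1) → ℝ := fun i => 1 - μ i with hcdef
    have hcsum : ∑ i, c i = 1 := by
      rw [hcdef]
      rw [Finset.sum_sub_distrib, hμsum, Finset.sum_const, Finset.card_univ, Fintype.card_fin]
      push_cast
      ring
    set w : Fin n → ℝ := ∑ i, c i • v i with hwdef
    have hwK : w ∈ K := by
      apply hconv.sum_mem (fun i _ => by simp [hcdef]; linarith [hex i]) hcsum (fun i _ => hvK i)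
    have hwz : w = (∑ i, v i) - z := by
      rw [hwdef, hzdef, ← Finset.sum_sub_distrib]
      congr 1
      funext i
      rw [hcdef]
      rw [sub_smul, one_smul]
    have hwL : w ∈ latticePoints n := by
      rw [hwz]
      exact lat_sub (lat_sum Finset.univ v (fun i _ => hvL i)) hzL
    obtain ⟨i0, -, hi0⟩ := Finset.exists_min_image Finset.univ μ ⟨0, Finset.mem_univ 0⟩
    simp only [Finset.mem_univ, forall_const] at hi0
    by_cases hhalf : 1 / 2 ≤ μ i0
    · apply key w hwK hwL
      have hrepr : z - w = ∑ i, (2 * μ i - 1) • v i := by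
        rw [hzdef, hwdef, ← Finset.sum_sub_distrib]
        congr 1
        funext i
        rw [hcdef, ← sub_smul]
        congr 1
        ring
      rw [hrepr]
      refine combo_mem_smul hconv v hvK _ ?_ hn1R ?_
      · intro i
        have := hi0 i
        linarith
      · have hsum2 : ∑ i, (2 * μ i - 1) = 2 * (n : ℝ) - (n + 1) := by
          rw [Finset.sum_sub_distrib, ← Finset.mul_sum, hμsum, Finset.sum_const,
            Finset.card_univ, Fintype.card_fin]
          push_cast
          ring
        rw [hsum2, hcastn1]
        ring
    · push_neg at hhalf
      set α : ℝ := μ i0 / (1 - μ i0) with hαdef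
      have h1m : (0 : ℝ) < 1 - μ i0 := by linarith
      have hα0 : 0 < α := div_pos (hpos i0) h1m
      have hαlt : α < 1 := (div_lt_one h1m).mpr (by linarith)
      have hid : μ i0 * (1 + α) - α = 0 := by
        rw [hαdef]
        field_simp
        ring
      set v' := Function.update v i0 w with hv'def
      set μ' := Function.update (fun i => μ i * (1 + α) - α) i0 α with hμ'def
      have hv'K : ∀ i, v' i ∈ K := by
        intro i
        by_cases h : i = i0
        · subst h; rw [hv'def, Function.update_self]; exact hwK
        · rw [hv'def, Function.update_of_ne h]; exact hvK i
      have hv'L : ∀ i, v' i ∈ latticePoints n := by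
        intro i
        by_cases h : i = i0
        · subst h; rw [hv'def, Function.update_self]; exact hwL
        · rw [hv'def, Function.update_of_ne h]; exact hvL i
      have hμ'0 : ∀ i, 0 ≤ μ' i := by
        intro i
        by_cases h : i = i0
        · subst h; rw [hμ'def, Function.update_self]; linarith
        · rw [hμ'def, Function.update_of_ne h]
          have h1 := mul_le_mul_of_nonneg_right (hi0 i) (by linarith : (0:ℝ) ≤ 1 + α)
          linarith
      have herase : ∑ i ∈ Finset.univ.erase i0, μ i = n - μ i0 := by
        have := Finset.add_sum_erase _ μ (Finset.mem_univ i0)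
        rw [hμsum] at this
        linarith
      have hμ'sum : ∑ i, μ' i = n := by
        rw [hμ'def, Finset.sum_update_of_mem (Finset.mem_univ i0),
          Finset.sdiff_singleton_eq_erase]
        have h2 : ∑ i ∈ Finset.univ.erase i0, (μ i * (1 + α) - α)
            = ((n : ℝ) - μ i0) * (1 + α) - n * α := by
          rw [Finset.sum_sub_distrib, ← Finset.sum_mul, herase, Finset.sum_const,
            Finset.card_erase_of_mem (Finset.mem_univ i0), Finset.card_univ, Fintype.card_fin]
          simp
        rw [h2]
        nlinarith [hid]
      have hz' : ∑ i, μ' i • v' i = z := by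
        rw [← Finset.add_sum_erase _ (fun i => μ' i • v' i) (Finset.mem_univ i0)]
        have h3 : μ' i0 • v' i0 = α • w := by
          rw [hμ'def, hv'def, Function.update_self, Function.update_self]
        have h4 : ∑ i ∈ Finset.univ.erase i0, μ' i • v' i
            = ∑ i ∈ Finset.univ.erase i0, ((μ i * (1 + α) - α) • v i) := by
          apply Finset.sum_congr rfl
          intro i hi
          have hne : i ≠ i0 := Finset.ne_of_mem_erase hi
          rw [hμ'def, hv'def, Function.update_of_ne hne, Function.update_of_ne hne]
        have h5 : ∀ i, (μ i * (1 + α) - α) • v i = μ i • v i - (α * (1 - μ i)) • v i := by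
          intro i
          rw [← sub_smul]
          congr 1
          ring
        have h6 : ∑ i ∈ Finset.univ.erase i0, ((μ i * (1 + α) - α) • v i)
            = (∑ i ∈ Finset.univ.erase i0, μ i • v i)
              - ∑ i ∈ Finset.univ.erase i0, (α * (1 - μ i)) • v i := by
          rw [← Finset.sum_sub_distrib]
          exact Finset.sum_congr rfl fun i _ => h5 i
        have h7 : ∑ i ∈ Finset.univ.erase i0, μ i • v i = z - μ i0 • v i0 := by
          have := Finset.add_sum_erase _ (fun i => μ i • v i) (Finset.mem_univ i0)
          rw [← hzdef] at this
          rw [← this]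
          abel
        have h8 : α • w = ∑ i, (α * (1 - μ i)) • v i := by
          rw [hwdef, Finset.smul_sum]
          congr 1
          funext i
          rw [smul_smul, hcdef]
        have h9 : ∑ i ∈ Finset.univ.erase i0, (α * (1 - μ i)) • v i
            = α • w - (α * (1 - μ i0)) • v i0 := by
          have := Finset.add_sum_erase _ (fun i => (α * (1 - μ i)) • v i) (Finset.mem_univ i0)
          rw [← h8] at this
          rw [← this]
          abel
        have h10 : (α * (1 - μ i0)) = μ i0 := by
          rw [hαdef]
          field_simp
        rw [h3, h4, h6, h7, h9, h10]
        abel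
      -- determinant bookkeeping
      have hbmat' : bmat v' = (bmat v).updateRow i0 (∑ k, c k • bmat v k) := by
        ext i j
        by_cases h : i = i0
        · rw [h, Matrix.updateRow_self]
          show (Fin.snoc (v' i0) 1 : Fin (n+1) → ℝ) j = _
          rw [hv'def, Function.update_self]
          refine Fin.lastCases ?_ (fun j' => ?_) j
          · simp only [Fin.snoc_last]
            rw [Finset.sum_apply]
            have : ∀ k, (c k • bmat v k) (Fin.last n) = c k := by
              intro k
              simp [bmat, Pi.smul_apply]
            rw [Finset.sum_congr rfl fun k _ => this k, hcsum]
          · simp only [Fin.snoc_castSucc]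
            rw [Finset.sum_apply]
            have : ∀ k, (c k • bmat v k) (Fin.castSucc j') = c k * v k j' := by
              intro k
              simp [bmat, Pi.smul_apply]
            rw [Finset.sum_congr rfl fun k _ => this k]
            rw [hwdef, Finset.sum_apply]
            exact Finset.sum_congr rfl fun k _ => by simp
        · rw [Matrix.updateRow_ne h]
          show (Fin.snoc (v' i) 1 : Fin (n+1) → ℝ) j = (Fin.snoc (v i) 1 : Fin (n+1) → ℝ) j
          rw [hv'def, Function.update_of_ne h]
      have hdet' : (bmat v').det = (1 - μ i0) * (d : ℝ) := by
        rw [hbmat', Matrix.det_updateRow_sum (bmat v) i0 c, hdet]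
        simp [hcdef, smul_eq_mul]
      obtain ⟨d', hd'⟩ := bmat_int v' hv'L
      have hd'val : (d' : ℝ) = (1 - μ i0) * (d : ℝ) := by rw [← hd', hdet']
      have hd'0 : d' ≠ 0 := by
        intro hcon
        rw [hcon] at hd'val
        simp at hd'val
        rcases hd'val with h | h
        · linarith
        · exact hd0 (by exact_mod_cast h)
      have habs : |(d' : ℝ)| < |(d : ℝ)| := by
        rw [hd'val, abs_mul]
        have hdabs : 0 < |(d : ℝ)| := by
          apply abs_pos.mpr
          exact_mod_cast hd0
        have : |1 - μ i0| < 1 := by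
          rw [abs_of_pos h1m]
          linarith [hpos i0]
        nlinarith
      have hnatlt : d'.natAbs < d.natAbs := by
        have h1 : |d'| < |d| := by exact_mod_cast habs
        rw [Int.abs_eq_natAbs, Int.abs_eq_natAbs] at h1
        exact_mod_cast h1
      have := IH d'.natAbs (Nat.lt_of_lt_of_le hnatlt hdN) v' μ' hv'K hv'L hμ'0 hμ'sum
        (by rw [hz']; exact hzL) d' hd' hd'0 (le_refl _)
      rw [hz'] at this
      exact this

/-- Let `K` be a lattice polytope in `ℝ^n`.  If `mK ∩ ℤ^n = m(K ∩ ℤ^n)` holds for every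
positive integer `m ≤ n - 1`, then it holds for every positive integer `m`; that is,
`K` is solid. -/
theorem solid_of_small_dilates (n : ℕ) (K : Set (Fin n → ℝ)) (hK : IsLatticePolytope K)
    (h : ∀ m : ℕ, 0 < m → m ≤ n - 1 →
      ((m : ℝ) • K) ∩ latticePoints n = nsmulSet m (K ∩ latticePoints n)) :
    ∀ m : ℕ, 0 < m →
      ((m : ℝ) • K) ∩ latticePoints n = nsmulSet m (K ∩ latticePoints n) := by
  classical
  obtain ⟨S, hSfin, hSne, hSlat, hKdef⟩ := hK
  have hconv : Convex ℝ K := by rw [hKdef]; exact convex_convexHull ℝ S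
  have forward : ∀ m : ℕ, 0 < m →
      ((m : ℝ) • K) ∩ latticePoints n ⊆ nsmulSet m (K ∩ latticePoints n) := by
    intro m
    induction m using Nat.strong_induction_on with | _ m IH => ?_
    intro hm z hz
    obtain ⟨hz1, hzL⟩ := hz
    by_cases hm1 : m = 1
    · subst hm1
      obtain ⟨x, hxK, hxz⟩ := hz1
      have hzx : z = x := by
        rw [← hxz]
        show ((1 : ℕ) : ℝ) • x = x
        rw [Nat.cast_one, one_smul]
      subst hzx
      show z ∈ K ∩ latticePoints n + nsmulSet 0 (K ∩ latticePoints n)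
      have : z + 0 ∈ K ∩ latticePoints n + nsmulSet 0 (K ∩ latticePoints n) :=
        Set.add_mem_add ⟨hxK, hzL⟩ rfl
      simpa using this
    by_cases hmn : m ≤ n - 1
    · rw [← h m hm hmn]
      exact ⟨hz1, hzL⟩
    have hm2 : 2 ≤ m := by omega
    have hmn' : n ≤ m := by omega
    obtain ⟨x, hxK, hxz⟩ := hz1
    have hxhull : x ∈ convexHull ℝ S := by rw [← hKdef]; exact hxK
    obtain ⟨ι, hfin, p, w, hrange, hai, hwpos, hwsum, hwx⟩ :=
      eq_pos_convex_span_of_mem_convexHull hxhull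
    have hpS : ∀ i, p i ∈ S := fun i => hrange ⟨i, rfl⟩
    have hpK : ∀ i, p i ∈ K := fun i => by rw [hKdef]; exact subset_convexHull ℝ S (hpS i)
    have hpL : ∀ i, p i ∈ latticePoints n := fun i => hSlat (hpS i)
    set lam : ι → ℝ := fun i => (m : ℝ) * w i with hlamdef
    have hlamsum : ∑ i, lam i = m := by
      rw [hlamdef, ← Finset.mul_sum, hwsum, mul_one]
    have hzrepr : z = ∑ i, lam i • p i := by
      rw [← hxz]
      show (m : ℝ) • x = _
      rw [← hwx, Finset.smul_sum]
      congr 1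
      funext i
      rw [smul_smul]
    by_cases hex : ∃ j, 1 ≤ lam j
    · obtain ⟨j, hj⟩ := hex
      have hm1R : (0 : ℝ) < ((m - 1 : ℕ) : ℝ) := by
        have : 1 ≤ m - 1 := by omega
        exact_mod_cast Nat.lt_of_lt_of_le Nat.zero_lt_one this
      have hcastm1 : ((m - 1 : ℕ) : ℝ) = (m : ℝ) - 1 := by
        have : 1 ≤ m := by omega
        push_cast [Nat.cast_sub this]
        ring
      have hsubmem : z - p j ∈ ((m - 1 : ℕ) : ℝ) • K := by
        have hrepr2 : z - p j = ∑ i, Function.update lam j (lam j - 1) i • p i := by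
          rw [sum_update_smul' lam p j (lam j - 1), ← hzrepr]
          have : (lam j - 1 - lam j) = -1 := by ring
          rw [this, neg_one_smul]
          abel
        rw [hrepr2]
        refine combo_mem_smul hconv p hpK _ ?_ hm1R ?_
        · intro i
          by_cases hij : i = j
          · subst hij; rw [Function.update_self]; linarith
          · rw [Function.update_of_ne hij]
            exact le_of_lt (mul_pos (by positivity) (hwpos i))
        · rw [Finset.sum_update_of_mem (Finset.mem_univ j), Finset.sdiff_singleton_eq_erase]
          rw [← Finset.add_sum_erase _ lam (Finset.mem_univ j)] at hlamsum
          rw [hcastm1]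
          linarith
      have hstep1 : z - p j ∈ nsmulSet (m - 1) (K ∩ latticePoints n) :=
        IH (m - 1) (by omega) (by omega) ⟨hsubmem, lat_sub hzL (hpL j)⟩
      have := mem_nsmulSet_succ (A := K ∩ latticePoints n) ⟨hpK j, hpL j⟩ hstep1
      have hm1' : m - 1 + 1 = m := by omega
      rw [hm1'] at this
      simpa using this
    · push_neg at hex
      have hne : Nonempty ι := by
        rcases isEmpty_or_nonempty ι with hempty | hne
        · exfalso
          rw [Finset.univ_eq_empty, Finset.sum_empty] at hwsum
          exact one_ne_zero hwsum.symm
        · exact hne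
      have hcard : Fintype.card ι ≤ n + 1 := by
        have h1 := hai.card_le_finrank_succ
        have h2 : Module.finrank ℝ ↥(vectorSpan ℝ (Set.range p)) ≤ n := by
          have := Submodule.finrank_le (vectorSpan ℝ (Set.range p))
          rwa [Module.finrank_fin_fun] at this
        omega
      have hltR : (m : ℝ) < Fintype.card ι := by
        rw [← hlamsum]
        calc ∑ i, lam i < ∑ _i : ι, (1 : ℝ) :=
              Finset.sum_lt_sum_of_nonempty Finset.univ_nonempty (fun i _ => hex i)
          _ = Fintype.card ι := by rw [Finset.sum_const, Finset.card_univ]; simp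
      have hcm : m < Fintype.card ι := by exact_mod_cast hltR
      have hmeq : m = n := by omega
      have hcardeq : Fintype.card ι = n + 1 := by omega
      have e : ι ≃ Fin (n + 1) := Fintype.equivFinOfCardEq hcardeq
      set v : Fin (n + 1) → Fin n → ℝ := p ∘ e.symm with hvdef
      set μ : Fin (n + 1) → ℝ := lam ∘ e.symm with hμdef
      have hzrepr2 : z = ∑ i, μ i • v i := by
        rw [hzrepr]
        exact (Equiv.sum_comp e.symm (fun i => lam i • p i)).symm
      have hμsum : ∑ i, μ i = (n : ℝ) := by
        have := Equiv.sum_comp e.symm lam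
        rw [hμdef]
        rw [show ((n : ℝ)) = ((m : ℕ) : ℝ) by rw [hmeq], ← hlamsum]
        exact this
      have hvai : AffineIndependent ℝ v := hai.comp_embedding e.symm.toEmbedding
      obtain ⟨d, hd⟩ := bmat_int v (fun i => hpL (e.symm i))
      have hd0 : d ≠ 0 := by
        intro hcon
        apply bmat_det_ne_zero hvai
        rw [hd, hcon]
        simp
      have hn2 : 2 ≤ n := by omega
      have hstepn : (((n - 1 : ℕ) : ℝ) • K) ∩ latticePoints n
          = nsmulSet (n - 1) (K ∩ latticePoints n) := h (n - 1) (by omega) (le_refl _)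
      have hmem := core n hn2 K hconv hstepn d.natAbs v μ (fun i => hpK (e.symm i))
        (fun i => hpL (e.symm i)) (fun i => le_of_lt (mul_pos (by positivity) (hwpos _)))
        hμsum (by rw [← hzrepr2]; exact hzL) d hd hd0 (le_refl _)
      rw [← hzrepr2] at hmem
      rw [hmeq]
      exact hmem
  intro m hm
  exact Set.Subset.antisymm (forward m hm) (nsmulSet_subset_smul hconv m hm)
end

section
/- Let n ≥ 4, let d and a(1), ..., a(n−1) be integers with 0 < a(i) < d for every i and Σ_{i=1}^{n−1} a(i) < d, and let a = (a(1), ..., a(n−1), d)^T ∈ ℤ^n. Let K be the convex hull in ℝ^n of S = {0, e_1, ..., e_{n−1}, a}, where e_1, ..., e_{n−1} are the first n−1 standard basis vectors. Then K is a lattice simplex with nonempty interior, and the all-ones vector 𝟏 = (1, 1, ..., 1)^T satisfies 𝟏 ∈ (n−1)K and 𝟏 ∉ (n−2)K. -/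
open Pointwise

set_option maxHeartbeats 1000000 in
/-- Let `n ≥ 4`, let `d` and `a 0, …, a (n-2)` be integers with `0 < a i < d` for every
`i < n - 1` and `∑_{i < n-1} a i < d`, and let the last coordinate of `a` be `d`.
Let `K` be the convex hull in `ℝ^n` of `S = {0, e_1, …, e_{n-1}, a}` where the `e i` are
the first `n - 1` standard basis vectors.  Then `K` is a lattice simplex (its vertex set
`S` is affinely independent) with nonempty interior, and the all-ones vector `𝟏` lies in
`(n-1)K` but not in `(n-2)K`. -/
theorem example4 (n : ℕ) (hn : 4 ≤ n) (d : ℤ) (a : Fin n → ℤ)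
    (ha : ∀ i : Fin n, (i : ℕ) < n - 1 → 0 < a i ∧ a i < d)
    (hlast : a ⟨n - 1, by omega⟩ = d)
    (hsum : ∑ i ∈ Finset.univ.filter (fun i : Fin n => (i : ℕ) < n - 1), a i < d)
    (S : Set (Fin n → ℝ))
    (hS : S = {0} ∪ {x | ∃ i : Fin n, (i : ℕ) < n - 1 ∧ x = Pi.single i 1} ∪
      {fun i => (a i : ℝ)})
    (K : Set (Fin n → ℝ)) (hK : K = convexHull ℝ S) :
    AffineIndependent ℝ ((↑) : S → (Fin n → ℝ)) ∧
    (interior K).Nonempty ∧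
    (fun _ => (1 : ℝ)) ∈ ((n - 1 : ℕ) : ℝ) • K ∧
    (fun _ => (1 : ℝ)) ∉ ((n - 2 : ℕ) : ℝ) • K := by
  -- Basic facts
  have hn1 : 1 ≤ n - 1 := by omega
  set last : Fin n := ⟨n - 1, by omega⟩ with hlastdef
  set av : Fin n → ℝ := fun i => (a i : ℝ) with hav
  set F : Finset (Fin n) := Finset.univ.filter (fun i : Fin n => (i : ℕ) < n - 1) with hF
  have hlastval : (last : ℕ) = n - 1 := rfl
  have hi0 : (⟨0, by omega⟩ : Fin n) ∈ F := by
    simp [hF]; omega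
  have hd2 : 2 ≤ d := by
    have := ha ⟨0, by omega⟩ (by simp; omega)
    omega
  have hd0 : (0 : ℝ) < (d : ℝ) := by exact_mod_cast (by omega : (0:ℤ) < d)
  set A : ℤ := ∑ i ∈ F, a i with hA
  have hA1 : 1 ≤ A := by
    have : ∀ i ∈ F, 1 ≤ a i := by
      intro i hi
      have hi' : (i : ℕ) < n - 1 := by simpa [hF] using hi
      have := (ha i hi').1; omega
    calc (1 : ℤ) ≤ a ⟨0, by omega⟩ := this _ hi0
      _ ≤ A := Finset.single_le_sum (fun i hi => by linarith [this i hi]) hi0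
  have hAd : A < d := hsum
  have hnotF : ∀ i : Fin n, ¬ ((i : ℕ) < n - 1) → i = last := by
    intro i hi
    have h2 := i.isLt
    exact Fin.ext (by rw [hlastval]; omega)
  have hlastF : last ∉ F := by simp [hF]; omega
  have hFcompl : Finset.univ.filter (fun i : Fin n => ¬ ((i : ℕ) < n - 1)) = {last} := by
    ext i
    simp only [Finset.mem_filter, Finset.mem_univ, true_and, Finset.mem_singleton]
    constructor
    · exact hnotF i
    · rintro rfl; simp [hlastdef]
  have hcardF : F.card = n - 1 := by
    have h1 := Finset.card_filter_add_card_filter_not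
      (s := (Finset.univ : Finset (Fin n))) (p := fun i : Fin n => (i : ℕ) < n - 1)
    rw [hFcompl, ← hF] at h1
    simp only [Finset.card_singleton, Finset.card_univ, Fintype.card_fin] at h1
    omega
  have havlast : av last = (d : ℝ) := by
    rw [hav]; exact_mod_cast congrArg Int.cast hlast
  -- The family of nonzero vertices
  set g : Fin n → (Fin n → ℝ) := fun i => if (i : ℕ) < n - 1 then Pi.single i 1 else av
    with hg
  have hglast : g last = av := by simp [hg, hlastdef]
  have hgS : ∀ i, g i ∈ S := by
    intro i
    rw [hS, hg]
    by_cases hi : (i : ℕ) < n - 1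
    · exact Or.inl (Or.inr ⟨i, hi, by simp [hi]⟩)
    · right; simp [hi, hav]
  -- Linear independence via triangular matrix
  have hli : LinearIndependent ℝ g := by
    have htri : (Matrix.of g).BlockTriangular OrderDual.toDual := by
      intro i j hij
      have hij' : (i : ℕ) < (j : ℕ) := hij
      by_cases hi : (i : ℕ) < n - 1
      · show g i j = 0
        have hne : j ≠ i := by
          intro h; rw [h] at hij'; omega
        simp [hg, hi, Pi.single_apply, hne]
      · exfalso
        have h2 := hnotF i hi
        have h3 := j.isLt
        rw [h2, hlastdef] at hij'
        simp at hij'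
        omega
    have hdet : (Matrix.of g).det = (d : ℝ) := by
      rw [Matrix.det_of_lowerTriangular _ htri]
      rw [Finset.prod_eq_single last (fun i _ hi => ?_) (fun h => absurd (Finset.mem_univ _) h)]
      · show g last last = (d : ℝ)
        rw [hglast, havlast]
      · show g i i = 1
        have hi' : (i : ℕ) < n - 1 := by
          by_contra hcon
          exact hi (hnotF i hcon)
        simp [hg, hi']
    have hunit : IsUnit (Matrix.of g) := by
      rw [Matrix.isUnit_iff_isUnit_det, hdet]
      exact isUnit_iff_ne_zero.2 (ne_of_gt hd0)
    exact Matrix.linearIndependent_rows_iff_isUnit.2 hunit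
  -- The set T of nonzero vertices
  set T : Set (Fin n → ℝ) :=
    {x | ∃ i : Fin n, (i : ℕ) < n - 1 ∧ x = Pi.single i 1} ∪ {av} with hT
  have hrange : Set.range g = T := by
    ext x
    constructor
    · rintro ⟨i, rfl⟩
      rw [hg]
      by_cases hi : (i : ℕ) < n - 1
      · exact Or.inl ⟨i, hi, by simp [hi]⟩
      · right; simp [hi]
    · rintro (⟨i, hi, rfl⟩ | hx)
      · exact ⟨i, by simp [hg, hi]⟩
      · exact ⟨last, by rw [hglast]; exact hx.symm⟩
  have hT0 : ∀ v ∈ T, v ≠ (0 : Fin n → ℝ) := by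
    rintro v (⟨i, hi, rfl⟩ | hv) h0
    · have := congrFun h0 i
      simp at this
    · rw [Set.mem_singleton_iff] at hv
      subst hv
      have := congrFun h0 last
      rw [havlast] at this
      simp at this
      linarith
  have hST : S = {(0 : Fin n → ℝ)} ∪ T := by
    rw [hS, hT, Set.union_assoc]
  -- Affine independence
  have haff : AffineIndependent ℝ ((↑) : S → (Fin n → ℝ)) := by
    have hTli : LinearIndependent ℝ ((↑) : T → (Fin n → ℝ)) := by
      rw [← hrange]
      exact (linearIndepOn_id_range_iff hli.injective).2 hli
    have := (linearIndependent_set_iff_affineIndependent_vadd_union_singleton ℝ hT0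
      (0 : Fin n → ℝ)).1 hTli
    have himg : (fun v => v +ᵥ (0 : Fin n → ℝ)) '' T = T := by
      simp [Set.image_id']
    rw [himg, ← hST] at this
    exact this
  refine ⟨haff, ?_, ?_, ?_⟩
  -- Interior nonempty
  · have hspan : affineSpan ℝ S = ⊤ := by
      have h1 : Submodule.span ℝ T = ⊤ := by
        haveI : Nonempty (Fin n) := ⟨⟨0, by omega⟩⟩
        rw [← hrange]
        exact hli.span_eq_top_of_card_eq_finrank (by simp [Module.finrank_fin_fun])
      have h2 : (affineSpan ℝ S : Set (Fin n → ℝ)) = Set.univ := by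
        rw [hST, Set.singleton_union, affineSpan_insert_zero, h1]
        rfl
      exact (AffineSubspace.coe_eq_univ_iff _).1 h2
    rw [hK]
    rw [Convex.interior_nonempty_iff_affineSpan_eq_top (convex_convexHull ℝ S),
      affineSpan_convexHull]
    exact hspan
  -- membership in (n-1)K
  · set w : Fin n → ℝ := fun i => if (i : ℕ) < n - 1 then ((d : ℝ) - (a i : ℝ)) / d else 1 / d
      with hw
    have hw0 : ∀ i, 0 < w i := by
      intro i
      rw [hw]
      by_cases hi : (i : ℕ) < n - 1
      · have h1 := ha i hi
        simp only [hi, if_true]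
        apply div_pos _ hd0
        have : (a i : ℝ) < (d : ℝ) := by exact_mod_cast h1.2
        linarith
      · simp only [hi, if_false]
        positivity
    set s : ℝ := ∑ i, w i with hs
    have hAc : (A : ℝ) = ∑ i ∈ F, ((a i : ℤ) : ℝ) := by
      rw [hA]; push_cast; ring
    have hsval : s = (((n - 1 : ℕ) : ℝ) * d - (A : ℝ) + 1) / d := by
      rw [hs, ← Finset.sum_filter_add_sum_filter_not Finset.univ
        (fun i : Fin n => (i : ℕ) < n - 1) w, hFcompl, ← hF, Finset.sum_singleton]
      have h1 : ∑ i ∈ F, w i = (((n - 1 : ℕ) : ℝ) * d - (A : ℝ)) / d := by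
        have hcongr : ∑ i ∈ F, w i = ∑ i ∈ F, ((d : ℝ) - (a i : ℝ)) / d := by
          refine Finset.sum_congr rfl (fun i hi => ?_)
          have hi' : (i : ℕ) < n - 1 := by
            rw [hF] at hi
            simpa using hi
          rw [hw]; simp [hi']
        rw [hcongr, ← Finset.sum_div, Finset.sum_sub_distrib, Finset.sum_const, hcardF, ← hAc]
        simp [nsmul_eq_mul]
      have h2 : w last = 1 / d := by
        rw [hw]; simp [hlastval]
      rw [h1, h2]
      field_simp
    have hd1R : (1 : ℝ) ≤ (A : ℝ) := by exact_mod_cast hA1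
    have hAdR : (A : ℝ) < (d : ℝ) := by exact_mod_cast hAd
    have hn1R : (0 : ℝ) < ((n - 1 : ℕ) : ℝ) := by
      have : 0 < n - 1 := by omega
      exact_mod_cast this
    have hn3R : (3 : ℝ) ≤ ((n - 1 : ℕ) : ℝ) := by
      have : 3 ≤ n - 1 := by omega
      exact_mod_cast this
    have hs_pos : 0 < s := by
      rw [hsval]
      apply div_pos _ hd0
      nlinarith
    have hs_le : s ≤ ((n - 1 : ℕ) : ℝ) := by
      rw [hsval, div_le_iff₀ hd0]
      nlinarith
    have honef : ∑ i, w i • g i = (fun _ => (1 : ℝ)) := by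
      funext j
      rw [Finset.sum_apply, ← Finset.sum_filter_add_sum_filter_not Finset.univ
        (fun i : Fin n => (i : ℕ) < n - 1) _, hFcompl, ← hF, Finset.sum_singleton]
      have hterm : ∀ i ∈ F, (w i • g i) j = if j = i then w i else 0 := by
        intro i hi
        have hi' : (i : ℕ) < n - 1 := by
          rw [hF] at hi; simpa using hi
        simp only [hg, hi', if_true, Pi.smul_apply, smul_eq_mul, Pi.single_apply]
        split <;> simp
      rw [Finset.sum_congr rfl hterm, Finset.sum_ite_eq F j w]
      have hlterm : (w last • g last) j = 1 / d * av j := by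
        rw [hglast, hw]
        simp [hlastval]
      rw [hlterm]
      by_cases hj : (j : ℕ) < n - 1
      · have hjF : j ∈ F := by rw [hF]; simpa using hj
        rw [if_pos hjF, hw]
        simp only [hj, if_true, hav]
        field_simp
        ring
      · have hjF : j ∉ F := by rw [hF]; simpa using hj
        rw [if_neg hjF]
        rw [hnotF j hj, havlast]
        field_simp
        ring
    have hzK : (s⁻¹ • (fun _ => (1 : ℝ)) : Fin n → ℝ) ∈ convexHull ℝ S := by
      have hcm := Finset.centerMass_mem_convexHull (Finset.univ : Finset (Fin n))
        (w := w) (z := g) (fun i _ => (hw0 i).le) (by rw [← hs]; exact hs_pos)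
        (fun i _ => hgS i)
      rwa [Finset.centerMass, ← hs, honef] at hcm
    have h0K : (0 : Fin n → ℝ) ∈ convexHull ℝ S :=
      subset_convexHull ℝ S (by rw [hS]; exact Or.inl (Or.inl rfl))
    set θ : ℝ := s / ((n - 1 : ℕ) : ℝ) with hθ
    have hθ0 : 0 ≤ θ := by positivity
    have hθ1 : θ ≤ 1 := by rw [hθ, div_le_one hn1R]; exact hs_le
    have hyK : θ • (s⁻¹ • (fun _ => (1 : ℝ)) : Fin n → ℝ) + (1 - θ) • (0 : Fin n → ℝ)
        ∈ convexHull ℝ S :=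
      (convex_convexHull ℝ S) hzK h0K hθ0 (by linarith) (by ring)
    refine Set.mem_smul_set.2 ⟨_, by rw [hK]; exact hyK, ?_⟩
    rw [smul_zero, add_zero, smul_smul, smul_smul]
    have h1 : s ≠ 0 := ne_of_gt hs_pos
    have h2 : ((n - 1 : ℕ) : ℝ) ≠ 0 := ne_of_gt hn1R
    have hcoef : ((n - 1 : ℕ) : ℝ) * θ * s⁻¹ = 1 := by
      rw [hθ, div_eq_mul_inv]
      calc ((n - 1 : ℕ) : ℝ) * (s * ((n - 1 : ℕ) : ℝ)⁻¹) * s⁻¹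
          = (((n - 1 : ℕ) : ℝ) * ((n - 1 : ℕ) : ℝ)⁻¹) * (s * s⁻¹) := by ring
        _ = 1 := by rw [mul_inv_cancel₀ h2, mul_inv_cancel₀ h1, one_mul]
    rw [hcoef, one_smul]
  -- non-membership in (n-2)K
  · intro hmem
    have hd1R : (1 : ℝ) ≤ (A : ℝ) := by exact_mod_cast hA1
    have hAdR : (A : ℝ) < (d : ℝ) := by exact_mod_cast hAd
    have hAc : (A : ℝ) = ∑ i ∈ F, ((a i : ℤ) : ℝ) := by
      rw [hA]; push_cast; ring
    set c : Fin n → ℝ := fun i => if (i : ℕ) < n - 1 then 1 else (1 - (A : ℝ)) / d with hc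
    set f : (Fin n → ℝ) → ℝ := fun x => ∑ i, c i * x i with hf
    have hflin : ∀ (α β : ℝ) (x y : Fin n → ℝ), f (α • x + β • y) = α * f x + β * f y := by
      intro α β x y
      rw [hf]
      simp only [Pi.add_apply, Pi.smul_apply, smul_eq_mul]
      rw [Finset.mul_sum, Finset.mul_sum, ← Finset.sum_add_distrib]
      exact Finset.sum_congr rfl fun i _ => by ring
    have hH : Convex ℝ {x : Fin n → ℝ | f x ≤ 1} := by
      intro x hx y hy α β hα hβ hαβ
      simp only [Set.mem_setOf_eq] at hx hy ⊢
      rw [hflin]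
      nlinarith
    have hSH : S ⊆ {x : Fin n → ℝ | f x ≤ 1} := by
      rw [hS]
      rintro x ((h0 | ⟨i, hi, rfl⟩) | hx)
      · rw [Set.mem_singleton_iff] at h0
        subst h0
        simp [hf]
      · simp only [Set.mem_setOf_eq, hf]
        have : ∀ j, c j * (Pi.single i 1 : Fin n → ℝ) j = if j = i then c j else 0 := by
          intro j
          rw [Pi.single_apply]
          split <;> simp
        rw [Finset.sum_congr rfl fun j _ => this j, Finset.sum_ite_eq' Finset.univ i c]
        simp [hc, hi]
      · rw [Set.mem_singleton_iff] at hx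
        subst hx
        simp only [Set.mem_setOf_eq, hf]
        rw [← Finset.sum_filter_add_sum_filter_not Finset.univ
          (fun i : Fin n => (i : ℕ) < n - 1) _, hFcompl, ← hF, Finset.sum_singleton]
        have h1 : ∑ i ∈ F, c i * av i = (A : ℝ) := by
          rw [hAc]
          refine Finset.sum_congr rfl fun i hi => ?_
          have hi' : (i : ℕ) < n - 1 := by rw [hF] at hi; simpa using hi
          rw [hc, hav]
          simp [hi']
        have h2 : c last * av last = 1 - (A : ℝ) := by
          rw [hc, havlast]
          simp only [hlastval, lt_irrefl, if_false]
          have : ((1 : ℝ) - A) / d * d = 1 - A := by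
            field_simp
          simpa [if_neg (by omega : ¬ (n - 1 < n - 1))] using this
        rw [h1, h2]
        linarith
    have hKH : K ⊆ {x : Fin n → ℝ | f x ≤ 1} := by
      rw [hK]
      exact convexHull_min hSH hH
    obtain ⟨y, hy, hy1⟩ := Set.mem_smul_set.1 hmem
    have hfy : f y ≤ 1 := hKH hy
    have hn2R : (0 : ℝ) < ((n - 2 : ℕ) : ℝ) := by
      have : 0 < n - 2 := by omega
      exact_mod_cast this
    have hfone : f (fun _ => (1 : ℝ)) = ((n - 1 : ℕ) : ℝ) + (1 - (A : ℝ)) / d := by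
      rw [hf]
      simp only [mul_one]
      rw [← Finset.sum_filter_add_sum_filter_not Finset.univ
        (fun i : Fin n => (i : ℕ) < n - 1) _, hFcompl, ← hF, Finset.sum_singleton]
      have h1 : ∑ i ∈ F, c i = ((n - 1 : ℕ) : ℝ) := by
        have : ∀ i ∈ F, c i = 1 := by
          intro i hi
          have hi' : (i : ℕ) < n - 1 := by rw [hF] at hi; simpa using hi
          rw [hc]; simp [hi']
        rw [Finset.sum_congr rfl this, Finset.sum_const, hcardF]
        simp
      have h2 : c last = (1 - (A : ℝ)) / d := by
        rw [hc]; simp [hlastval]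
      rw [h1, h2]
    have hfsmul : f ((((n - 2 : ℕ) : ℝ)) • y) = ((n - 2 : ℕ) : ℝ) * f y := by
      have := hflin ((n - 2 : ℕ) : ℝ) 0 y 0
      simpa using this
    rw [hy1, hfone] at hfsmul
    have hgt : ((n - 2 : ℕ) : ℝ) * f y ≤ ((n - 2 : ℕ) : ℝ) := by
      nlinarith
    have hcast : ((n - 1 : ℕ) : ℝ) = ((n - 2 : ℕ) : ℝ) + 1 := by
      have h3 : n - 1 = (n - 2) + 1 := by omega
      rw [h3]
      push_cast
      ring
    have hfrac : (-1 : ℝ) < (1 - (A : ℝ)) / d := by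
      rw [lt_div_iff₀ hd0]
      nlinarith
    rw [hcast] at hfsmul
    linarith
end

section
/- For every n ≥ 4 there exists a lattice simplex K ⊆ ℝ^n with nonempty interior such that for every integer i with 2 ≤ i ≤ n−2, the equality nK ∩ ℤ^n = ((n−i)K ∩ ℤ^n) + (iK ∩ ℤ^n) fails, and also the equality (n−1)K ∩ ℤ^n = ((n−2)K ∩ ℤ^n) + (K ∩ ℤ^n) fails. (One may take K to be the convex hull of {0, e_1, ..., e_{n−1}, a} with a = (a(1), ..., a(n−1), d)^T, 0 < a(i) < d, and Σ a(i) < d.) -/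
open Pointwise

namespace SharpAux

variable (n : ℕ) (hn : 4 ≤ n)

/-- The last index. -/
def ll : Fin n := ⟨n - 1, by omega⟩

/-- Rows: `MM i = e i` for `i ≠ ll`, and `MM ll = a = (1,…,1,n)`. -/
noncomputable def MM : Fin n → Fin n → ℝ := fun i j =>
  if i = ll n hn then (if j = ll n hn then (n : ℝ) else 1) else (if j = i then 1 else 0)

/-- Vertex set of the simplex. -/
noncomputable def SS : Set (Fin n → ℝ) := insert 0 (Set.range (MM n hn))

/-- The coefficients of a point w.r.t. the vertices. -/
noncomputable def mu (y : Fin n → ℝ) : Fin n → ℝ := fun i =>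
  if i = ll n hn then y (ll n hn) / n else y i - y (ll n hn) / n

variable {n}

lemma hnR (hn : 4 ≤ n) : (4:ℝ) ≤ (n:ℝ) := by exact_mod_cast hn

lemma hn0 (hn : 4 ≤ n) : (0:ℝ) < n := lt_of_lt_of_le (by norm_num) (hnR hn)

lemma mu_apply_ll (y : Fin n → ℝ) : mu n hn y (ll n hn) = y (ll n hn) / n := by
  simp [mu]

lemma mu_apply_ne (y : Fin n → ℝ) {j : Fin n} (hj : j ≠ ll n hn) :
    mu n hn y j = y j - y (ll n hn) / n := by simp [mu, hj]

lemma MM_ll (j : Fin n) : MM n hn (ll n hn) j = if j = ll n hn then (n:ℝ) else 1 := by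
  simp [MM]

lemma MM_ne {i : Fin n} (hi : i ≠ ll n hn) (j : Fin n) :
    MM n hn i j = if j = i then 1 else 0 := by simp [MM, hi]

/-- `mu` is "linear". -/
lemma mu_combo (a b : ℝ) (x y : Fin n → ℝ) (i : Fin n) :
    mu n hn (a • x + b • y) i = a * mu n hn x i + b * mu n hn y i := by
  have h : (n:ℝ) ≠ 0 := ne_of_gt (hn0 hn)
  simp only [mu, Pi.add_apply, Pi.smul_apply, smul_eq_mul]
  split_ifs with hi <;> field_simp <;> ring

lemma mu_smul_row (r : ℝ) (i : Fin n) :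
    mu n hn (r • MM n hn i) = fun j => if j = i then r else 0 := by
  have h : (n:ℝ) ≠ 0 := ne_of_gt (hn0 hn)
  funext j
  by_cases hi : i = ll n hn
  · by_cases hj : j = ll n hn
    · rw [hj, mu_apply_ll hn, hi, Pi.smul_apply, smul_eq_mul, MM_ll hn, if_pos rfl,
        if_pos rfl]
      field_simp
    · rw [mu_apply_ne hn _ hj, Pi.smul_apply, Pi.smul_apply, smul_eq_mul, smul_eq_mul,
        hi, MM_ll hn, MM_ll hn, if_neg hj, if_pos rfl, if_neg hj]
      field_simp
      ring
  · by_cases hj : j = ll n hn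
    · rw [hj, mu_apply_ll hn, Pi.smul_apply, smul_eq_mul, MM_ne hn hi,
        if_neg (fun hh : ll n hn = i => hi hh.symm),
        if_neg (fun hh : ll n hn = i => hi hh.symm)]
      simp
    · rw [mu_apply_ne hn _ hj, Pi.smul_apply, Pi.smul_apply, smul_eq_mul, smul_eq_mul,
        MM_ne hn hi, MM_ne hn hi, if_neg (fun hh : ll n hn = i => hi hh.symm)]
      by_cases hji : j = i
      · rw [if_pos hji, if_pos hji]; ring
      · rw [if_neg hji, if_neg hji]; ring

/-- Reconstruction: every point is the `mu`-combination of rows. -/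
lemma sum_mu_smul (y : Fin n → ℝ) :
    ∑ i, mu n hn y i • MM n hn i = y := by
  have h : (n:ℝ) ≠ 0 := ne_of_gt (hn0 hn)
  funext j
  rw [Finset.sum_apply]
  by_cases hj : j = ll n hn
  · have key : ∀ i : Fin n, (mu n hn y i • MM n hn i) j =
        (if i = ll n hn then y (ll n hn) / n * n else 0) := by
      intro i
      rw [Pi.smul_apply, smul_eq_mul]
      by_cases hi : i = ll n hn
      · rw [if_pos hi, hi, MM_ll hn, if_pos hj, mu_apply_ll hn]
      · rw [if_neg hi, MM_ne hn hi, if_neg (fun hh : j = i => hi (hh.symm.trans hj)),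
          mul_zero]
    rw [Finset.sum_congr rfl fun i _ => key i, Finset.sum_ite_eq' Finset.univ,
      if_pos (Finset.mem_univ _), hj]
    field_simp
  · have key : ∀ i : Fin n, (mu n hn y i • MM n hn i) j =
        (if i = ll n hn then y (ll n hn) / n else 0)
          + (if i = j then y j - y (ll n hn) / n else 0) := by
      intro i
      rw [Pi.smul_apply, smul_eq_mul]
      by_cases hi : i = ll n hn
      · rw [if_pos hi, if_neg (fun hh : i = j => hj (hh ▸ hi)), add_zero, hi,
          MM_ll hn, if_neg hj, mu_apply_ll hn, mul_one]
      · rw [if_neg hi, zero_add, MM_ne hn hi, mu_apply_ne hn _ hi]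
        by_cases hji : j = i
        · rw [if_pos hji, if_pos hji.symm, mul_one, hji]
        · rw [if_neg hji, if_neg (fun hh : i = j => hji hh.symm), mul_zero]
    rw [Finset.sum_congr rfl fun i _ => key i, Finset.sum_add_distrib,
      Finset.sum_ite_eq' Finset.univ, Finset.sum_ite_eq' Finset.univ,
      if_pos (Finset.mem_univ _), if_pos (Finset.mem_univ _)]
    ring

/-- Sufficiency: a nonnegative combination with total mass ≤ r lies in `r • K`. -/
lemma mem_smul_hull {r : ℝ} (hr : 0 < r) (μ : Fin n → ℝ) (h0 : ∀ i, 0 ≤ μ i)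
    (hs : ∑ i, μ i ≤ r) :
    (∑ i, μ i • MM n hn i) ∈ r • convexHull ℝ (SS n hn) := by
  rw [Set.mem_smul_set_iff_inv_smul_mem₀ (ne_of_gt hr)]
  set w : Option (Fin n) → ℝ := fun o => o.elim (1 - r⁻¹ * ∑ i, μ i) (fun i => r⁻¹ * μ i) with hw
  set z : Option (Fin n) → (Fin n → ℝ) := fun o => o.elim 0 (MM n hn) with hz
  have key : r⁻¹ • (∑ i, μ i • MM n hn i) = ∑ o : Option (Fin n), w o • z o := by
    rw [Fintype.sum_option]
    simp only [hw, hz, Option.elim, smul_zero, zero_add, Finset.smul_sum, smul_smul]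
  rw [key]
  refine (convex_convexHull ℝ _).sum_mem (fun o _ => ?_) ?_ (fun o _ => ?_)
  · rcases o with _ | i
    · have h1 : r⁻¹ * ∑ i, μ i ≤ r⁻¹ * r :=
        mul_le_mul_of_nonneg_left hs (inv_nonneg.2 hr.le)
      rw [inv_mul_cancel₀ (ne_of_gt hr)] at h1
      show 0 ≤ 1 - r⁻¹ * ∑ i, μ i
      linarith
    · exact mul_nonneg (inv_nonneg.2 hr.le) (h0 i)
  · rw [Fintype.sum_option]
    show (1 - r⁻¹ * ∑ i, μ i) + (∑ i, r⁻¹ * μ i) = 1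
    rw [← Finset.mul_sum]
    ring
  · rcases o with _ | i
    · exact subset_convexHull ℝ _ (Set.mem_insert _ _)
    · exact subset_convexHull ℝ _ (Set.mem_insert_of_mem _ ⟨i, rfl⟩)

/-- Necessity: membership in `r • K` yields the coefficient inequalities. -/
lemma mu_of_mem {r : ℝ} (hr : 0 ≤ r) {y : Fin n → ℝ}
    (hy : y ∈ r • convexHull ℝ (SS n hn)) :
    (∀ i, 0 ≤ mu n hn y i) ∧ ∑ i, mu n hn y i ≤ r := by
  set P : Set (Fin n → ℝ) := {x | (∀ i, 0 ≤ mu n hn x i) ∧ ∑ i, mu n hn x i ≤ r} with hP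
  have hconv : Convex ℝ P := by
    intro x hx y hy a b ha hb hab
    constructor
    · intro i
      rw [mu_combo hn]
      exact add_nonneg (mul_nonneg ha (hx.1 i)) (mul_nonneg hb (hy.1 i))
    · calc ∑ i, mu n hn (a • x + b • y) i
          = a * (∑ i, mu n hn x i) + b * (∑ i, mu n hn y i) := by
            rw [Finset.mul_sum, Finset.mul_sum, ← Finset.sum_add_distrib]
            exact Finset.sum_congr rfl fun i _ => mu_combo hn a b x y i
        _ ≤ a * r + b * r :=
            add_le_add (mul_le_mul_of_nonneg_left hx.2 ha)
              (mul_le_mul_of_nonneg_left hy.2 hb)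
        _ = r := by rw [← add_mul, hab, one_mul]
  have hsub : r • convexHull ℝ (SS n hn) ⊆ P := by
    rw [← convexHull_smul]
    refine convexHull_min ?_ hconv
    rintro p ⟨q, hq, rfl⟩
    rcases hq with rfl | ⟨i, rfl⟩
    · show (fun x => r • x) (0 : Fin n → ℝ) ∈ P
      have h0 : mu n hn ((fun x => r • x) (0 : Fin n → ℝ)) = 0 := by
        funext i; simp [mu]
      constructor
      · intro i; rw [h0]; exact le_refl 0
      · rw [h0]; simpa using hr
    · show (fun x => r • x) (MM n hn i) ∈ P
      have h1 : mu n hn ((fun x => r • x) (MM n hn i)) = fun j => if j = i then r else 0 := by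
        simpa using mu_smul_row hn r i
      constructor
      · intro j; rw [h1]; dsimp only; split_ifs <;> simp [hr]
      · rw [h1]; simp
  exact hsub hy

variable (n)

/-- The all-ones point. -/
def xone : Fin n → ℝ := fun _ => 1

variable {n}

lemma xone_lattice : xone n ∈ latticePoints n := fun _ => ⟨1, by norm_num [xone]⟩

lemma sum_mu_xone : ∑ i, mu n hn (xone n) i = 1/n + ((n:ℝ) - 1) * (1 - 1/n) := by
  have h : (n:ℝ) ≠ 0 := ne_of_gt (hn0 hn)
  have hmem : ll n hn ∈ (Finset.univ : Finset (Fin n)) := Finset.mem_univ _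
  rw [← Finset.add_sum_erase _ _ hmem]
  have h1 : mu n hn (xone n) (ll n hn) = 1/n := by
    rw [mu_apply_ll hn]; simp [xone]
  have h2 : ∀ j ∈ Finset.univ.erase (ll n hn), mu n hn (xone n) j = 1 - 1/n := by
    intro j hj
    rcases Finset.mem_erase.1 hj with ⟨hj1, _⟩
    rw [mu_apply_ne hn _ hj1]; simp [xone]
  rw [h1, Finset.sum_congr rfl h2, Finset.sum_const, Finset.card_erase_of_mem hmem]
  have hcard : (Finset.univ : Finset (Fin n)).card = n := by simp
  rw [hcard]
  have hc : ((n - 1 : ℕ) : ℝ) = (n:ℝ) - 1 := by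
    have h1n : (1:ℕ) ≤ n := by omega
    push_cast [Nat.cast_sub h1n]; ring
  rw [nsmul_eq_mul, hc]

/-- The all-ones point is in `r • K` whenever `r ≥ n - 1`. -/
lemma xone_mem {r : ℝ} (hr : (n:ℝ) - 1 ≤ r) :
    xone n ∈ r • convexHull ℝ (SS n hn) := by
  have h0 : (0:ℝ) < n := hn0 hn
  have hr0 : 0 < r := by nlinarith [hnR hn]
  have hmem := mem_smul_hull hn hr0 (mu n hn (xone n)) ?_ ?_
  · rwa [sum_mu_smul hn] at hmem
  · intro i
    by_cases hi : i = ll n hn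
    · rw [hi, mu_apply_ll hn]; show (0:ℝ) ≤ 1 / n; positivity
    · rw [mu_apply_ne hn _ hi]
      show (0:ℝ) ≤ 1 - 1 / n
      have : 1/(n:ℝ) ≤ 1 := by
        rw [div_le_one h0]; linarith [hnR hn]
      linarith
  · rw [sum_mu_xone hn]
    have h1 : (1:ℝ)/n * n = 1 := div_mul_cancel₀ 1 (ne_of_gt h0)
    nlinarith [hnR hn]

/-- Key lemma: a lattice point in `r • K` with `r ≤ n - 2` has last coordinate ≠ 1. -/
lemma last_ne_one {r : ℝ} (hr0 : 0 ≤ r) (hr : r ≤ (n:ℝ) - 2) {w : Fin n → ℝ}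
    (hw : w ∈ latticePoints n) (hmem : w ∈ r • convexHull ℝ (SS n hn)) :
    w (ll n hn) ≠ 1 := by
  intro hl
  have h0 : (0:ℝ) < n := hn0 hn
  obtain ⟨hpos, hsum⟩ := mu_of_mem hn hr0 hmem
  have hge : ∀ j ∈ Finset.univ.erase (ll n hn), (1 - 1/(n:ℝ)) ≤ mu n hn w j := by
    intro j hj
    rcases Finset.mem_erase.1 hj with ⟨hj1, _⟩
    have hmu := hpos j
    rw [mu_apply_ne hn _ hj1, hl] at hmu
    rw [mu_apply_ne hn _ hj1, hl]
    obtain ⟨z, hz⟩ := hw j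
    have hz0 : (0:ℝ) < z := by
      rw [← hz]
      have : (0:ℝ) < 1 / n := by positivity
      linarith
    have hz1 : (1:ℝ) ≤ z := by exact_mod_cast (by exact_mod_cast hz0 : (0:ℤ) < z)
    rw [hz]
    linarith
  have hkey := Finset.card_nsmul_le_sum _ _ _ hge
  rw [Finset.card_erase_of_mem (Finset.mem_univ _), nsmul_eq_mul] at hkey
  have hcard : (Finset.univ : Finset (Fin n)).card = n := by simp
  rw [hcard] at hkey
  have hcast : ((n - 1 : ℕ) : ℝ) = (n:ℝ) - 1 := by
    have h1n : (1:ℕ) ≤ n := by omega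
    push_cast [Nat.cast_sub h1n]; ring
  rw [hcast] at hkey
  have hsplit : ∑ i, mu n hn w i =
      mu n hn w (ll n hn) + ∑ j ∈ Finset.univ.erase (ll n hn), mu n hn w j :=
    (Finset.add_sum_erase _ _ (Finset.mem_univ _)).symm
  have hmul : mu n hn w (ll n hn) = 1/(n:ℝ) := by rw [mu_apply_ll hn, hl]
  rw [hsplit, hmul] at hsum
  have h1 : (1:ℝ)/n * n = 1 := div_mul_cancel₀ 1 (ne_of_gt h0)
  nlinarith [hnR hn]


lemma MM_lowerTri : (Matrix.of (MM n hn)).BlockTriangular OrderDual.toDual := by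
  intro i j hij
  have hij' : i < j := hij
  have hi : i ≠ ll n hn := by
    intro h
    have hjlt := j.isLt
    have : (i : ℕ) < (j : ℕ) := hij'
    rw [h] at this
    simp only [ll] at this
    omega
  show MM n hn i j = 0
  rw [MM_ne hn hi, if_neg hij'.ne']

lemma isUnit_MM : IsUnit (Matrix.of (MM n hn)) := by
  rw [Matrix.isUnit_iff_isUnit_det]
  have hdiag : ∀ i : Fin n, Matrix.of (MM n hn) i i = if i = ll n hn then (n:ℝ) else 1 := by
    intro i
    by_cases hi : i = ll n hn
    · rw [if_pos hi, hi]
      show MM n hn (ll n hn) (ll n hn) = (n:ℝ)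
      rw [MM_ll hn, if_pos rfl]
    · rw [if_neg hi]
      show MM n hn i i = 1
      rw [MM_ne hn hi, if_pos rfl]
  have hdet : (Matrix.of (MM n hn)).det = (n:ℝ) := by
    rw [Matrix.det_of_lowerTriangular _ (MM_lowerTri hn),
      Finset.prod_congr rfl fun i _ => hdiag i,
      Finset.prod_ite_eq' Finset.univ, if_pos (Finset.mem_univ _)]
  rw [hdet]
  exact isUnit_iff_ne_zero.2 (ne_of_gt (hn0 hn))

lemma rows_li : LinearIndependent ℝ (MM n hn) :=
  Matrix.linearIndependent_rows_iff_isUnit.2 (isUnit_MM hn)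

lemma affineIndep_SS : AffineIndependent ℝ ((↑) : SS n hn → (Fin n → ℝ)) := by
  have hne : ∀ v ∈ Set.range (MM n hn), v ≠ (0 : Fin n → ℝ) := by
    rintro _ ⟨i, rfl⟩ hv
    have h := congrFun hv i
    by_cases hi : i = ll n hn
    · rw [hi] at h
      rw [show MM n hn (ll n hn) (ll n hn) = (n:ℝ) by rw [MM_ll hn, if_pos rfl]] at h
      exact absurd h (ne_of_gt (hn0 hn))
    · rw [show MM n hn i i = (1:ℝ) by rw [MM_ne hn hi, if_pos rfl]] at h
      simp at h
  have hli : LinearIndependent ℝ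
      (fun v => v : Set.range (MM n hn) → (Fin n → ℝ)) :=
    (rows_li hn).linearIndepOn_id
  have h := (linearIndependent_set_iff_affineIndependent_vadd_union_singleton ℝ hne
    (0 : Fin n → ℝ)).1 hli
  have hset : ({(0 : Fin n → ℝ)} ∪
      (fun v => v +ᵥ (0 : Fin n → ℝ)) '' Set.range (MM n hn)) = SS n hn := by
    have himg : (fun v => v +ᵥ (0 : Fin n → ℝ)) '' Set.range (MM n hn)
        = Set.range (MM n hn) := by
      have : (fun v => v +ᵥ (0 : Fin n → ℝ)) = id := by
        funext v; simp
      rw [this, Set.image_id]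
    rw [himg, SS, Set.insert_eq]
  rwa [hset] at h

lemma span_top : affineSpan ℝ (SS n hn) = ⊤ := by
  have hnonempty : (SS n hn).Nonempty := ⟨0, Set.mem_insert _ _⟩
  rw [AffineSubspace.affineSpan_eq_top_iff_vectorSpan_eq_top_of_nonempty ℝ (Fin n → ℝ) (Fin n → ℝ) hnonempty]
  rw [eq_top_iff]
  intro x _
  obtain ⟨c, hc⟩ := Matrix.vecMul_surjective_iff_isUnit.2 (isUnit_MM hn) x
  have hx : x = ∑ i, c i • MM n hn i := by
    rw [← hc]
    funext j
    rw [Finset.sum_apply]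
    simp [Matrix.vecMul, dotProduct]
  rw [hx]
  refine Submodule.sum_mem _ fun i _ => Submodule.smul_mem _ _ ?_
  have hmem : MM n hn i ∈ SS n hn := Set.mem_insert_of_mem _ ⟨i, rfl⟩
  have := vsub_mem_vectorSpan ℝ hmem (Set.mem_insert (0 : Fin n → ℝ) _)
  simpa using this

lemma SS_lattice : SS n hn ⊆ latticePoints n := by
  rintro x (rfl | ⟨i, rfl⟩)
  · exact fun j => ⟨0, by simp⟩
  · intro j
    by_cases hi : i = ll n hn
    · rw [hi, MM_ll hn]
      split_ifs
      · exact ⟨(n : ℤ), by push_cast; ring⟩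
      · exact ⟨1, by norm_num⟩
    · rw [MM_ne hn hi]
      split_ifs
      · exact ⟨1, by norm_num⟩
      · exact ⟨0, by norm_num⟩

lemma cast_sub_real {k : ℕ} (hk : k ≤ n) : ((n - k : ℕ) : ℝ) = (n:ℝ) - k := by
  push_cast [Nat.cast_sub hk]; ring

/-- Nonnegativity of the last coordinate of any point of `r • K`, `r ≥ 0`. -/
lemma last_nonneg {r : ℝ} (hr : 0 ≤ r) {y : Fin n → ℝ}
    (hy : y ∈ r • convexHull ℝ (SS n hn)) : 0 ≤ y (ll n hn) := by
  have h0 : (0:ℝ) < n := hn0 hn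
  have h := (mu_of_mem hn hr hy).1 (ll n hn)
  rw [mu_apply_ll hn] at h
  have := mul_nonneg h h0.le
  rwa [div_mul_cancel₀ _ (ne_of_gt h0)] at this


/-- No decomposition with both parts of mass at most `n - 2` can produce the all-ones point. -/
lemma no_decomp {p q : ℕ} (hp : (p:ℝ) ≤ (n:ℝ) - 2) (hq : (q:ℝ) ≤ (n:ℝ) - 2)
    {y z : Fin n → ℝ}
    (hy : y ∈ ((p:ℝ) • convexHull ℝ (SS n hn)) ∩ latticePoints n)
    (hz : z ∈ ((q:ℝ) • convexHull ℝ (SS n hn)) ∩ latticePoints n)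
    (hyz : y + z = xone n) : False := by
  have hyl := last_nonneg hn (Nat.cast_nonneg p) hy.1
  have hzl := last_nonneg hn (Nat.cast_nonneg q) hz.1
  obtain ⟨zy, hzy⟩ := hy.2 (ll n hn)
  obtain ⟨zz, hzz⟩ := hz.2 (ll n hn)
  have hsum : y (ll n hn) + z (ll n hn) = 1 := by
    have := congrFun hyz (ll n hn)
    simpa [xone] using this
  have hzysum : zy + zz = 1 := by
    have h : (zy:ℝ) + (zz:ℝ) = 1 := by rw [← hzy, ← hzz]; exact hsum
    exact_mod_cast h
  have hzy0 : (0:ℤ) ≤ zy := by exact_mod_cast (hzy ▸ hyl)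
  have hzz0 : (0:ℤ) ≤ zz := by exact_mod_cast (hzz ▸ hzl)
  rcases (by omega : zy = 1 ∨ zz = 1) with h1 | h1
  · exact last_ne_one hn (Nat.cast_nonneg p) hp hy.2 hy.1 (by rw [hzy, h1]; norm_num)
  · exact last_ne_one hn (Nat.cast_nonneg q) hq hz.2 hz.1 (by rw [hzz, h1]; norm_num)

end SharpAux

open SharpAux in
/-- For every `n ≥ 4` there is a lattice simplex `K ⊆ ℝ^n` (the convex hull of a finite
affinely independent set of lattice points) with nonempty interior such that for every
integer `i` with `2 ≤ i ≤ n - 2` the equality `nK ∩ ℤ^n = ((n-i)K ∩ ℤ^n) + (iK ∩ ℤ^n)`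
fails, and the equality `(n-1)K ∩ ℤ^n = ((n-2)K ∩ ℤ^n) + (K ∩ ℤ^n)` also fails. -/
theorem exists_sharp_simplex (n : ℕ) (hn : 4 ≤ n) :
    ∃ K : Set (Fin n → ℝ),
      (∃ S : Set (Fin n → ℝ), S.Finite ∧ S ⊆ latticePoints n ∧
        AffineIndependent ℝ ((↑) : S → (Fin n → ℝ)) ∧ K = convexHull ℝ S) ∧
      (interior K).Nonempty ∧
      (∀ i : ℕ, 2 ≤ i → i ≤ n - 2 →
        ((n : ℝ) • K) ∩ latticePoints n ≠
          (((n - i : ℕ) : ℝ) • K) ∩ latticePoints n +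
            ((i : ℝ) • K) ∩ latticePoints n) ∧
      ((n - 1 : ℕ) : ℝ) • K ∩ latticePoints n ≠
        (((n - 2 : ℕ) : ℝ) • K) ∩ latticePoints n + (K ∩ latticePoints n) := by
  have h0 : (0:ℝ) < n := hn0 hn
  have hnr : (4:ℝ) ≤ (n:ℝ) := hnR hn
  refine ⟨convexHull ℝ (SS n hn),
    ⟨SS n hn, (Set.finite_range _).insert 0, SS_lattice hn, affineIndep_SS hn, rfl⟩,
    interior_convexHull_nonempty_iff_affineSpan_eq_top.2 (span_top hn), ?_, ?_⟩
  · intro i hi2 hin heq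
    have hx : xone n ∈ ((n:ℝ) • convexHull ℝ (SS n hn)) ∩ latticePoints n :=
      ⟨xone_mem hn (by linarith), xone_lattice⟩
    rw [heq] at hx
    obtain ⟨y, hy, z, hz, hyz⟩ := Set.mem_add.1 hx
    have hp : ((n - i : ℕ):ℝ) ≤ (n:ℝ) - 2 := by
      rw [cast_sub_real (by omega : i ≤ n)]
      have : (2:ℝ) ≤ (i:ℝ) := by exact_mod_cast hi2
      linarith
    have hq : ((i:ℕ):ℝ) ≤ (n:ℝ) - 2 := by
      have h1 : ((i:ℕ):ℝ) ≤ ((n - 2 : ℕ):ℝ) := by exact_mod_cast hin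
      rwa [cast_sub_real (by omega : 2 ≤ n)] at h1
    exact no_decomp hn hp hq hy hz hyz
  · intro heq
    have hx : xone n ∈ (((n - 1 : ℕ):ℝ) • convexHull ℝ (SS n hn)) ∩ latticePoints n := by
      refine ⟨xone_mem hn ?_, xone_lattice⟩
      rw [cast_sub_real (by omega : 1 ≤ n)]
      norm_num
    rw [heq] at hx
    obtain ⟨y, hy, z, hz, hyz⟩ := Set.mem_add.1 hx
    have hp : ((n - 2 : ℕ):ℝ) ≤ (n:ℝ) - 2 := by
      rw [cast_sub_real (by omega : 2 ≤ n)]; norm_num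
    have hq : ((1:ℕ):ℝ) ≤ (n:ℝ) - 2 := by
      push_cast
      linarith
    have hz1 : z ∈ (((1:ℕ):ℝ) • convexHull ℝ (SS n hn)) ∩ latticePoints n := by
      refine ⟨?_, hz.2⟩
      rw [Nat.cast_one, one_smul]
      exact hz.1
    exact no_decomp hn hp hq hy hz1 hyz
end

section
/- Let K be a projectively faithful lattice polytope in ℝ^n. If there exists an integer m ≥ n−1 such that mK ∩ ℤ^n = m·(K ∩ ℤ^n), then for all but finitely many positive integers m' (in fact for all m' ≥ m) one has m'K ∩ ℤ^n = m'·(K ∩ ℤ^n). -/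
open Pointwise

namespace EvAux

variable {n : ℕ}


variable {n : ℕ}

lemma lat_add {x y : Fin n → ℝ} (hx : x ∈ latticePoints n) (hy : y ∈ latticePoints n) :
    x + y ∈ latticePoints n := by
  intro i
  obtain ⟨a, ha⟩ := hx i; obtain ⟨b, hb⟩ := hy i
  exact ⟨a + b, by simp [ha, hb]⟩

lemma lat_sub {x y : Fin n → ℝ} (hx : x ∈ latticePoints n) (hy : y ∈ latticePoints n) :
    x - y ∈ latticePoints n := by
  intro i
  obtain ⟨a, ha⟩ := hx i; obtain ⟨b, hb⟩ := hy i
  exact ⟨a - b, by simp [ha, hb]⟩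

lemma lat_zero : (0 : Fin n → ℝ) ∈ latticePoints n := fun i => ⟨0, by simp⟩

lemma lat_sum {ι : Type*} (s : Finset ι) (f : ι → Fin n → ℝ)
    (h : ∀ i ∈ s, f i ∈ latticePoints n) : (∑ i ∈ s, f i) ∈ latticePoints n := by
  classical
  induction s using Finset.induction_on with
  | empty => simpa using lat_zero
  | @insert _ _ hnotmem ih =>
    rw [Finset.sum_insert hnotmem]
    exact lat_add (h _ (Finset.mem_insert_self _ _))
      (ih fun i hi => h i (Finset.mem_insert_of_mem hi))

/-- A nonnegative combination with total weight `c` of points of a convex set `C`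
lies in `c • C`. -/
lemma sum_mem_smul_set {C : Set (Fin n → ℝ)} (hC : Convex ℝ C) (hne : C.Nonempty)
    {ι : Type*} (s : Finset ι) (f : ι → Fin n → ℝ) (w : ι → ℝ)
    (h0 : ∀ i ∈ s, 0 ≤ w i) (hf : ∀ i ∈ s, f i ∈ C) {c : ℝ} (hc : ∑ i ∈ s, w i = c) :
    (∑ i ∈ s, w i • f i) ∈ c • C := by
  have hc0 : 0 ≤ c := hc ▸ Finset.sum_nonneg h0
  rcases eq_or_lt_of_le hc0 with h | h
  · obtain ⟨p, hp⟩ := hne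
    have hall : ∀ i ∈ s, w i = 0 :=
      (Finset.sum_eq_zero_iff_of_nonneg h0).1 (by rw [hc, ← h])
    have : (∑ i ∈ s, w i • f i) = (0:ℝ) • p := by
      rw [Finset.sum_eq_zero (fun i hi => by rw [hall i hi, zero_smul]), zero_smul]
    rw [this, ← h]
    exact Set.smul_mem_smul_set hp
  · have : (∑ i ∈ s, w i • f i) = c • (∑ i ∈ s, (c⁻¹ * w i) • f i) := by
      rw [Finset.smul_sum]
      refine Finset.sum_congr rfl fun i hi => ?_
      rw [smul_smul, ← mul_assoc, mul_inv_cancel₀ h.ne', one_mul]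
    rw [this]
    refine Set.smul_mem_smul_set ?_
    refine hC.sum_mem (fun i hi => mul_nonneg (inv_nonneg.2 hc0) (h0 i hi)) ?_ hf
    rw [← Finset.mul_sum, hc, inv_mul_cancel₀ h.ne']

/-- Lattice points in a convex hull of a finite set form a finite set. -/
lemma finite_conv_lat (S : Set (Fin n → ℝ)) (hS : S.Finite) :
    (convexHull ℝ S ∩ latticePoints n).Finite := by
  classical
  obtain ⟨R, hR⟩ : ∃ R : ℝ, ∀ x ∈ S, ‖x‖ ≤ R := hS.isBounded.exists_norm_le
  have hconv : convexHull ℝ S ⊆ Metric.closedBall 0 R := by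
    apply convexHull_min _ (convex_closedBall _ _)
    intro x hx
    simpa [Metric.mem_closedBall, dist_zero_right] using hR x hx
  set B : Set (Fin n → ℤ) := Set.pi Set.univ (fun _ => Set.Icc (-⌈R⌉) ⌈R⌉) with hB
  have hBfin : B.Finite := Set.Finite.pi fun _ => Set.finite_Icc _ _
  refine Set.Finite.subset (hBfin.image (fun g => fun i => ((g i : ℝ)))) ?_
  rintro x ⟨hxc, hxl⟩
  have hxb : ‖x‖ ≤ R := by simpa [dist_zero_right] using hconv hxc
  refine ⟨fun i => (hxl i).choose, ?_, ?_⟩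
  · intro i _
    have hxi : x i = ((hxl i).choose : ℝ) := (hxl i).choose_spec
    have h1 : |x i| ≤ R := by
      calc |x i| = ‖x i‖ := rfl
        _ ≤ ‖x‖ := norm_le_pi_norm x i
        _ ≤ R := hxb
    rw [hxi] at h1
    rw [abs_le] at h1
    constructor
    · have := h1.1
      have h2 : (-⌈R⌉ : ℝ) ≤ ((hxl i).choose : ℝ) :=
        le_trans (by simpa using neg_le_neg (Int.le_ceil R)) this
      exact_mod_cast h2
    · exact_mod_cast le_trans h1.2 (Int.le_ceil R)
  · funext i
    exact ((hxl i).choose_spec).symm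

/-- Uniqueness of barycentric coordinates over an affinely independent family. -/
lemma coeff_eq {k : ℕ} {v : Fin k → (Fin n → ℝ)} (hv : AffineIndependent ℝ v)
    {a b : Fin k → ℝ} (hs : ∑ i, a i = ∑ i, b i)
    (h : ∑ i, a i • v i = ∑ i, b i • v i) : a = b := by
  funext i
  have := affineIndependent_iff.1 hv Finset.univ (a - b)
    (by simpa [Finset.sum_sub_distrib] using sub_eq_zero.2 hs)
    (by simpa [sub_smul, Finset.sum_sub_distrib] using sub_eq_zero.2 h) i (Finset.mem_univ i)
  simpa [sub_eq_zero] using this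


/-- Replacing a vertex of an affinely independent family by a combination in which it
occurs with nonzero coefficient preserves affine independence. -/
lemma ai_update {k : ℕ} {v : Fin k → (Fin n → ℝ)} (hv : AffineIndependent ℝ v)
    (j : Fin k) (ν : Fin k → ℝ) (hνs : ∑ i, ν i = 1) (hνj : ν j ≠ 0) :
    AffineIndependent ℝ (Function.update v j (∑ i, ν i • v i)) := by
  classical
  set q := ∑ i, ν i • v i with hq
  rw [affineIndependent_iff_of_fintype]
  intro w hw hz i
  rw [Finset.weightedVSub_eq_linear_combination _ hw] at hz
  set c : Fin k → ℝ := fun i => (if i = j then 0 else w i) + w j * ν i with hc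
  have hsum_c : ∑ i, c i = 0 := by
    rw [hc]
    rw [Finset.sum_add_distrib, ← Finset.mul_sum, hνs]
    have h1 : ∀ t, (if t = j then (0:ℝ) else w t) = w t - (if t = j then w j else 0) := by
      intro t; by_cases h : t = j <;> simp [h]
    rw [Finset.sum_congr rfl (fun t _ => h1 t), Finset.sum_sub_distrib]
    simp [Finset.sum_ite_eq', hw]
  have hcomb : ∑ i, c i • v i = 0 := by
    have h2 : ∀ t, w t • Function.update v j q t
        = (if t = j then 0 else w t) • v t + (if t = j then w j else 0) • q := by
      intro t; by_cases h : t = j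
      · subst h; simp
      · simp [h]
    have h3 : ∑ t, w t • Function.update v j q t
        = ∑ t, (if t = j then 0 else w t) • v t + w j • q := by
      rw [Finset.sum_congr rfl (fun t _ => h2 t), Finset.sum_add_distrib]
      congr 1
      have : ∀ t, (if t = j then w j else 0) • q = if t = j then w j • q else 0 := by
        intro t; by_cases h : t = j <;> simp [h]
      rw [Finset.sum_congr rfl (fun t _ => this t), Finset.sum_ite_eq' Finset.univ j]
      simp
    have h4 : w j • q = ∑ t, (w j * ν t) • v t := by
      rw [hq, Finset.smul_sum]
      exact Finset.sum_congr rfl fun t _ => by rw [smul_smul]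
    rw [h3, h4, ← Finset.sum_add_distrib] at hz
    rw [← hz]
    refine Finset.sum_congr rfl fun t _ => ?_
    rw [hc, add_smul]
  have hcall := affineIndependent_iff.1 hv Finset.univ c hsum_c hcomb
  have hwj : w j = 0 := by
    have hcj := hcall j (Finset.mem_univ j)
    have hcj' : w j * ν j = 0 := by simpa [hc] using hcj
    exact (mul_eq_zero.1 hcj').resolve_right hνj
  by_cases h : i = j
  · rw [h]; exact hwj
  · have hci := hcall i (Finset.mem_univ i)
    rw [hc] at hci
    simpa [h, hwj] using hci

/-- Coefficients for membership in the convex hull of the range of an injective family. -/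
lemma exists_coeffs_of_mem_convexHull_range {k : ℕ} {u : Fin k → (Fin n → ℝ)}
    (hu : Function.Injective u) {x : Fin n → ℝ}
    (hx : x ∈ convexHull ℝ (Set.range u)) :
    ∃ β : Fin k → ℝ, (∀ i, 0 ≤ β i) ∧ ∑ i, β i = 1 ∧ ∑ i, β i • u i = x := by
  classical
  have hrange : Set.range u = ↑(Finset.univ.image u) := by
    simp
  rw [hrange, Finset.convexHull_eq] at hx
  obtain ⟨w, hw0, hw1, hwx⟩ := hx
  refine ⟨fun i => w (u i), fun i => hw0 _ (Finset.mem_image_of_mem u (Finset.mem_univ i)),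
    ?_, ?_⟩
  · rw [← hw1, Finset.sum_image (fun a _ b _ h => hu h)]
  · rw [← hwx, Finset.centerMass_eq_of_sum_1 _ _ hw1,
      Finset.sum_image (fun a _ b _ h => hu h)]
    simp



/-- The key descent lemma: if a lattice point `z` is a nonnegative combination of `n+1`
affinely independent lattice points with all coefficients in `[0,1)` summing to `n`, then
`z = w + y` with `w` a lattice point of the simplex and `y` a nonnegative combination with
total weight `n - 1`. -/
lemma box (hn : 1 ≤ n) : ∀ N : ℕ, ∀ v : Fin (n+1) → (Fin n → ℝ),
    AffineIndependent ℝ v → (∀ i, v i ∈ latticePoints n) →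
    ∀ lam : Fin (n+1) → ℝ, (∀ i, 0 ≤ lam i) → (∀ i, lam i < 1) →
    ∑ i, lam i = (n:ℝ) → ∀ z, z = ∑ i, lam i • v i → z ∈ latticePoints n →
    (convexHull ℝ (Set.range v) ∩ latticePoints n).ncard ≤ N →
    ∃ w ∈ convexHull ℝ (Set.range v) ∩ latticePoints n,
      ∃ μ : Fin (n+1) → ℝ, (∀ i, 0 ≤ μ i) ∧ ∑ i, μ i = (n:ℝ) - 1 ∧
        z - w = ∑ i, μ i • v i := by
  classical
  intro N
  induction N with
  | zero =>
    intro v _ hlatv lam _ _ _ z _ _ hN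
    exfalso
    have hfin := finite_conv_lat (Set.range v) (Set.finite_range v)
    have hpos : 0 < (convexHull ℝ (Set.range v) ∩ latticePoints n).ncard :=
      (Set.ncard_pos hfin).2 ⟨v 0, subset_convexHull ℝ _ ⟨0, rfl⟩, hlatv 0⟩
    omega
  | succ N ih =>
    intro v hAI hlatv lam hl0 hl1 hlsum z hzdef hzlat hN
    -- the complementary weights
    set ν : Fin (n+1) → ℝ := fun i => 1 - lam i with hν
    have hν0 : ∀ i, 0 < ν i := fun i => by simp only [hν]; linarith [hl1 i]
    have hνs : ∑ i, ν i = 1 := by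
      simp only [hν]
      rw [Finset.sum_sub_distrib, hlsum]
      simp
    set q := ∑ i, ν i • v i with hq
    have hqlat : q ∈ latticePoints n := by
      have h1 : q = (∑ i, v i) - z := by
        rw [hq, hzdef, ← Finset.sum_sub_distrib]
        exact Finset.sum_congr rfl fun i _ => by rw [hν]; rw [sub_smul, one_smul]
      rw [h1]
      exact lat_sub (lat_sum _ _ fun i _ => hlatv i) hzlat
    have hconv : Convex ℝ (convexHull ℝ (Set.range v)) := convex_convexHull ℝ _
    have hvmem : ∀ i, v i ∈ convexHull ℝ (Set.range v) :=
      fun i => subset_convexHull ℝ _ ⟨i, rfl⟩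
    have hcne : (convexHull ℝ (Set.range v)).Nonempty := ⟨v 0, hvmem 0⟩
    have hqconv : q ∈ convexHull ℝ (Set.range v) := by
      have h2 := sum_mem_smul_set hconv hcne Finset.univ v ν
        (fun i _ => (hν0 i).le) (fun i _ => hvmem i) hνs
      obtain ⟨y, hy, hyq⟩ := h2
      simp only [one_smul] at hyq
      rw [hq, ← hyq]; exact hy
    obtain ⟨j, -, hjmin⟩ := Finset.exists_min_image Finset.univ
      (fun i => lam i / ν i) ⟨0, Finset.mem_univ 0⟩
    set r := lam j / ν j with hr
    have hr0 : 0 ≤ r := div_nonneg (hl0 j) (hν0 j).le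
    have hrν : ∀ i, r * ν i ≤ lam i := fun i =>
      (le_div_iff₀ (hν0 i)).1 (hjmin i (Finset.mem_univ i))
    have hrj : r * ν j = lam j := div_mul_cancel₀ (lam j) (hν0 j).ne'
    -- the re-expansion operator from the base `update v j q` to the base `v`
    set Ee : (Fin (n+1) → ℝ) → (Fin (n+1) → ℝ) :=
      fun a i => if i = j then a j * ν j else a i + a j * ν i with hEe
    have hEe_eq : ∀ a t, Ee a t = (a t - (if t = j then a t else 0)) + a j * ν t := by
      intro a t; by_cases h : t = j
      · subst h; simp [hEe]
      · simp [hEe, h]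
    have hEs : ∀ a : Fin (n+1) → ℝ, ∑ i, Ee a i = ∑ i, a i := by
      intro a
      rw [Finset.sum_congr rfl fun t _ => hEe_eq a t, Finset.sum_add_distrib,
        Finset.sum_sub_distrib, Finset.sum_ite_eq', ← Finset.mul_sum, hνs]
      simp
    have hE0 : ∀ a : Fin (n+1) → ℝ, (∀ i, 0 ≤ a i) → ∀ i, 0 ≤ Ee a i := by
      intro a ha i
      by_cases h : i = j
      · simp only [hEe, if_pos h]
        exact mul_nonneg (ha j) (hν0 j).le
      · simp only [hEe, if_neg h]
        exact add_nonneg (ha i) (mul_nonneg (ha j) (hν0 i).le)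
    have hsmulq : ∀ c : ℝ, ∑ t, (c * ν t) • v t = c • q := by
      intro c
      rw [hq, Finset.smul_sum]
      exact Finset.sum_congr rfl fun t _ => by rw [smul_smul]
    have key : ∀ a : Fin (n+1) → ℝ, ∑ i, a i • Function.update v j q i
        = (∑ i, a i • v i) - a j • v j + a j • q := by
      intro a
      have h2 : ∀ t, a t • Function.update v j q t
          = a t • v t - (if t = j then a t • v t else 0) + (if t = j then a t • q else 0) := by
        intro t; by_cases h : t = j
        · subst h; simp
        · simp [h]
      rw [Finset.sum_congr rfl fun t _ => h2 t, Finset.sum_add_distrib,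
        Finset.sum_sub_distrib, Finset.sum_ite_eq', Finset.sum_ite_eq']
      simp
    have keyE : ∀ a : Fin (n+1) → ℝ, ∑ i, Ee a i • v i
        = (∑ i, a i • v i) - a j • v j + a j • q := by
      intro a
      have h2 : ∀ t, Ee a t • v t
          = (a t • v t - (if t = j then a t • v t else 0)) + (a j * ν t) • v t := by
        intro t
        rw [hEe_eq a t, add_smul, sub_smul]
        by_cases h : t = j <;> simp [h]
      rw [Finset.sum_congr rfl fun t _ => h2 t, Finset.sum_add_distrib,
        Finset.sum_sub_distrib, Finset.sum_ite_eq', hsmulq]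
      simp
    have hEv : ∀ a : Fin (n+1) → ℝ,
        ∑ i, Ee a i • v i = ∑ i, a i • Function.update v j q i := by
      intro a; rw [keyE, key]
    -- weights with respect to the new base
    set lam' : Fin (n+1) → ℝ := fun i => if i = j then r else lam i - r * ν i with hlam'
    have hlam'0 : ∀ i, 0 ≤ lam' i := by
      intro i; by_cases h : i = j
      · simp only [hlam', if_pos h]; exact hr0
      · simp only [hlam', if_neg h]; linarith [hrν i]
    have hl'decomp : ∀ t, lam' t = (lam t - r * ν t) + (if t = j then r else 0) := by
      intro t; by_cases h : t = j
      · subst h; simp [hlam', hrj]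
      · simp [hlam', h]
    have hlam's : ∑ i, lam' i = (n:ℝ) := by
      rw [Finset.sum_congr rfl fun t _ => hl'decomp t, Finset.sum_add_distrib,
        Finset.sum_sub_distrib, Finset.sum_ite_eq', ← Finset.mul_sum, hνs, hlsum]
      simp
    have hzdef' : z = ∑ i, lam' i • Function.update v j q i := by
      have h5 : ∑ i, lam' i • v i = (z - r • q) + r • v j := by
        rw [Finset.sum_congr rfl (fun t _ => by rw [hl'decomp t, add_smul, sub_smul]),
          Finset.sum_add_distrib, Finset.sum_sub_distrib, hsmulq, ← hzdef]
        congr 1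
        have h6 : ∀ t, (if t = j then r else 0) • v t = if t = j then r • v t else 0 := by
          intro t; by_cases h : t = j <;> simp [h]
        rw [Finset.sum_congr rfl fun t _ => h6 t, Finset.sum_ite_eq']
        simp
      have hl'j : lam' j = r := by simp [hlam']
      rw [key lam', h5, hl'j]
      abel
    by_cases hesc : ∃ i, 1 ≤ lam' i
    · -- escape case: some coefficient is at least 1
      obtain ⟨i, hi⟩ := hesc
      have hwmem : Function.update v j q i ∈ convexHull ℝ (Set.range v) ∩ latticePoints n := by
        by_cases h : i = j
        · subst h; rw [Function.update_self]; exact ⟨hqconv, hqlat⟩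
        · rw [Function.update_of_ne h]; exact ⟨hvmem i, hlatv i⟩
      set b : Fin (n+1) → ℝ := fun t => lam' t - (if t = i then 1 else 0) with hb
      have hb0 : ∀ t, 0 ≤ b t := by
        intro t
        have hbt : b t = lam' t - if t = i then 1 else 0 := rfl
        by_cases h : t = i
        · rw [hbt, if_pos h, h]; linarith
        · rw [hbt, if_neg h]; simpa using hlam'0 t
      have hbsum : ∑ t, b t = (n:ℝ) - 1 := by
        simp only [hb]
        rw [Finset.sum_sub_distrib, hlam's, Finset.sum_ite_eq']
        simp
      have hbv : ∑ t, b t • Function.update v j q t = z - Function.update v j q i := by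
        simp only [hb, sub_smul]
        rw [Finset.sum_sub_distrib, ← hzdef']
        congr 1
        have h6 : ∀ t, (if t = i then (1:ℝ) else 0) • Function.update v j q t
            = if t = i then Function.update v j q t else 0 := by
          intro t; by_cases h : t = i <;> simp [h]
        rw [Finset.sum_congr rfl fun t _ => h6 t, Finset.sum_ite_eq']
        simp
      refine ⟨Function.update v j q i, hwmem, Ee b, hE0 b hb0, by rw [hEs b, hbsum], ?_⟩
      rw [hEv b, hbv]
    · -- recursion case: all coefficients are `< 1`, subdivide
      push_neg at hesc
      have hAI' : AffineIndependent ℝ (Function.update v j q) := by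
        have := ai_update hAI j ν hνs (hν0 j).ne'
        rwa [← hq] at this
      have hlat' : ∀ i, Function.update v j q i ∈ latticePoints n := by
        intro i; by_cases h : i = j
        · subst h; rw [Function.update_self]; exact hqlat
        · rw [Function.update_of_ne h]; exact hlatv i
      have hrange' : Set.range (Function.update v j q) ⊆ convexHull ℝ (Set.range v) := by
        rintro _ ⟨i, rfl⟩
        by_cases h : i = j
        · subst h; rw [Function.update_self]; exact hqconv
        · rw [Function.update_of_ne h]; exact hvmem i
      have hsub : convexHull ℝ (Set.range (Function.update v j q))
          ⊆ convexHull ℝ (Set.range v) := convexHull_min hrange' hconv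
      have hvj_not : v j ∉ convexHull ℝ (Set.range (Function.update v j q)) := by
        intro hmem
        obtain ⟨β, hβ0, hβ1, hβv⟩ := exists_coeffs_of_mem_convexHull_range hAI'.injective hmem
        have hcomb : ∑ t, Ee β t • v t = ∑ t, (fun t => if t = j then (1:ℝ) else 0) t • v t := by
          rw [hEv β, hβv]
          have h6 : ∀ t, (if t = j then (1:ℝ) else 0) • v t = if t = j then v t else 0 := by
            intro t; by_cases h : t = j <;> simp [h]
          rw [Finset.sum_congr rfl fun t _ => h6 t, Finset.sum_ite_eq']
          simp
        have hγδ : Ee β = fun t => if t = j then (1:ℝ) else 0 := by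
          refine coeff_eq hAI ?_ hcomb
          rw [hEs β, hβ1, Finset.sum_ite_eq']
          simp
        have hj' : β j * ν j = 1 := by
          have h7 := congrFun hγδ j
          simpa [hEe] using h7
        have hβjpos : 0 < β j := by nlinarith [hν0 j]
        obtain ⟨i0, hi0⟩ : ∃ i0 : Fin (n+1), i0 ≠ j :=
          Fintype.exists_ne_of_one_lt_card (by simp; omega) j
        have h8 := congrFun hγδ i0
        simp only [hEe, if_neg hi0] at h8
        nlinarith [hβ0 i0, mul_pos hβjpos (hν0 i0)]
      have hss : convexHull ℝ (Set.range (Function.update v j q)) ∩ latticePoints n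
          ⊂ convexHull ℝ (Set.range v) ∩ latticePoints n := by
        constructor
        · exact Set.inter_subset_inter_left _ hsub
        · intro hback
          exact hvj_not (hback ⟨hvmem j, hlatv j⟩).1
      have hfin := finite_conv_lat (Set.range v) (Set.finite_range v)
      have hlt := Set.ncard_lt_ncard hss hfin
      obtain ⟨w, hwmem, μ', hμ'0, hμ's, hμ'v⟩ := ih (Function.update v j q) hAI' hlat'
        lam' hlam'0 hesc hlam's z hzdef' hzlat (by omega)
      exact ⟨w, ⟨hsub hwmem.1, hwmem.2⟩, Ee μ', hE0 μ' hμ'0,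
        by rw [hEs μ', hμ's], by rw [hEv μ']; exact hμ'v⟩

/-- One-step decomposition: a lattice point of `(c+1)K` splits as a lattice point of `K`
plus a lattice point of `cK`, provided `n ≤ c + 1`. -/
lemma step_lemma (S : Set (Fin n → ℝ)) (hne : S.Nonempty)
    (hlat : S ⊆ latticePoints n) (c : ℕ) (hc : n ≤ c + 1) {z : Fin n → ℝ}
    (hz : z ∈ (((c:ℝ) + 1) • convexHull ℝ S) ∩ latticePoints n) :
    ∃ x y, x ∈ convexHull ℝ S ∩ latticePoints n ∧
      y ∈ ((c:ℝ) • convexHull ℝ S) ∩ latticePoints n ∧ z = x + y := by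
  classical
  have hKconv : Convex ℝ (convexHull ℝ S) := convex_convexHull ℝ S
  have hKne : (convexHull ℝ S).Nonempty := hne.mono (subset_convexHull ℝ S)
  obtain ⟨hz1, hzlat⟩ := hz
  obtain ⟨x₀, hx₀, hzx⟩ := hz1
  obtain ⟨ι, _i, v, w, hrange, hAI, hpos, hw1, hsum⟩ :=
    eq_pos_convex_span_of_mem_convexHull hx₀
  set lam : ι → ℝ := fun i => ((c:ℝ)+1) * w i with hlam
  have hlam0 : ∀ i, 0 < lam i := fun i => mul_pos (by positivity) (hpos i)
  have hlamsum : ∑ i, lam i = (c:ℝ)+1 := by rw [hlam, ← Finset.mul_sum, hw1, mul_one]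
  have hvS : ∀ i, v i ∈ S := fun i => hrange ⟨i, rfl⟩
  have hzx' : ((c:ℝ)+1) • x₀ = z := hzx
  have hzdef : z = ∑ i, lam i • v i := by
    rw [← hzx', ← hsum, Finset.smul_sum]
    exact Finset.sum_congr rfl fun i _ => (smul_smul ((c:ℝ)+1) (w i) (v i))
  by_cases hA : ∃ i, 1 ≤ lam i
  · obtain ⟨i, hi⟩ := hA
    have hdiff : z - v i = ∑ t, (lam t - if t = i then 1 else 0) • v t := by
      rw [Finset.sum_congr rfl (fun t _ => by rw [sub_smul]), Finset.sum_sub_distrib, ← hzdef]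
      congr 1
      have h6 : ∀ t, (if t = i then (1:ℝ) else 0) • v t = if t = i then v t else 0 := by
        intro t; by_cases h : t = i <;> simp [h]
      rw [Finset.sum_congr rfl fun t _ => h6 t, Finset.sum_ite_eq']
      simp
    refine ⟨v i, z - v i, ⟨subset_convexHull ℝ S (hvS i), hlat (hvS i)⟩,
      ⟨?_, lat_sub hzlat (hlat (hvS i))⟩, by abel⟩
    rw [hdiff]
    refine sum_mem_smul_set hKconv hKne Finset.univ v _ ?_
      (fun t _ => subset_convexHull ℝ S (hvS t)) ?_
    · intro t _
      by_cases h : t = i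
      · rw [if_pos h, h]; linarith
      · rw [if_neg h]; linarith [hlam0 t]
    · rw [Finset.sum_sub_distrib, hlamsum, Finset.sum_ite_eq']
      simp
  · push_neg at hA
    have hnel : Nonempty ι := by
      by_contra h
      rw [not_nonempty_iff] at h
      rw [Finset.univ_eq_empty, Finset.sum_empty] at hlamsum
      have h0 : (0:ℝ) ≤ (c:ℝ) := Nat.cast_nonneg c
      linarith
    have hcard_le : Fintype.card ι ≤ n + 1 := by
      have h1 := hAI.card_le_finrank_succ
      have h2 : Module.finrank ℝ (vectorSpan ℝ (Set.range v))
          ≤ Module.finrank ℝ (Fin n → ℝ) := Submodule.finrank_le _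
      have h3 : Module.finrank ℝ (Fin n → ℝ) = n := by
        simp [Module.finrank_pi]
      omega
    have hlower : ((c:ℝ) + 1) < Fintype.card ι := by
      calc (c:ℝ)+1 = ∑ i, lam i := hlamsum.symm
        _ < ∑ _i : ι, (1:ℝ) :=
            Finset.sum_lt_sum_of_nonempty Finset.univ_nonempty (fun i _ => hA i)
        _ = Fintype.card ι := by simp
    have hlower' : c + 2 ≤ Fintype.card ι := by
      have : (c + 1 : ℕ) < Fintype.card ι := by exact_mod_cast hlower
      omega
    have hcard : Fintype.card ι = n + 1 := by omega
    have hnc : n = c + 1 := by omega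
    have hn1 : 1 ≤ n := by omega
    set e := (Fintype.equivFinOfCardEq hcard).symm with he
    set V : Fin (n+1) → (Fin n → ℝ) := v ∘ e with hV
    set LAM : Fin (n+1) → ℝ := lam ∘ e with hLAM
    have hAIV : AffineIndependent ℝ V := hAI.comp_embedding e.toEmbedding
    have hrangeV : Set.range V = Set.range v := by
      rw [hV, Set.range_comp, Equiv.range_eq_univ, Set.image_univ]
    have hcast : ((c:ℝ) + 1) = (n:ℝ) := by rw [hnc]; push_cast; ring
    have hsumV : ∑ i, LAM i = (n:ℝ) := by
      rw [hLAM, ← hcast, ← hlamsum]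
      exact Equiv.sum_comp e lam
    have hzV : z = ∑ i, LAM i • V i := by
      rw [hzdef, ← Equiv.sum_comp e (fun i => lam i • v i)]
      rfl
    obtain ⟨w', ⟨hw'c, hw'l⟩, μ, hμ0, hμs, hμv⟩ :=
      box hn1 ((convexHull ℝ (Set.range V) ∩ latticePoints n).ncard) V hAIV
        (fun i => hlat (hvS (e i))) LAM (fun i => (hlam0 (e i)).le) (fun i => hA (e i))
        hsumV z hzV hzlat le_rfl
    have hVconvS : convexHull ℝ (Set.range V) ⊆ convexHull ℝ S := by
      rw [hrangeV]
      exact convexHull_mono (Set.range_subset_iff.2 hvS)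
    refine ⟨w', z - w', ⟨hVconvS hw'c, hw'l⟩, ⟨?_, lat_sub hzlat hw'l⟩, by abel⟩
    rw [hμv]
    have hμc : ∑ i, μ i = (c:ℝ) := by
      rw [hμs, ← hcast]; ring
    exact sum_mem_smul_set hKconv hKne Finset.univ V μ (fun i _ => hμ0 i)
      (fun i _ => hVconvS (subset_convexHull ℝ _ ⟨i, rfl⟩)) hμc

end EvAux

/-- A lattice polytope is projectively faithful if the differences of its lattice points
generate the full lattice `ℤ^n` as an abelian group. -/
def ProjectivelyFaithful {n : ℕ} (K : Set (Fin n → ℝ)) : Prop :=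
  (AddSubgroup.closure ((K ∩ latticePoints n) - (K ∩ latticePoints n)) :
    Set (Fin n → ℝ)) = latticePoints n

/-- The lattice cone `C_v = ⋃_{m ≥ 1} m((K - v) ∩ ℤ^n)` at a point `v`, where `m(⬝)` is
the `m`-fold Minkowski sum. -/
def latticeCone {n : ℕ} (K : Set (Fin n → ℝ)) (v : Fin n → ℝ) : Set (Fin n → ℝ) :=
  ⋃ (m : ℕ) (_ : 1 ≤ m), nsmulSet m (((fun x => x - v) '' K) ∩ latticePoints n)

/-- `C_v` is unperforated: any lattice point with a positive multiple in `C_v` is itself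
in `C_v`. -/
def Unperforated {n : ℕ} (C : Set (Fin n → ℝ)) : Prop :=
  ∀ x ∈ latticePoints n, ∀ m : ℕ, 0 < m → (m : ℝ) • x ∈ C → x ∈ C

/-- A lattice polytope is locally solid if the cone `C_v` is unperforated for every
extreme point `v` of `K`. -/
def LocallySolid {n : ℕ} (K : Set (Fin n → ℝ)) : Prop :=
  ∀ v ∈ K.extremePoints ℝ, Unperforated (latticeCone K v)

/-- Let `K` be a projectively faithful lattice polytope in `ℝ^n`.  If
`mK ∩ ℤ^n = m(K ∩ ℤ^n)` for some integer `m ≥ n - 1`, then `m'K ∩ ℤ^n = m'(K ∩ ℤ^n)`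
for every `m' ≥ m` (hence for all but finitely many positive integers `m'`). -/
theorem eventually_solid_of_one_dilate (n : ℕ) (K : Set (Fin n → ℝ))
    (hK : IsLatticePolytope K) (hpf : ProjectivelyFaithful K)
    (m : ℕ) (hm : n - 1 ≤ m)
    (heq : ((m : ℝ) • K) ∩ latticePoints n = nsmulSet m (K ∩ latticePoints n)) :
    ∀ m' : ℕ, m ≤ m' →
      ((m' : ℝ) • K) ∩ latticePoints n = nsmulSet m' (K ∩ latticePoints n) := by
  classical
  obtain ⟨S, hSfin, hSne, hSlat, hKS⟩ := hK
  have hKconv : Convex ℝ K := hKS ▸ convex_convexHull ℝ S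
  intro m' hm'
  induction m', hm' using Nat.le_induction with
  | base => exact heq
  | succ k hk ih =>
    apply Set.Subset.antisymm
    · intro z hz
      have hcast : ((k + 1 : ℕ) : ℝ) = (k:ℝ) + 1 := by push_cast; ring
      have hz' : z ∈ (((k:ℝ) + 1) • convexHull ℝ S) ∩ latticePoints n := by
        rw [← hKS, ← hcast]; exact hz
      obtain ⟨x, y, hx, hy, hzxy⟩ := EvAux.step_lemma S hSne hSlat k (by omega) hz'
      rw [← hKS] at hx hy
      rw [ih] at hy
      show z ∈ (K ∩ latticePoints n) + nsmulSet k (K ∩ latticePoints n)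
      rw [hzxy]
      exact Set.add_mem_add hx hy
    · intro z hz
      have hz' : z ∈ (K ∩ latticePoints n) + nsmulSet k (K ∩ latticePoints n) := hz
      obtain ⟨x, hx, y, hy, rfl⟩ := Set.mem_add.1 hz'
      rw [← ih] at hy
      have hcast : ((k + 1 : ℕ) : ℝ) = (k:ℝ) + 1 := by push_cast; ring
      constructor
      · rw [hcast]
        have h1 : ((k:ℝ) + 1) • K = (1:ℝ) • K + (k:ℝ) • K := by
          rw [← Convex.add_smul hKconv zero_le_one (Nat.cast_nonneg k), add_comm]
        rw [h1]
        refine Set.add_mem_add ?_ hy.1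
        rw [one_smul]
        exact hx.1
      · exact EvAux.lat_add hx.2 hy.2
end

section
/- Let K be a projectively faithful lattice polytope in ℝ^n. If mK ∩ ℤ^n = m·(K ∩ ℤ^n) holds for all but finitely many positive integers m, then K is locally solid: for every extreme point v of K, the set C_v = ⋃_{m≥1} m·((K − v) ∩ ℤ^n) is unperforated, i.e., whenever x ∈ ℤ^n and mx ∈ C_v for some positive integer m, then x ∈ C_v. -/
open Pointwise

lemma lattice_add_nsmul {n : ℕ} {x v : Fin n → ℝ} (hx : x ∈ latticePoints n)
    (hv : v ∈ latticePoints n) (j : ℕ) : x + (j : ℝ) • v ∈ latticePoints n := by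
  intro i
  obtain ⟨a, ha⟩ := hx i
  obtain ⟨b, hb⟩ := hv i
  refine ⟨a + j * b, ?_⟩
  simp only [Pi.add_apply, Pi.smul_apply, smul_eq_mul, ha, hb]
  push_cast
  ring

lemma nsmulSet_mono {n : ℕ} {A B : Set (Fin n → ℝ)} (hAB : A ⊆ B) :
    ∀ k, nsmulSet k A ⊆ nsmulSet k B := by
  intro k
  induction k with
  | zero => exact le_rfl
  | succ k ih => exact Set.add_subset_add hAB ih

lemma nsmulSet_subset_smul_s11 {n : ℕ} {B : Set (Fin n → ℝ)} (hB : Convex ℝ B) :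
    ∀ k, 1 ≤ k → nsmulSet k B ⊆ (k : ℝ) • B := by
  intro k
  induction k with
  | zero => intro h; exact absurd h (by omega)
  | succ k ih =>
    intro _ x hx
    obtain ⟨a, ha, b, hb, rfl⟩ := hx
    rcases Nat.eq_zero_or_pos k with rfl | hk
    · simp only [nsmulSet, Set.mem_singleton_iff] at hb
      subst hb
      exact ⟨a, ha, by simp⟩
    · obtain ⟨c, hc, rfl⟩ := ih hk hb
      have hk1 : (0:ℝ) < (k:ℝ) + 1 := by positivity
      refine ⟨(1 / ((k:ℝ)+1)) • a + ((k:ℝ) / ((k:ℝ)+1)) • c, hB ha hc (by positivity)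
        (by positivity) (by field_simp; ring), ?_⟩
      show ((k+1:ℕ):ℝ) • ((1 / ((k:ℝ)+1)) • a + ((k:ℝ) / ((k:ℝ)+1)) • c) = a + (k:ℝ) • c
      push_cast
      match_scalars <;> field_simp

lemma nsmulSet_translate {n : ℕ} {K : Set (Fin n → ℝ)} {v : Fin n → ℝ}
    (hv : v ∈ latticePoints n) :
    ∀ j, ∀ y ∈ nsmulSet j (K ∩ latticePoints n),
      y - (j : ℝ) • v ∈ nsmulSet j (((fun x => x - v) '' K) ∩ latticePoints n) := by
  intro j
  induction j with
  | zero => intro y hy; simp only [nsmulSet, Set.mem_singleton_iff] at hy ⊢; simp [hy]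
  | succ j ih =>
    intro y hy
    obtain ⟨a, ha, b, hb, rfl⟩ := hy
    have h1 : ((j:ℕ)+1:ℝ) • v = (j:ℝ) • v + v := by rw [add_smul, one_smul]
    have : (a + b) - (((j:ℕ)+1:ℝ)) • v = (a - v) + (b - (j:ℝ) • v) := by
      rw [h1]; abel
    rw [show (((j+1:ℕ)):ℝ) = ((j:ℕ):ℝ) + 1 by push_cast; ring, this]
    exact Set.add_mem_add ⟨⟨a, ha.1, rfl⟩, lattice_sub ha.2 hv⟩ (ih b hb)

/-- Let `K` be a projectively faithful lattice polytope in `ℝ^n`.  If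
`mK ∩ ℤ^n = m(K ∩ ℤ^n)` for all but finitely many positive integers `m`, then `K` is
locally solid: for every extreme point `v` of `K` the cone
`C_v = ⋃_{m ≥ 1} m((K - v) ∩ ℤ^n)` is unperforated. -/
theorem locallySolid_of_cofinitely_solid (n : ℕ) (K : Set (Fin n → ℝ))
    (hK : IsLatticePolytope K) (hpf : ProjectivelyFaithful K)
    (h : {m : ℕ | 0 < m ∧
      ((m : ℝ) • K) ∩ latticePoints n ≠ nsmulSet m (K ∩ latticePoints n)}.Finite) :
    LocallySolid K := by
  obtain ⟨S, hSfin, hSne, hSlat, hKS⟩ := hK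
  intro v hv x hx m hm hmx
  have hvK : v ∈ K := hv.1
  have hvlat : v ∈ latticePoints n := by
    apply hSlat
    rw [hKS] at hv
    exact extremePoints_convexHull_subset hv
  have hKconv : Convex ℝ K := hKS ▸ convex_convexHull ℝ S
  set B : Set (Fin n → ℝ) := (fun x => x - v) '' K with hBdef
  have hBconv : Convex ℝ B := by
    have : B = (fun x => -v + x) '' K := by
      simp only [hBdef, sub_eq_neg_add]
    rw [this]
    exact hKconv.translate (-v)
  have h0B : (0 : Fin n → ℝ) ∈ B := ⟨v, hvK, sub_self v⟩
  -- unpack the union membership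
  rw [latticeCone, Set.mem_iUnion₂] at hmx
  obtain ⟨k, hk1, hmk⟩ := hmx
  -- m • x ∈ k • B
  have hmxB : (m : ℝ) • x ∈ (k : ℝ) • B :=
    nsmulSet_subset_smul_s11 hBconv k hk1 (nsmulSet_mono Set.inter_subset_left k hmk)
  obtain ⟨y, hy, hky⟩ := hmxB
  -- choose a good j
  obtain ⟨N, hN⟩ := h.bddAbove
  set j : ℕ := max k (N + 1) with hjdef
  have hjk : k ≤ j := le_max_left _ _
  have hj1 : 1 ≤ j := le_trans hk1 hjk
  have hjgood : ((j : ℝ) • K) ∩ latticePoints n = nsmulSet j (K ∩ latticePoints n) := by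
    by_contra hne
    have : j ∈ {m : ℕ | 0 < m ∧
        ((m : ℝ) • K) ∩ latticePoints n ≠ nsmulSet m (K ∩ latticePoints n)} :=
      ⟨hj1, hne⟩
    have := hN this
    omega
  -- x ∈ j • B
  have hm0 : (m : ℝ) ≠ 0 := Nat.cast_ne_zero.mpr hm.ne'
  have hj0 : (0 : ℝ) < (j : ℝ) := by exact_mod_cast hj1
  have hky' : (k : ℝ) • y = (m : ℝ) • x := hky
  have hxy : x = ((k : ℝ) / (m : ℝ)) • y := by
    rw [div_eq_mul_inv, mul_comm, ← smul_smul, hky', smul_smul,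
      inv_mul_cancel₀ hm0, one_smul]
  have ht0 : (0 : ℝ) ≤ (k : ℝ) / ((m : ℝ) * j) := by positivity
  have ht1 : (k : ℝ) / ((m : ℝ) * j) ≤ 1 := by
    rw [div_le_one (by positivity)]
    calc (k : ℝ) ≤ (j : ℝ) := by exact_mod_cast hjk
      _ = 1 * j := (one_mul _).symm
      _ ≤ (m : ℝ) * j := by
        apply mul_le_mul_of_nonneg_right _ hj0.le
        exact_mod_cast hm
  have hwB : ((k : ℝ) / ((m : ℝ) * j)) • y ∈ B := by
    have := hBconv (a := (k : ℝ) / ((m : ℝ) * j)) (b := 1 - (k : ℝ) / ((m : ℝ) * j))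
      hy h0B ht0 (by linarith) (by ring)
    simpa using this
  have hxjB : x ∈ (j : ℝ) • B := by
    refine ⟨((k : ℝ) / ((m : ℝ) * j)) • y, hwB, ?_⟩
    show (j : ℝ) • ((k : ℝ) / ((m : ℝ) * j)) • y = x
    rw [smul_smul, hxy]
    congr 1
    field_simp
  -- hence x + j • v ∈ j • K
  obtain ⟨w, hwB', hwx⟩ := hxjB
  obtain ⟨c, hcK, hcw⟩ := hwB'
  have hxv : x + (j : ℝ) • v ∈ (j : ℝ) • K := by
    refine ⟨c, hcK, ?_⟩
    show (j : ℝ) • c = x + (j : ℝ) • v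
    have hwx' : (j : ℝ) • w = x := hwx
    have hcw' : c - v = w := hcw
    rw [← hwx', ← hcw', smul_sub]
    abel
  have hxvlat : x + (j : ℝ) • v ∈ latticePoints n := lattice_add_nsmul hx hvlat j
  have hxvmem : x + (j : ℝ) • v ∈ nsmulSet j (K ∩ latticePoints n) := by
    rw [← hjgood]; exact ⟨hxv, hxvlat⟩
  have := nsmulSet_translate hvlat j _ hxvmem
  rw [add_sub_cancel_right] at this
  rw [latticeCone, Set.mem_iUnion₂]
  exact ⟨j, hj1, this⟩
end
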